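/- arXiv:0707.1515 — 9 statements merged into one kernel-verified Lean document; each statement's English description precedes it below -/
import Mathlib

section
/- Let d ≥ 1, let l ≤ h be real numbers, let φ_0, φ_1, φ_2, … be real-valued functions on ℝ, and let H : ℕ → ℝ. Assume that for every degree k and every vector-valued univariate combination g(t) = Σ_{i=0}^{k} b_i φ_i(t) with b_i ∈ ℝ^d one has ‖b_i‖ ≤ H(k) · sup_{l ≤ t ≤ h} ‖g(t)‖ for every i = 0,…,k. Then for every bivariate combination f(u,v) = Σ_{i=0}^{m} Σ_{j=0}^{n} c_{ij} φ_i(u) φ_j(v) with c_{ij} ∈ ℝ^d, one has ‖c_{ij}‖ ≤ H(m) · H(n) · sup_{l ≤ u,v ≤ h} ‖f(u,v)‖ for every i = 0,…,m and j = 0,…,n. -/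
open Finset

/-- If for every degree `k` the coefficients of any univariate
combination `g(t) = ∑_{i=0}^k b i • φ i t` are bounded by `H k` times the sup of
`‖g‖` over `[l, h]`, then the coefficients of any bivariate combination
`f(u,v) = ∑_{i=0}^m ∑_{j=0}^n c i j • φ i u * φ j v` are bounded by
`H m * H n` times the sup of `‖f‖` over `[l, h]²`.  Norms are sup norms on `ℝ^d`. -/
theorem stmt_0 (d : ℕ) (hd : 1 ≤ d) (l h : ℝ) (hlh : l ≤ h)
    (φ : ℕ → ℝ → ℝ) (H : ℕ → ℝ)
    (hyp : ∀ (k : ℕ) (b : ℕ → Fin d → ℝ) (i : ℕ), i ≤ k →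
      ‖b i‖ ≤ H k * ⨆ t : Set.Icc l h,
        ‖∑ i' ∈ Finset.range (k + 1), φ i' (t : ℝ) • b i'‖) :
    ∀ (m n : ℕ) (c : ℕ → ℕ → Fin d → ℝ) (i j : ℕ), i ≤ m → j ≤ n →
      ‖c i j‖ ≤ H m * H n * ⨆ uv : Set.Icc l h × Set.Icc l h,
        ‖∑ i' ∈ Finset.range (m + 1), ∑ j' ∈ Finset.range (n + 1),
          (φ i' (uv.1 : ℝ) * φ j' (uv.2 : ℝ)) • c i' j'‖ := by
  have hne : Nonempty (Set.Icc l h) := (Set.nonempty_Icc.mpr hlh).to_subtype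
  have hdne : Nonempty (Fin d) := ⟨⟨0, hd⟩⟩
  -- Every univariate family is bounded above
  have hbdd : ∀ (k : ℕ) (b : ℕ → Fin d → ℝ),
      BddAbove (Set.range fun t : Set.Icc l h =>
        ‖∑ i' ∈ Finset.range (k + 1), φ i' (t : ℝ) • b i'‖) := by
    intro k b
    by_contra hB
    have h0 : (⨆ t : Set.Icc l h,
        ‖∑ i' ∈ Finset.range (k + 1), φ i' (t : ℝ) • b i'‖) = 0 :=
      Real.iSup_of_not_bddAbove hB
    have hz : ∀ i ∈ Finset.range (k + 1), b i = 0 := by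
      intro i hi
      have hle := hyp k b i (Nat.lt_succ_iff.mp (Finset.mem_range.mp hi))
      rw [h0, mul_zero] at hle
      exact norm_le_zero_iff.mp hle
    apply hB
    have heq : (fun t : Set.Icc l h =>
        ‖∑ i' ∈ Finset.range (k + 1), φ i' (t : ℝ) • b i'‖) = fun _ => 0 := by
      funext t
      rw [Finset.sum_congr rfl (fun i hi => by rw [hz i hi, smul_zero]),
        Finset.sum_const_zero, norm_zero]
    rw [heq, Set.range_const]
    exact bddAbove_singleton
  -- H is positive
  have hHpos : ∀ k, 0 < H k := by
    intro k
    by_contra hk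
    push_neg at hk
    have h1 := hyp k (fun _ => (fun _ => (1 : ℝ) : Fin d → ℝ)) 0 (Nat.zero_le k)
    have hn : ‖(fun _ => (1 : ℝ) : Fin d → ℝ)‖ = 1 := by
      simpa using pi_norm_const (ι := Fin d) (1:ℝ)
    have hS : 0 ≤ ⨆ t : Set.Icc l h,
        ‖∑ i' ∈ Finset.range (k + 1), φ i' (t : ℝ) • (fun _ => (1 : ℝ) : Fin d → ℝ)‖ :=
      Real.iSup_nonneg fun _ => norm_nonneg _
    rw [hn] at h1
    nlinarith [h1, hS, hk]
  -- each φ i is bounded on [l,h]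
  have hφ : ∀ i : ℕ, ∃ C : ℝ, ∀ t : Set.Icc l h, |φ i (t : ℝ)| ≤ C := by
    intro i
    obtain ⟨C, hC⟩ := hbdd i
      (fun i' => if i' = i then (fun _ => (1 : ℝ) : Fin d → ℝ) else 0)
    refine ⟨C, fun t => ?_⟩
    have hmem := hC (Set.mem_range_self t)
    have hsum : ∑ i' ∈ Finset.range (i + 1),
        φ i' (t : ℝ) • (if i' = i then (fun _ => (1 : ℝ) : Fin d → ℝ) else 0)
        = φ i (t : ℝ) • (fun _ => (1 : ℝ) : Fin d → ℝ) := by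
      rw [Finset.sum_eq_single i]
      · simp
      · intro b _ hb; simp [hb]
      · intro hni; exact absurd (Finset.self_mem_range_succ i) hni
    rw [hsum] at hmem
    have hn : ‖(fun _ => (1 : ℝ) : Fin d → ℝ)‖ = 1 := by
      simpa using pi_norm_const (ι := Fin d) (1:ℝ)
    rwa [norm_smul, hn, mul_one, Real.norm_eq_abs] at hmem
  intro m n c i j him hjn
  -- rewrite f as an iterated combination
  have hf : ∀ u v : Set.Icc l h,
      ∑ i' ∈ Finset.range (m + 1), ∑ j' ∈ Finset.range (n + 1),
        (φ i' (u : ℝ) * φ j' (v : ℝ)) • c i' j'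
      = ∑ i' ∈ Finset.range (m + 1), φ i' (u : ℝ) •
          ∑ j' ∈ Finset.range (n + 1), φ j' (v : ℝ) • c i' j' := by
    intro u v
    refine Finset.sum_congr rfl fun i' _ => ?_
    rw [Finset.smul_sum]
    exact Finset.sum_congr rfl fun j' _ => by rw [smul_smul]
  -- the bivariate family is bounded above
  have hFbdd : BddAbove (Set.range fun uv : Set.Icc l h × Set.Icc l h =>
      ‖∑ i' ∈ Finset.range (m + 1), ∑ j' ∈ Finset.range (n + 1),
        (φ i' (uv.1 : ℝ) * φ j' (uv.2 : ℝ)) • c i' j'‖) := by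
    choose C hC using hφ
    have hK : ∀ i' : ℕ, ∃ K : ℝ, ∀ v : Set.Icc l h,
        ‖∑ j' ∈ Finset.range (n + 1), φ j' (v : ℝ) • c i' j'‖ ≤ K := by
      intro i'
      obtain ⟨K, hK⟩ := hbdd n (fun j' => c i' j')
      exact ⟨K, fun v => hK (Set.mem_range_self v)⟩
    choose K hKv using hK
    refine ⟨∑ i' ∈ Finset.range (m + 1), C i' * K i', ?_⟩
    rintro x ⟨uv, rfl⟩
    simp only []
    rw [hf uv.1 uv.2]
    refine (norm_sum_le _ _).trans (Finset.sum_le_sum fun i' _ => ?_)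
    rw [norm_smul, Real.norm_eq_abs]
    have hC0 : 0 ≤ C i' := le_trans (abs_nonneg _) (hC i' uv.1)
    exact mul_le_mul (hC i' uv.1) (hKv i' uv.2) (norm_nonneg _) hC0
  set S := ⨆ uv : Set.Icc l h × Set.Icc l h,
      ‖∑ i' ∈ Finset.range (m + 1), ∑ j' ∈ Finset.range (n + 1),
        (φ i' (uv.1 : ℝ) * φ j' (uv.2 : ℝ)) • c i' j'‖ with hSdef
  have hle : ∀ uv : Set.Icc l h × Set.Icc l h,
      ‖∑ i' ∈ Finset.range (m + 1), ∑ j' ∈ Finset.range (n + 1),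
        (φ i' (uv.1 : ℝ) * φ j' (uv.2 : ℝ)) • c i' j'‖ ≤ S :=
    fun uv => le_ciSup hFbdd uv
  -- Step 1: for each u and j' ≤ n, the inner coefficient is bounded
  have step1 : ∀ (u : Set.Icc l h) (j' : ℕ), j' ≤ n →
      ‖∑ i' ∈ Finset.range (m + 1), φ i' (u : ℝ) • c i' j'‖ ≤ H n * S := by
    intro u j' hj'
    have h1 := hyp n (fun j'' => ∑ i' ∈ Finset.range (m + 1),
      φ i' (u : ℝ) • c i' j'') j' hj'
    refine h1.trans (mul_le_mul_of_nonneg_left (ciSup_le fun v => ?_) (hHpos n).le)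
    have heq : ∑ j'' ∈ Finset.range (n + 1), φ j'' (v : ℝ) •
        ∑ i' ∈ Finset.range (m + 1), φ i' (u : ℝ) • c i' j''
        = ∑ i' ∈ Finset.range (m + 1), ∑ j'' ∈ Finset.range (n + 1),
          (φ i' (u : ℝ) * φ j'' (v : ℝ)) • c i' j'' := by
      rw [Finset.sum_comm]
      refine Finset.sum_congr rfl fun i' _ => ?_
      rw [Finset.smul_sum]
      refine Finset.sum_congr rfl fun j'' _ => ?_
      rw [smul_smul, mul_comm]
    rw [heq]
    exact hle (u, v)
  -- Step 2
  have h2 := hyp m (fun i' => c i' j) i him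
  refine h2.trans ?_
  rw [mul_assoc]
  exact mul_le_mul_of_nonneg_left (ciSup_le fun u => step1 u j hjn) (hHpos m).le
end

section
/- Let d ≥ 1 and let f(t) = Σ_{i=0}^{n} c_i Z_{i,n}(t) with coefficients c_i ∈ ℝ^d. Then for every i = 0,…,n, ‖c_i‖ ≤ ξ_B(n) · max_{0 ≤ t ≤ 1} ‖f(t)‖. -/
open Finset

/-- The Bernstein basis polynomial `Z_{k,n}(t) = C(n,k) (1-t)^{n-k} t^k` as a real function. -/
noncomputable def Z (n k : ℕ) (t : ℝ) : ℝ := (n.choose k : ℝ) * (1 - t) ^ (n - k) * t ^ k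

/-- `ξ_B(n) = ∑_{i=0}^n ∏_{j=0,…,n; j ≠ i} max(|n-j|,|j|)/|i-j|`. -/
noncomputable def xiB (n : ℕ) : ℝ :=
  ∑ i ∈ Finset.range (n + 1), ∏ j ∈ (Finset.range (n + 1)).erase i,
    max |(n : ℝ) - (j : ℝ)| |(j : ℝ)| / |(i : ℝ) - (j : ℝ)|

namespace XiAux

open Polynomial

noncomputable def w (n j : ℕ) (T : Finset ℕ) : ℝ :=
  (∏ m ∈ T, ((((j : ℝ)) / n - (m : ℝ) / n)⁻¹ * (1 - (m : ℝ) / n))) *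
    ∏ m ∈ ((Finset.range (n + 1)).erase j) \ T,
      ((((j : ℝ)) / n - (m : ℝ) / n)⁻¹ * (-((m : ℝ) / n)))

noncomputable def β (n i j : ℕ) : ℝ :=
  (n.choose i : ℝ)⁻¹ * ∑ T ∈ Finset.powersetCard i ((Finset.range (n + 1)).erase j), w n j T

lemma basisDivisor_eq (x y : ℝ) :
    Lagrange.basisDivisor x y
      = C ((x - y)⁻¹ * (1 - y)) * X + C ((x - y)⁻¹ * (-y)) * (1 - X) := by
  unfold Lagrange.basisDivisor
  simp only [map_mul, map_sub, map_neg, map_one]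
  ring

lemma basis_expand (n j : ℕ) (hj : j ∈ Finset.range (n + 1)) :
    Lagrange.basis (Finset.range (n + 1)) (fun m : ℕ => (m : ℝ) / n) j
      = ∑ i ∈ Finset.range (n + 1), C (β n i j) * bernsteinPolynomial ℝ n i := by
  have hcardE : ((Finset.range (n + 1)).erase j).card = n := by
    rw [Finset.card_erase_of_mem hj, Finset.card_range]
    omega
  rw [Lagrange.basis]
  calc
    (∏ m ∈ (Finset.range (n + 1)).erase j,
        Lagrange.basisDivisor ((j : ℝ) / n) ((m : ℝ) / n))
        = ∏ m ∈ (Finset.range (n + 1)).erase j,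
            (C (((j : ℝ) / n - (m : ℝ) / n)⁻¹ * (1 - (m : ℝ) / n)) * X
              + C (((j : ℝ) / n - (m : ℝ) / n)⁻¹ * (-((m : ℝ) / n))) * (1 - X)) := by
          exact Finset.prod_congr rfl fun m _ => basisDivisor_eq _ _
    _ = ∑ T ∈ ((Finset.range (n + 1)).erase j).powerset,
          C (w n j T) * (X ^ T.card * (1 - X) ^ (n - T.card)) := by
          rw [Finset.prod_add]
          refine Finset.sum_congr rfl fun T hT => ?_
          rw [Finset.mem_powerset] at hT
          rw [Finset.prod_mul_distrib, Finset.prod_mul_distrib, w]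
          have h1 : ∏ _m ∈ T, (X : ℝ[X]) = X ^ T.card := Finset.prod_const _
          have h2 : ∏ _m ∈ ((Finset.range (n + 1)).erase j) \ T, (1 - X : ℝ[X])
              = (1 - X) ^ (n - T.card) := by
            rw [Finset.prod_const, Finset.card_sdiff_of_subset hT, hcardE]
          rw [h1, h2, ← map_prod, ← map_prod, map_mul]
          ring
    _ = ∑ i ∈ Finset.range (n + 1), ∑ T ∈ Finset.powersetCard i ((Finset.range (n + 1)).erase j),
          C (w n j T) * (X ^ T.card * (1 - X) ^ (n - T.card)) := by
          rw [Finset.sum_powerset, hcardE]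
    _ = ∑ i ∈ Finset.range (n + 1), C (β n i j) * bernsteinPolynomial ℝ n i := by
          refine Finset.sum_congr rfl fun i hi => ?_
          have hin : i ≤ n := Nat.lt_succ_iff.mp (Finset.mem_range.mp hi)
          have hch : (n.choose i : ℝ) ≠ 0 := by
            exact_mod_cast (Nat.choose_pos hin).ne'
          have h3 : ∀ T ∈ Finset.powersetCard i ((Finset.range (n + 1)).erase j),
              C (w n j T) * (X ^ T.card * (1 - X) ^ (n - T.card))
                = C (w n j T) * (X ^ i * (1 - X) ^ (n - i)) := by
            intro T hT
            rw [(Finset.mem_powersetCard.mp hT).2]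
          rw [Finset.sum_congr rfl h3, ← Finset.sum_mul, ← map_sum]
          rw [bernsteinPolynomial, β, map_mul, ← Polynomial.C_eq_natCast]
          have h1 : C ((n.choose i : ℝ))⁻¹ * C ((n.choose i : ℝ)) = 1 := by
            rw [← map_mul, inv_mul_cancel₀ hch, map_one]
          have : C ((n.choose i : ℝ))⁻¹ *
              C (∑ T ∈ Finset.powersetCard i ((Finset.range (n + 1)).erase j), w n j T) *
              (C ((n.choose i : ℝ)) * X ^ i * (1 - X) ^ (n - i))
              = (C ((n.choose i : ℝ))⁻¹ * C ((n.choose i : ℝ))) *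
                (C (∑ T ∈ Finset.powersetCard i ((Finset.range (n + 1)).erase j), w n j T) *
                  (X ^ i * (1 - X) ^ (n - i))) := by ring
          rw [this, h1, one_mul]

lemma β_bound (n i j : ℕ) (hn : n ≠ 0) (hj : j ∈ Finset.range (n + 1))
    (hi : i ∈ Finset.range (n + 1)) :
    |β n i j| ≤ ∏ m ∈ (Finset.range (n + 1)).erase j,
      max |(n : ℝ) - (m : ℝ)| |(m : ℝ)| / |(j : ℝ) - (m : ℝ)| := by
  have hin : i ≤ n := Nat.lt_succ_iff.mp (Finset.mem_range.mp hi)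
  have hcardE : ((Finset.range (n + 1)).erase j).card = n := by
    rw [Finset.card_erase_of_mem hj, Finset.card_range]; omega
  have hch : (0 : ℝ) < (n.choose i : ℝ) := by exact_mod_cast Nat.choose_pos hin
  set E := (Finset.range (n + 1)).erase j with hE
  set cm : ℕ → ℝ := fun m => max |(n : ℝ) - (m : ℝ)| |(m : ℝ)| / |(j : ℝ) - (m : ℝ)| with hcm
  have hcm0 : ∀ m, 0 ≤ cm m := fun m => div_nonneg (le_max_of_le_left (abs_nonneg _)) (abs_nonneg _)
  have hnR : (n : ℝ) ≠ 0 := Nat.cast_ne_zero.mpr hn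
  have key : ∀ m ∈ E, |(((j : ℝ)) / n - (m : ℝ) / n)⁻¹ * (1 - (m : ℝ) / n)| ≤ cm m ∧
      |(((j : ℝ)) / n - (m : ℝ) / n)⁻¹ * (-((m : ℝ) / n))| ≤ cm m := by
    intro m hm
    have hmj : m ≠ j := Finset.ne_of_mem_erase hm
    have hjm : ((j : ℝ)) - (m : ℝ) ≠ 0 :=
      sub_ne_zero.mpr (Nat.cast_injective.ne (Ne.symm hmj))
    have hjmpos : 0 < |(j : ℝ) - (m : ℝ)| := abs_pos.mpr hjm
    constructor
    · have e1 : (((j : ℝ)) / n - (m : ℝ) / n)⁻¹ * (1 - (m : ℝ) / n)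
          = ((n : ℝ) - m) / ((j : ℝ) - m) := by
        rw [div_sub_div_same, inv_div]
        field_simp
      rw [e1, abs_div]
      simp only [hcm]
      gcongr
      exact le_max_left _ _
    · have e2 : (((j : ℝ)) / n - (m : ℝ) / n)⁻¹ * (-((m : ℝ) / n))
          = -((m : ℝ) / ((j : ℝ) - m)) := by
        rw [div_sub_div_same, inv_div]
        field_simp
      rw [e2, abs_neg, abs_div]
      simp only [hcm]
      gcongr
      exact le_max_right _ _
  have hwb : ∀ T ∈ Finset.powersetCard i E, |w n j T| ≤ ∏ m ∈ E, cm m := by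
    intro T hT
    have hTE : T ⊆ E := (Finset.mem_powersetCard.mp hT).1
    rw [w, abs_mul, abs_prod, abs_prod, ← Finset.prod_sdiff hTE, mul_comm]
    refine mul_le_mul ?_ ?_ ?_ ?_
    · exact Finset.prod_le_prod (fun m _ => abs_nonneg _)
        (fun m hm => (key m (Finset.mem_sdiff.mp hm).1).2)
    · exact Finset.prod_le_prod (fun m _ => abs_nonneg _)
        (fun m hm => (key m (hTE hm)).1)
    · exact Finset.prod_nonneg fun m _ => abs_nonneg _
    · exact Finset.prod_nonneg fun m _ => hcm0 m
  calc |β n i j| ≤ (n.choose i : ℝ)⁻¹ *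
        ∑ T ∈ Finset.powersetCard i E, |w n j T| := by
        rw [β, abs_mul, abs_inv, abs_of_pos hch]
        exact mul_le_mul_of_nonneg_left (Finset.abs_sum_le_sum_abs _ _)
          (inv_nonneg.mpr hch.le)
    _ ≤ (n.choose i : ℝ)⁻¹ * ∑ T ∈ Finset.powersetCard i E, ∏ m ∈ E, cm m :=
        mul_le_mul_of_nonneg_left (Finset.sum_le_sum hwb) (inv_nonneg.mpr hch.le)
    _ = ∏ m ∈ E, cm m := by
        rw [Finset.sum_const, Finset.card_powersetCard, hcardE, nsmul_eq_mul]
        rw [← mul_assoc, inv_mul_cancel₀ hch.ne', one_mul]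

lemma bern_coeff_lt (n i k : ℕ) (h : k < i) : (bernsteinPolynomial ℝ n i).coeff k = 0 := by
  rw [bernsteinPolynomial, mul_right_comm, Polynomial.coeff_mul_X_pow']
  simp [Nat.not_le.mpr h]

lemma bern_coeff_self (n i : ℕ) : (bernsteinPolynomial ℝ n i).coeff i = (n.choose i : ℝ) := by
  rw [bernsteinPolynomial, mul_right_comm, Polynomial.coeff_mul_X_pow']
  simp only [le_refl, if_true, Nat.sub_self]
  rw [Polynomial.coeff_zero_eq_eval_zero]
  simp

lemma extraction (n : ℕ) (x : ℕ → ℝ)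
    (h : ∑ i ∈ Finset.range (n + 1), C (x i) * bernsteinPolynomial ℝ n i = 0) :
    ∀ k, k ≤ n → x k = 0 := by
  intro k
  induction k using Nat.strong_induction_on with
  | _ k IH =>
    intro hk
    have hc : (∑ i ∈ Finset.range (n + 1), C (x i) * bernsteinPolynomial ℝ n i).coeff k = 0 := by
      rw [h]; simp
    rw [Polynomial.finset_sum_coeff] at hc
    have hsingle : ∀ i ∈ Finset.range (n + 1), i ≠ k →
        (C (x i) * bernsteinPolynomial ℝ n i).coeff k = 0 := by
      intro i _ hik
      rw [Polynomial.coeff_C_mul]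
      rcases Nat.lt_or_ge k i with hlt | hge
      · rw [bern_coeff_lt n i k hlt, mul_zero]
      · have : i < k := lt_of_le_of_ne hge (Ne.symm (by omega))
        rw [IH i this (by omega), zero_mul]
    rw [Finset.sum_eq_single k hsingle (fun hnk => absurd (Finset.mem_range.mpr (by omega)) hnk)]
      at hc
    rw [Polynomial.coeff_C_mul, bern_coeff_self] at hc
    have hch : (n.choose k : ℝ) ≠ 0 := by
      exact_mod_cast (Nat.choose_pos hk).ne'
    exact (mul_eq_zero.mp hc).resolve_right hch

lemma bern_degree_le (n k : ℕ) (hk : k ≤ n) : (bernsteinPolynomial ℝ n k).degree ≤ (n : WithBot ℕ) := by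
  rw [bernsteinPolynomial]
  refine le_trans (Polynomial.degree_mul_le _ _) ?_
  have h1 : ((n.choose k : ℝ[X]) * X ^ k).degree ≤ (k : WithBot ℕ) := by
    refine le_trans (Polynomial.degree_mul_le _ _) ?_
    rw [← Polynomial.C_eq_natCast]
    calc (C ((n.choose k : ℕ) : ℝ)).degree + (X ^ k : ℝ[X]).degree
        ≤ 0 + (k : WithBot ℕ) := add_le_add Polynomial.degree_C_le (Polynomial.degree_X_pow_le k)
      _ = (k : WithBot ℕ) := zero_add _
  have h2 : ((1 - X : ℝ[X]) ^ (n - k)).degree ≤ ((n - k : ℕ) : WithBot ℕ) := by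
    refine le_trans (Polynomial.degree_pow_le _ _) ?_
    have : (1 - X : ℝ[X]).degree ≤ 1 := by
      refine le_trans (Polynomial.degree_sub_le _ _) ?_
      simp [Polynomial.degree_one, Polynomial.degree_X]
    calc ((n - k) : ℕ) • (1 - X : ℝ[X]).degree ≤ ((n-k) : ℕ) • (1 : WithBot ℕ) := by
          exact nsmul_le_nsmul_right this _
      _ = ((n - k : ℕ) : WithBot ℕ) := by
          simp [nsmul_eq_mul, mul_one]
  calc ((n.choose k : ℝ[X]) * X ^ k).degree + ((1 - X : ℝ[X]) ^ (n - k)).degree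
      ≤ (k : WithBot ℕ) + ((n - k : ℕ) : WithBot ℕ) := add_le_add h1 h2
    _ ≤ (n : WithBot ℕ) := by
      rw [← Nat.cast_add]
      exact_mod_cast Nat.cast_le.mpr (by omega : k + (n - k) ≤ n)

lemma scalar_bound (n : ℕ) (hn : n ≠ 0) (a : ℕ → ℝ) (M : ℝ)
    (hM : ∀ t : ℝ, t ∈ Set.Icc (0 : ℝ) 1 → |∑ k ∈ Finset.range (n + 1), a k * Z n k t| ≤ M) :
    ∀ i, i ≤ n → |a i| ≤ xiB n * M := by
  have hnR : (n : ℝ) ≠ 0 := Nat.cast_ne_zero.mpr hn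
  have hnpos : (0 : ℝ) < n := by positivity
  set v : ℕ → ℝ := fun m => (m : ℝ) / n with hv
  set P : ℝ[X] := ∑ k ∈ Finset.range (n + 1), C (a k) * bernsteinPolynomial ℝ n k with hP
  have hPeval : ∀ t : ℝ, P.eval t = ∑ k ∈ Finset.range (n + 1), a k * Z n k t := by
    intro t
    rw [hP, Polynomial.eval_finset_sum]
    refine Finset.sum_congr rfl fun k _ => ?_
    rw [bernsteinPolynomial, Z]
    simp only [Polynomial.eval_mul, Polynomial.eval_C, Polynomial.eval_pow,
      Polynomial.eval_natCast, Polynomial.eval_sub, Polynomial.eval_one, Polynomial.eval_X]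
    ring
  have hdeg : P.degree < ((Finset.range (n + 1)).card : ℕ) := by
    rw [Finset.card_range]
    refine lt_of_le_of_lt (Polynomial.degree_sum_le _ _) ?_
    rw [Finset.sup_lt_iff (by exact_mod_cast WithBot.bot_lt_coe (n+1))]
    intro k hkmem
    have hk : k ≤ n := Nat.lt_succ_iff.mp (Finset.mem_range.mp hkmem)
    refine lt_of_le_of_lt (Polynomial.degree_mul_le _ _) ?_
    calc (C (a k)).degree + (bernsteinPolynomial ℝ n k).degree
        ≤ 0 + (n : WithBot ℕ) := add_le_add Polynomial.degree_C_le (bern_degree_le n k hk)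
      _ = (n : WithBot ℕ) := zero_add _
      _ < ((n + 1 : ℕ) : WithBot ℕ) := by exact_mod_cast Nat.lt_succ_self n
  have hinj : Set.InjOn v (Finset.range (n + 1)) := by
    intro p _ q _ hpq
    simp only [hv, div_left_inj' hnR] at hpq
    exact_mod_cast hpq
  have hint := Lagrange.eq_interpolate hinj hdeg
  rw [Lagrange.interpolate_apply] at hint
  have hint2 : P = ∑ i ∈ Finset.range (n + 1),
      C (∑ j ∈ Finset.range (n + 1), P.eval (v j) * β n i j) * bernsteinPolynomial ℝ n i := by
    calc P = ∑ j ∈ Finset.range (n + 1), C (P.eval (v j)) *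
            Lagrange.basis (Finset.range (n + 1)) v j := hint
      _ = ∑ j ∈ Finset.range (n + 1), ∑ i ∈ Finset.range (n + 1),
            C (P.eval (v j) * β n i j) * bernsteinPolynomial ℝ n i := by
          refine Finset.sum_congr rfl fun j hj => ?_
          rw [hv, basis_expand n j hj, Finset.mul_sum]
          refine Finset.sum_congr rfl fun i _ => ?_
          rw [map_mul, mul_assoc]
      _ = ∑ i ∈ Finset.range (n + 1),
            C (∑ j ∈ Finset.range (n + 1), P.eval (v j) * β n i j) * bernsteinPolynomial ℝ n i := by
          rw [Finset.sum_comm]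
          refine Finset.sum_congr rfl fun i _ => ?_
          rw [map_sum, Finset.sum_mul]
  have hzero : ∑ i ∈ Finset.range (n + 1),
      C (a i - ∑ j ∈ Finset.range (n + 1), P.eval (v j) * β n i j) *
        bernsteinPolynomial ℝ n i = 0 := by
    have : ∀ i ∈ Finset.range (n + 1),
        C (a i - ∑ j ∈ Finset.range (n + 1), P.eval (v j) * β n i j) *
          bernsteinPolynomial ℝ n i
        = C (a i) * bernsteinPolynomial ℝ n i
          - C (∑ j ∈ Finset.range (n + 1), P.eval (v j) * β n i j) *
              bernsteinPolynomial ℝ n i := by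
      intro i _
      rw [map_sub, sub_mul]
    rw [Finset.sum_congr rfl this, Finset.sum_sub_distrib, ← hP, ← hint2, sub_self]
  have hrepr : ∀ i, i ≤ n → a i = ∑ j ∈ Finset.range (n + 1), P.eval (v j) * β n i j := by
    intro i hi
    have := extraction n _ hzero i hi
    linarith [this]
  -- now the bound
  intro i hi
  have hM0 : 0 ≤ M := le_trans (abs_nonneg _) (hM 0 ⟨le_refl _, zero_le_one⟩)
  rw [hrepr i hi]
  calc |∑ j ∈ Finset.range (n + 1), P.eval (v j) * β n i j|
      ≤ ∑ j ∈ Finset.range (n + 1), |P.eval (v j) * β n i j| :=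
        Finset.abs_sum_le_sum_abs _ _
    _ ≤ ∑ j ∈ Finset.range (n + 1), M * ∏ m ∈ (Finset.range (n + 1)).erase j,
          max |(n : ℝ) - (m : ℝ)| |(m : ℝ)| / |(j : ℝ) - (m : ℝ)| := by
        refine Finset.sum_le_sum fun j hj => ?_
        rw [abs_mul]
        have hj' : j ≤ n := Nat.lt_succ_iff.mp (Finset.mem_range.mp hj)
        have hv1 : v j ∈ Set.Icc (0 : ℝ) 1 := by
          constructor
          · positivity
          · rw [hv]
            rw [div_le_one hnpos]
            exact_mod_cast hj'
        have h1 : |P.eval (v j)| ≤ M := by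
          rw [hPeval]
          exact hM (v j) hv1
        have h2 := β_bound n i j hn hj (Finset.mem_range.mpr (by omega))
        exact mul_le_mul h1 h2 (abs_nonneg _) hM0
    _ = xiB n * M := by
        rw [← Finset.mul_sum, xiB, mul_comm]

end XiAux

/-- for `f(t) = ∑_{i=0}^n c i • Z_{i,n}(t)` with `c i ∈ ℝ^d` (sup norm),
every coefficient satisfies `‖c i‖ ≤ ξ_B(n) * max_{0 ≤ t ≤ 1} ‖f(t)‖`. -/
theorem stmt_2 (d : ℕ) (hd : 1 ≤ d) (n : ℕ) (c : ℕ → Fin d → ℝ) :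
    ∀ i ≤ n, ‖c i‖ ≤ xiB n *
      ⨆ t : Set.Icc (0 : ℝ) 1, ‖∑ i' ∈ Finset.range (n + 1), Z n i' (t : ℝ) • c i'‖ := by
  haveI : Nonempty (Set.Icc (0 : ℝ) 1) := ⟨⟨0, by norm_num⟩⟩
  set f : Set.Icc (0 : ℝ) 1 → ℝ :=
    fun t => ‖∑ i' ∈ Finset.range (n + 1), Z n i' (t : ℝ) • c i'‖ with hf
  have hcont : Continuous f := by
    apply Continuous.norm
    apply continuous_finset_sum
    intro i' _
    refine Continuous.smul (f := fun t : Set.Icc (0 : ℝ) 1 => Z n i' (t : ℝ)) ?_ continuous_const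
    have hZ : Continuous fun t : ℝ => Z n i' t := by
      unfold Z; fun_prop
    exact hZ.comp continuous_subtype_val
  have hbdd : BddAbove (Set.range f) := (isCompact_range hcont).bddAbove
  set M := ⨆ t : Set.Icc (0 : ℝ) 1, f t with hM
  have hle : ∀ t, f t ≤ M := fun t => le_ciSup hbdd t
  have hM0 : 0 ≤ M := le_trans (norm_nonneg _) (hle ⟨0, by norm_num⟩)
  intro i hi
  have hxiB0 : 0 ≤ xiB n := by
    apply Finset.sum_nonneg
    intro k _
    apply Finset.prod_nonneg
    intro m _
    positivity
  show ‖c i‖ ≤ xiB n * M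
  rcases Nat.eq_zero_or_pos n with hn0 | hnpos
  · subst hn0
    have hi0 : i = 0 := Nat.le_zero.mp hi
    subst hi0
    have hxiB : xiB 0 = 1 := by
      rw [xiB]
      simp
    have hfc : ∀ t : Set.Icc (0 : ℝ) 1, f t = ‖c 0‖ := by
      intro t
      rw [hf]
      simp [Z]
    have : ‖c 0‖ ≤ M := by
      rw [← hfc ⟨0, by norm_num⟩]
      exact hle _
    rw [hxiB, one_mul]
    exact this
  · rw [pi_norm_le_iff_of_nonneg (by positivity)]
    intro x
    have key := XiAux.scalar_bound n (by omega) (fun k => c k x) M ?_ i hi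
    · simpa [Real.norm_eq_abs] using key
    · intro t ht
      have heq : (∑ k ∈ Finset.range (n + 1), c k x * Z n k t)
          = (∑ i' ∈ Finset.range (n + 1), Z n i' t • c i') x := by
        rw [Finset.sum_apply]
        refine Finset.sum_congr rfl fun k _ => ?_
        rw [Pi.smul_apply, smul_eq_mul, mul_comm]
      rw [heq]
      calc |(∑ i' ∈ Finset.range (n + 1), Z n i' t • c i') x|
          ≤ ‖∑ i' ∈ Finset.range (n + 1), Z n i' t • c i'‖ := by
            rw [← Real.norm_eq_abs]
            exact norm_le_pi_norm _ x
        _ = f ⟨t, ht⟩ := rfl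
        _ ≤ M := hle _
end

section
/- Let d ≥ 1 and let f(t) = Σ_{i=0}^{n} c_i T_i(t) with coefficients c_i ∈ ℝ^d, where T_i is the i-th Chebyshev polynomial of the first kind. Then for every i = 0,…,n, ‖c_i‖ ≤ √2 · max_{−1 ≤ t ≤ 1} ‖f(t)‖. -/
open Finset Polynomial

private lemma int_cos_int (m : ℤ) :
    ∫ θ in (0:ℝ)..Real.pi, Real.cos (m * θ) = if m = 0 then Real.pi else 0 := by
  rcases eq_or_ne m 0 with h | h
  · simp [h]
  · rw [if_neg h]
    have hm : ((m : ℝ)) ≠ 0 := by exact_mod_cast h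
    have := intervalIntegral.integral_comp_mul_left (a := (0:ℝ)) (b := Real.pi)
      (f := Real.cos) (c := (m:ℝ)) hm
    rw [this]
    simp [Real.sin_int_mul_pi]

private lemma cos_cont (m : ℝ) : Continuous fun θ : ℝ => Real.cos (m * θ) :=
  Real.continuous_cos.comp (continuous_const.mul continuous_id)

private lemma cos_orth (i i' : ℕ) :
    ∫ θ in (0:ℝ)..Real.pi, Real.cos (i * θ) * Real.cos (i' * θ)
      = if i = i' then (if i = 0 then Real.pi else Real.pi / 2) else 0 := by
  have key : ∀ θ : ℝ, Real.cos (i * θ) * Real.cos (i' * θ)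
      = (Real.cos ((((i:ℤ) + i' : ℤ) : ℝ) * θ) + Real.cos ((((i:ℤ) - i' : ℤ) : ℝ) * θ)) / 2 := by
    intro θ
    have h1 : ((((i:ℤ) + i' : ℤ) : ℝ) * θ) = (i:ℝ) * θ + (i':ℝ) * θ := by push_cast; ring
    have h2 : ((((i:ℤ) - i' : ℤ) : ℝ) * θ) = (i:ℝ) * θ - (i':ℝ) * θ := by push_cast; ring
    rw [h1, h2, Real.cos_add, Real.cos_sub]; ring
  simp_rw [key]
  rw [intervalIntegral.integral_div]
  rw [intervalIntegral.integral_add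
    ((cos_cont _).intervalIntegrable _ _) ((cos_cont _).intervalIntegrable _ _),
    int_cos_int, int_cos_int]
  rcases eq_or_ne i i' with h | h
  · subst h
    rcases eq_or_ne i 0 with h0 | h0
    · subst h0; norm_num
    · have : (i:ℤ) + i ≠ 0 := by positivity
      simp [this, h0]
  · rw [if_neg h]
    have h2 : (i:ℤ) - i' ≠ 0 := by
      intro hc; exact h (by exact_mod_cast sub_eq_zero.mp hc)
    rcases eq_or_ne ((i:ℤ) + i') 0 with h1 | h1
    · have hi0 : i = 0 := by omega
      have hi'0 : i' = 0 := by omega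
      exact absurd (hi0.trans hi'0.symm) h
    · simp [h1, h2]

/-- for `f(t) = ∑_{i=0}^n c i • T_i(t)` with `c i ∈ ℝ^d` (sup norm),
where `T_i` is the `i`-th Chebyshev polynomial of the first kind, every
coefficient satisfies `‖c i‖ ≤ √2 * max_{-1 ≤ t ≤ 1} ‖f(t)‖`. -/
theorem stmt_3 (d : ℕ) (hd : 1 ≤ d) (n : ℕ) (c : ℕ → Fin d → ℝ) :
    ∀ i ≤ n, ‖c i‖ ≤ Real.sqrt 2 *
      ⨆ t : Set.Icc (-1 : ℝ) 1,
        ‖∑ i' ∈ Finset.range (n + 1), ((Polynomial.Chebyshev.T ℝ i').eval (t : ℝ)) • c i'‖ := by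
  intro i hi
  set g : ℝ → (Fin d → ℝ) :=
    fun t => ∑ i' ∈ Finset.range (n + 1), ((Polynomial.Chebyshev.T ℝ i').eval t) • c i' with hg
  set M : ℝ := ⨆ t : Set.Icc (-1 : ℝ) 1, ‖g (t : ℝ)‖ with hMdef
  have hcontg : Continuous g := by
    apply continuous_finset_sum
    intro i' _
    exact ((Polynomial.Chebyshev.T ℝ i').continuous).smul continuous_const
  have hcont : Continuous fun t : Set.Icc (-1:ℝ) 1 => ‖g (t : ℝ)‖ :=
    (hcontg.comp continuous_subtype_val).norm
  haveI : Nonempty (Set.Icc (-1:ℝ) 1) := ⟨⟨0, by norm_num⟩⟩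
  have hbdd : BddAbove (Set.range fun t : Set.Icc (-1:ℝ) 1 => ‖g (t : ℝ)‖) := by
    have := isCompact_univ.bddAbove_image hcont.continuousOn
    rwa [Set.image_univ] at this
  have hM : ∀ θ : ℝ, ‖g (Real.cos θ)‖ ≤ M := by
    intro θ
    exact le_ciSup hbdd ⟨Real.cos θ, Real.neg_one_le_cos θ, Real.cos_le_one θ⟩
  have hM0 : 0 ≤ M := le_trans (norm_nonneg _) (hM 0)
  have sqrt2_pos : (0:ℝ) < Real.sqrt 2 := Real.sqrt_pos.mpr (by norm_num)
  have sqrt2_sq : Real.sqrt 2 ^ 2 = 2 := Real.sq_sqrt (by norm_num)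
  -- coordinatewise bound
  rw [pi_norm_le_iff_of_nonneg (by positivity)]
  intro j
  rw [Real.norm_eq_abs]
  -- scalar function
  set s : ℝ → ℝ := fun θ => ∑ i' ∈ Finset.range (n + 1), c i' j * Real.cos (i' * θ) with hs
  have hs_eq : ∀ θ : ℝ, s θ = g (Real.cos θ) j := by
    intro θ
    simp only [hs, hg, Finset.sum_apply, Pi.smul_apply, smul_eq_mul,
      Polynomial.Chebyshev.T_real_cos]
    push_cast
    exact Finset.sum_congr rfl fun k _ => mul_comm _ _
  have hconts : Continuous s :=
    continuous_finset_sum _ fun i' _ => continuous_const.mul (cos_cont _)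
  have hsle : ∀ θ : ℝ, |s θ| ≤ M := by
    intro θ
    rw [hs_eq θ]
    calc |g (Real.cos θ) j| = ‖g (Real.cos θ) j‖ := (Real.norm_eq_abs _).symm
      _ ≤ ‖g (Real.cos θ)‖ := norm_le_pi_norm _ j
      _ ≤ M := hM θ
  -- key integral identity
  have hkey : ∫ θ in (0:ℝ)..Real.pi, s θ * Real.cos (i * θ)
      = c i j * (if i = 0 then Real.pi else Real.pi / 2) := by
    have : ∀ θ : ℝ, s θ * Real.cos (i * θ)
        = ∑ i' ∈ Finset.range (n + 1), c i' j * (Real.cos (i' * θ) * Real.cos (i * θ)) := by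
      intro θ; rw [hs, Finset.sum_mul]; exact Finset.sum_congr rfl fun _ _ => by ring
    simp_rw [this]
    rw [intervalIntegral.integral_finset_sum]
    · have : ∀ i' ∈ Finset.range (n + 1),
          (∫ θ in (0:ℝ)..Real.pi, c i' j * (Real.cos (i' * θ) * Real.cos (i * θ)))
            = c i' j * (if i' = i then (if i' = 0 then Real.pi else Real.pi / 2) else 0) := by
        intro i' _
        rw [intervalIntegral.integral_const_mul, cos_orth]
      rw [Finset.sum_congr rfl this, Finset.sum_eq_single i]
      · simp
      · intro b _ hb; simp [hb]
      · intro h; exact absurd (Finset.mem_range.mpr (Nat.lt_succ_of_le hi)) h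
    · intro i' _
      exact (continuous_const.mul ((cos_cont _).mul (cos_cont _))).intervalIntegrable _ _
  rcases eq_or_ne i 0 with h0 | h0
  -- case i = 0 : |c 0 j| ≤ M ≤ √2 M
  · rw [h0, if_pos rfl] at hkey
    have habs : |∫ θ in (0:ℝ)..Real.pi, s θ * Real.cos (i * θ)| ≤ M * Real.pi := by
      calc |∫ θ in (0:ℝ)..Real.pi, s θ * Real.cos (i * θ)|
          ≤ ∫ θ in (0:ℝ)..Real.pi, |s θ * Real.cos (i * θ)| :=
            intervalIntegral.abs_integral_le_integral_abs Real.pi_nonneg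
        _ ≤ ∫ θ in (0:ℝ)..Real.pi, M := by
            apply intervalIntegral.integral_mono_on Real.pi_nonneg
            · exact (hconts.mul (cos_cont _)).abs.intervalIntegrable _ _
            · exact intervalIntegrable_const
            · intro θ _
              rw [abs_mul]
              calc |s θ| * |Real.cos (i * θ)| ≤ M * 1 := by
                    apply mul_le_mul (hsle θ) _ (abs_nonneg _) hM0
                    rw [h0]; simpa using Real.abs_cos_le_one ((0:ℝ) * θ)
                _ = M := mul_one M
        _ = M * Real.pi := by simp [mul_comm]
    rw [h0] at habs ⊢
    rw [hkey] at habs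
    rw [abs_mul, abs_of_nonneg Real.pi_nonneg] at habs
    have h1 : |c 0 j| ≤ M :=
      le_of_mul_le_mul_right (by linarith [habs]) Real.pi_pos
    calc |c 0 j| ≤ M := h1
      _ = 1 * M := (one_mul M).symm
      _ ≤ Real.sqrt 2 * M := by
          apply mul_le_mul_of_nonneg_right _ hM0
          nlinarith [sqrt2_sq, sqrt2_pos]
  -- case i ≠ 0
  · rw [if_neg h0] at hkey
    have hcos2 : ∫ θ in (0:ℝ)..Real.pi, Real.cos (i * θ) ^ 2 = Real.pi / 2 := by
      have hrw : ∀ θ : ℝ, Real.cos ((i:ℝ) * θ) ^ 2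
          = 1 / 2 + Real.cos (((2 * i : ℤ) : ℝ) * θ) / 2 := by
        intro θ
        rw [Real.cos_sq]
        push_cast
        ring_nf
      simp_rw [hrw]
      have h2i : ∫ θ in (0:ℝ)..Real.pi, Real.cos (((2 * i : ℤ) : ℝ) * θ) / 2 = 0 := by
        rw [intervalIntegral.integral_div, int_cos_int, if_neg (by simp [h0])]
        norm_num
      rw [intervalIntegral.integral_add intervalIntegrable_const
        (((cos_cont _).div_const 2).intervalIntegrable _ _), h2i,
        intervalIntegral.integral_const]
      simp only [smul_eq_mul, sub_zero, add_zero]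
      ring
    -- pointwise bound and integral bound
    have habs : |∫ θ in (0:ℝ)..Real.pi, s θ * Real.cos (i * θ)|
        ≤ M / Real.sqrt 2 * Real.pi := by
      calc |∫ θ in (0:ℝ)..Real.pi, s θ * Real.cos (i * θ)|
          ≤ ∫ θ in (0:ℝ)..Real.pi, |s θ * Real.cos (i * θ)| :=
            intervalIntegral.abs_integral_le_integral_abs Real.pi_nonneg
        _ ≤ ∫ θ in (0:ℝ)..Real.pi, M / Real.sqrt 2 * (Real.cos (i * θ) ^ 2 + 1 / 2) := by
            apply intervalIntegral.integral_mono_on Real.pi_nonneg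
            · exact (hconts.mul (cos_cont _)).abs.intervalIntegrable _ _
            · exact (continuous_const.mul (((cos_cont _).pow 2).add
                continuous_const)).intervalIntegrable _ _
            · intro θ _
              rw [abs_mul]
              have h1 : |s θ| * |Real.cos (i * θ)| ≤ M * |Real.cos (i * θ)| :=
                mul_le_mul_of_nonneg_right (hsle θ) (abs_nonneg _)
              have h2 : |Real.cos (i * θ)| ≤ (Real.cos (i * θ) ^ 2 + 1 / 2) / Real.sqrt 2 := by
                rw [le_div_iff₀ sqrt2_pos]
                nlinarith [sq_nonneg (|Real.cos (i * θ)| - Real.sqrt 2 / 2), sqrt2_sq,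
                  sq_abs (Real.cos (i * θ))]
              calc |s θ| * |Real.cos (i * θ)| ≤ M * ((Real.cos (i * θ) ^ 2 + 1 / 2) / Real.sqrt 2) :=
                    le_trans h1 (mul_le_mul_of_nonneg_left h2 hM0)
                _ = M / Real.sqrt 2 * (Real.cos (i * θ) ^ 2 + 1 / 2) := by ring
        _ = M / Real.sqrt 2 * Real.pi := by
            rw [intervalIntegral.integral_const_mul,
              intervalIntegral.integral_add (f := fun θ => Real.cos (i * θ) ^ 2) (((cos_cont _).pow 2).intervalIntegrable _ _)
                intervalIntegrable_const, hcos2, intervalIntegral.integral_const]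
            simp only [smul_eq_mul, sub_zero]
            ring
    rw [hkey, abs_mul, abs_of_nonneg (by positivity : (0:ℝ) ≤ Real.pi / 2)] at habs
    have hpi : (0:ℝ) < Real.pi / 2 := by positivity
    have heq : M / Real.sqrt 2 * Real.pi = Real.pi / 2 * (Real.sqrt 2 * M) := by
      rw [div_mul_eq_mul_div, div_eq_iff (ne_of_gt sqrt2_pos)]
      linear_combination -(Real.pi / 2 * M) * sqrt2_sq
    rw [mul_comm] at habs
    exact (mul_le_mul_iff_right₀ hpi).mp (heq ▸ habs)
end

section
/- Let f be a real univariate polynomial with f(t) = Σ_{i=0}^{n} a_i t^i = Σ_{i=0}^{n} c_i T_i(t), where T_i is the i-th Chebyshev polynomial of the first kind; that is, a_i are the coefficients of f in the power basis and c_i are the coefficients of f in the Chebyshev basis. Then for every i = 0,…,n, |a_i| ≤ ((3^{n+1} − 1)/2) · max_{j=0,…,n} |c_j|. -/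
open Finset Polynomial

lemma cheb_coeff_bound : ∀ k i : ℕ, |(Polynomial.Chebyshev.T ℝ k).coeff i| ≤ 3 ^ k := by
  intro k
  induction k using Nat.twoStepInduction with
  | zero =>
    intro i
    simp only [Nat.cast_zero, Polynomial.Chebyshev.T_zero, Polynomial.coeff_one]
    split <;> norm_num
  | one =>
    intro i
    simp only [Nat.cast_one, Polynomial.Chebyshev.T_one, Polynomial.coeff_X]
    split <;> norm_num
  | more k ih1 ih2 =>
    intro i
    have h : ((k + 2 : ℕ) : ℤ) = (k : ℤ) + 2 := by push_cast; ring
    rw [h, Polynomial.Chebyshev.T_add_two]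
    have key : (2 * Polynomial.X * Polynomial.Chebyshev.T ℝ ((k : ℤ) + 1) - Polynomial.Chebyshev.T ℝ (k : ℤ)).coeff i
        = 2 * (Polynomial.X * Polynomial.Chebyshev.T ℝ ((k : ℤ) + 1)).coeff i - (Polynomial.Chebyshev.T ℝ (k : ℤ)).coeff i := by
      rw [Polynomial.coeff_sub, mul_assoc, ← map_ofNat (Polynomial.C (R := ℝ)) 2,
        Polynomial.coeff_C_mul]
    rw [key]
    have hx : |(Polynomial.X * Polynomial.Chebyshev.T ℝ ((k : ℤ) + 1)).coeff i| ≤ 3 ^ (k + 1) := by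
      cases i with
      | zero =>
        rw [Polynomial.mul_coeff_zero, Polynomial.coeff_X_zero, zero_mul, abs_zero]
        positivity
      | succ j =>
        rw [Polynomial.coeff_X_mul]
        have := ih2 j
        push_cast at this
        exact this
    have h1 := ih1 i
    have main : ∀ x y : ℝ, |x| ≤ 3 ^ (k + 1) → |y| ≤ 3 ^ k → |2 * x - y| ≤ (3:ℝ) ^ (k + 2) := by
      intro x y hxx hyy
      have hx' := abs_le.1 hxx
      have hy' := abs_le.1 hyy
      rw [abs_le]
      constructor <;> nlinarith [pow_nonneg (show (0:ℝ) ≤ 3 by norm_num) k,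
        pow_succ (3:ℝ) k, pow_succ (3:ℝ) (k+1)]
    exact main _ _ hx h1

/-- if `∑_{i=0}^n a i * t^i = ∑_{i=0}^n c i * T_i(t)` as real polynomials
(power-basis coefficients `a`, Chebyshev-basis coefficients `c`), then
`|a i| ≤ ((3^{n+1} - 1)/2) * max_j |c j|` for every `i ≤ n`. -/
theorem stmt_4 (n : ℕ) (a c : ℕ → ℝ)
    (hf : ∑ i ∈ Finset.range (n + 1), Polynomial.C (a i) * Polynomial.X ^ i =
      ∑ i ∈ Finset.range (n + 1), Polynomial.C (c i) * Polynomial.Chebyshev.T ℝ i) :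
    ∀ i ≤ n, |a i| ≤ ((3 ^ (n + 1) - 1) / 2 : ℝ) *
      ((Finset.range (n + 1)).sup' Finset.nonempty_range_add_one fun j => |c j|) := by
  intro i hi
  set M := (Finset.range (n + 1)).sup' Finset.nonempty_range_add_one fun j => |c j| with hM
  have hMle : ∀ j ∈ Finset.range (n + 1), |c j| ≤ M := fun j hj =>
    Finset.le_sup' (fun j => |c j|) hj
  have hai : a i = ∑ j ∈ Finset.range (n + 1), c j * (Polynomial.Chebyshev.T ℝ j).coeff i := by
    have := congrArg (fun p => Polynomial.coeff p i) hf
    simp only [Polynomial.finset_sum_coeff, Polynomial.coeff_C_mul,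
      Polynomial.coeff_X_pow] at this
    rw [Finset.sum_eq_single i] at this
    · simpa using this
    · intro b _ hb; simp [Ne.symm hb]
    · intro h; exact absurd (Finset.mem_range.mpr (Nat.lt_succ_of_le hi)) h
  rw [hai]
  calc |∑ j ∈ Finset.range (n + 1), c j * (Polynomial.Chebyshev.T ℝ j).coeff i|
      ≤ ∑ j ∈ Finset.range (n + 1), |c j * (Polynomial.Chebyshev.T ℝ j).coeff i| :=
        Finset.abs_sum_le_sum_abs _ _
    _ ≤ ∑ j ∈ Finset.range (n + 1), M * 3 ^ j := by
        apply Finset.sum_le_sum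
        intro j hj
        rw [abs_mul]
        have h1 := hMle j hj
        have h2 := cheb_coeff_bound j i
        have h3 : (0:ℝ) ≤ M := le_trans (abs_nonneg _) h1
        exact mul_le_mul h1 h2 (abs_nonneg _) h3
    _ = M * ∑ j ∈ Finset.range (n + 1), 3 ^ j := by rw [Finset.mul_sum]
    _ = ((3 ^ (n + 1) - 1) / 2 : ℝ) * M := by
        rw [geom_sum_eq (by norm_num : (3:ℝ) ≠ 1)]
        ring
end

section
/- Let d ≥ 1 and let f(t) = Σ_{i=0}^{n} c_i t^i with coefficients c_i ∈ ℝ^d. Then for every i = 0,…,n, ‖c_i‖ ≤ ((3^{n+1} − 1)/√2) · max_{−1 ≤ t ≤ 1} ‖f(t)‖. -/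
open Finset intervalIntegral

noncomputable section Stmt5Aux

/-- Coefficients of the Chebyshev polynomial: `cos (k θ) = ∑ i, tau5 k i * (cos θ)^i`. -/
def tau5 : ℕ → ℕ → ℝ
  | 0, i => if i = 0 then 1 else 0
  | 1, i => if i = 1 then 1 else 0
  | (k+2), i => (if i = 0 then 0 else 2 * tau5 (k+1) (i-1)) - tau5 k i

lemma tau5_two (k i : ℕ) :
    tau5 (k+2) i = (if i = 0 then 0 else 2 * tau5 (k+1) (i-1)) - tau5 k i := rfl

lemma tau5_eq_zero : ∀ k i, k < i → tau5 k i = 0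
  | 0, i, h => by simp only [tau5]; rw [if_neg (by omega)]
  | 1, i, h => by simp only [tau5]; rw [if_neg (by omega)]
  | (k+2), i, h => by
    rw [tau5_two, tau5_eq_zero k i (by omega), tau5_eq_zero (k+1) (i-1) (by omega)]
    simp

lemma tau5_diag : ∀ k, tau5 k k = if k = 0 then 1 else 2^(k-1)
  | 0 => by simp [tau5]
  | 1 => by simp [tau5]
  | (k+2) => by
    rw [tau5_two]
    have : k + 2 - 1 = k + 1 := rfl
    rw [this, tau5_eq_zero k (k+2) (by omega), tau5_diag (k+1)]
    simp only [if_neg (by omega : ¬ k+2 = 0), if_neg (by omega : ¬ k+1 = 0)]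
    rw [sub_zero, ← pow_succ']
    norm_num

lemma tau5_diag_ne : ∀ k, tau5 k k ≠ 0 := by
  intro k
  rw [tau5_diag]
  split <;> positivity

lemma cos_eq_sum_tau5 : ∀ (k : ℕ) (θ : ℝ),
    Real.cos (k * θ) = ∑ i ∈ range (k+1), tau5 k i * Real.cos θ ^ i
  | 0, θ => by simp [tau5]
  | 1, θ => by simp [tau5]
  | (k+2), θ => by
    have trig : Real.cos ((k+2 : ℕ) * θ) =
        2 * Real.cos θ * Real.cos ((k+1 : ℕ) * θ) - Real.cos ((k : ℕ) * θ) := by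
      have h1 : ((k+2 : ℕ) : ℝ) * θ = ((k+1 : ℕ) : ℝ) * θ + θ := by push_cast; ring
      have h2 : ((k : ℕ) : ℝ) * θ = ((k+1 : ℕ) : ℝ) * θ - θ := by push_cast; ring
      rw [h1, h2, Real.cos_add, Real.cos_sub]; ring
    rw [trig, cos_eq_sum_tau5 (k+1) θ, cos_eq_sum_tau5 k θ]
    have hsplit : ∑ i ∈ range (k+3), tau5 (k+2) i * Real.cos θ ^ i =
        (∑ i ∈ range (k+3), (if i = 0 then 0 else 2 * tau5 (k+1) (i-1)) * Real.cos θ ^ i)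
        - ∑ i ∈ range (k+3), tau5 k i * Real.cos θ ^ i := by
      rw [← Finset.sum_sub_distrib]
      refine Finset.sum_congr rfl fun i _ => by rw [tau5_two]; ring
    rw [hsplit]
    congr 1
    · rw [Finset.sum_range_succ' (fun i => (if i = 0 then 0 else 2 * tau5 (k+1) (i-1)) * Real.cos θ ^ i) (k+2)]
      simp only [Nat.add_sub_cancel, Finset.mul_sum]
      norm_num
      refine Finset.sum_congr rfl fun i _ => by ring
    · refine Finset.sum_subset (Finset.range_subset_range.2 (by omega)) fun i _ hi => ?_
      simp only [Finset.mem_range] at hi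
      rw [tau5_eq_zero k i (by omega), zero_mul]


/-- Sum of absolute values of the Chebyshev coefficients. -/
def S5 (k : ℕ) : ℝ := ∑ i ∈ range (k+1), |tau5 k i|

lemma S5_nonneg (k : ℕ) : 0 ≤ S5 k :=
  Finset.sum_nonneg fun _ _ => abs_nonneg _

lemma abs_tau5_le_S5 (k i : ℕ) : |tau5 k i| ≤ S5 k := by
  rcases le_or_gt i k with h | h
  · exact Finset.single_le_sum (f := fun j => |tau5 k j|) (fun _ _ => abs_nonneg _)
      (Finset.mem_range.2 (by omega))
  · rw [tau5_eq_zero k i h, abs_zero]; exact S5_nonneg k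

lemma S5_zero : S5 0 = 1 := by simp [S5, tau5]

lemma S5_one : S5 1 = 1 := by
  simp [S5, tau5, Finset.sum_range_succ]

lemma S5_rec (k : ℕ) : S5 (k+2) ≤ 2 * S5 (k+1) + S5 k := by
  have h1 : S5 (k+2) ≤ (∑ i ∈ range (k+3), (if i = 0 then 0 else 2 * |tau5 (k+1) (i-1)|))
      + ∑ i ∈ range (k+3), |tau5 k i| := by
    rw [S5, ← Finset.sum_add_distrib]
    refine Finset.sum_le_sum fun i _ => ?_
    rw [tau5_two]
    refine (abs_sub _ _).trans (add_le_add ?_ le_rfl)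
    split
    · simp
    · rw [abs_mul, abs_two]
  have h2 : (∑ i ∈ range (k+3), (if i = 0 then 0 else 2 * |tau5 (k+1) (i-1)|))
      = 2 * S5 (k+1) := by
    rw [Finset.sum_range_succ' (fun i => if i = 0 then (0:ℝ) else 2 * |tau5 (k+1) (i-1)|) (k+2)]
    norm_num
    rw [S5, Finset.mul_sum]
  have h3 : ∑ i ∈ range (k+3), |tau5 k i| = S5 k := by
    rw [S5]
    refine (Finset.sum_subset (Finset.range_subset_range.2 (by omega)) fun i _ hi => ?_).symm
    simp only [Finset.mem_range] at hi
    rw [tau5_eq_zero k i (by omega), abs_zero]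
  rw [h2, h3] at h1
  exact h1

lemma sqrt2_le_two : Real.sqrt 2 ≤ 2 := by
  nlinarith [Real.sq_sqrt (by norm_num : (2:ℝ) ≥ 0), Real.sqrt_nonneg 2]

lemma sqrt2_pos : (0:ℝ) < Real.sqrt 2 := Real.sqrt_pos.2 (by norm_num)

lemma S5_le : ∀ k, S5 k ≤ if k = 0 then 1 else 3^k / Real.sqrt 2
  | 0 => by rw [S5_zero]; simp
  | 1 => by
    rw [S5_one, if_neg one_ne_zero]
    rw [le_div_iff₀ sqrt2_pos]
    nlinarith [sqrt2_le_two]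
  | (k+2) => by
    have h := S5_rec k
    have h1 := S5_le (k+1)
    have h0 := S5_le k
    rw [if_neg (Nat.succ_ne_zero _)] at h1 ⊢
    rcases Nat.eq_zero_or_pos k with rfl | hk
    · rw [if_pos rfl] at h0
      have : (3:ℝ)^(0+2) / Real.sqrt 2 = 9 / Real.sqrt 2 := by norm_num
      rw [this]
      have h9 : 2 * ((3:ℝ)^(0+1) / Real.sqrt 2) + 1 ≤ 9 / Real.sqrt 2 := by
        rw [mul_div_assoc', div_add' _ _ _ (ne_of_gt sqrt2_pos),
          div_le_div_iff₀ sqrt2_pos sqrt2_pos]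
        norm_num
        nlinarith [Real.mul_self_sqrt (by norm_num : (2:ℝ) ≥ 0),
          mul_nonneg (sub_nonneg.2 sqrt2_le_two) sqrt2_pos.le]
      linarith
    · rw [if_neg (by omega)] at h0
      have key : 2 * ((3:ℝ)^(k+1) / Real.sqrt 2) + 3^k / Real.sqrt 2 ≤ 3^(k+2) / Real.sqrt 2 := by
        rw [mul_div_assoc', ← add_div, div_le_div_iff₀ sqrt2_pos sqrt2_pos]
        have h3k : (0:ℝ) < 3^k := by positivity
        have e1 : (3:ℝ)^(k+1) = 3 * 3^k := by ring
        have e2 : (3:ℝ)^(k+2) = 9 * 3^k := by ring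
        rw [e1, e2]
        nlinarith [sqrt2_pos]
      linarith


lemma inv_tau5 : ∀ m : ℕ, ∃ β : ℕ → ℝ, (∀ k, m < k → β k = 0) ∧
    ∀ i, (if i = m then (1:ℝ) else 0) = ∑ k ∈ range (m+1), β k * tau5 k i := by
  intro m
  induction m using Nat.strong_induction_on with
  | _ m IH =>
  let B : ℕ → ℕ → ℝ := fun j => if h : j < m then (IH j h).choose else fun _ => 0
  have hB0 : ∀ j, j < m → ∀ k, j < k → B j k = 0 := by
    intro j hj k hk
    simp only [B, dif_pos hj]
    exact (IH j hj).choose_spec.1 k hk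
  have hB : ∀ j, j < m → ∀ i,
      (if i = j then (1:ℝ) else 0) = ∑ k ∈ range (j+1), B j k * tau5 k i := by
    intro j hj i
    simp only [B, dif_pos hj]
    exact (IH j hj).choose_spec.2 i
  refine ⟨fun k => (if k = m then 1/tau5 m m else 0)
      - ∑ j ∈ range m, (tau5 m j / tau5 m m) * B j k, ?_, ?_⟩
  · intro k hk
    show (if k = m then 1/tau5 m m else 0)
      - ∑ j ∈ range m, (tau5 m j / tau5 m m) * B j k = 0
    rw [if_neg (by omega), zero_sub, neg_eq_zero]
    refine Finset.sum_eq_zero fun j hj => ?_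
    rw [hB0 j (Finset.mem_range.1 hj) k (by have := Finset.mem_range.1 hj; omega), mul_zero]
  · intro i
    have inner : ∀ j ∈ range m, ∑ k ∈ range (m+1), B j k * tau5 k i
        = (if i = j then (1:ℝ) else 0) := by
      intro j hj
      rw [Finset.mem_range] at hj
      rw [hB j hj i]
      refine (Finset.sum_subset (Finset.range_subset_range.2 (by omega)) fun k _ hk => ?_).symm
      simp only [Finset.mem_range] at hk
      rw [hB0 j hj k (by omega), zero_mul]
    have expand : ∑ k ∈ range (m+1), ((if k = m then 1/tau5 m m else 0)
          - ∑ j ∈ range m, (tau5 m j / tau5 m m) * B j k) * tau5 k i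
        = 1/tau5 m m * tau5 m i
          - ∑ j ∈ range m, (tau5 m j / tau5 m m) * (if i = j then (1:ℝ) else 0) := by
      have step1 : ∀ k ∈ range (m+1), ((if k = m then 1/tau5 m m else 0)
            - ∑ j ∈ range m, (tau5 m j / tau5 m m) * B j k) * tau5 k i
          = (if k = m then 1/tau5 m m * tau5 k i else 0)
            - ∑ j ∈ range m, (tau5 m j / tau5 m m) * (B j k * tau5 k i) := by
        intro k _
        rw [sub_mul, Finset.sum_mul, ite_mul, zero_mul]
        congr 1
        exact Finset.sum_congr rfl fun j _ => by ring
      rw [Finset.sum_congr rfl step1, Finset.sum_sub_distrib,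
        Finset.sum_ite_eq' (range (m+1)) m (fun k => 1/tau5 m m * tau5 k i),
        if_pos (Finset.mem_range.2 (by omega)), Finset.sum_comm]
      congr 1
      exact Finset.sum_congr rfl fun j hj => by rw [← Finset.mul_sum, inner j hj]
    rw [expand]
    rcases lt_trichotomy i m with h | heq | h
    · rw [if_neg (by omega)]
      rw [Finset.sum_eq_single i]
      · rw [if_pos rfl, mul_one]
        field_simp
        ring
      · intro j _ hj
        rw [if_neg (fun hh => hj hh.symm), mul_zero]
      · intro hmem
        exact absurd (Finset.mem_range.2 h) hmem
    · rw [if_pos heq, heq, one_div_mul_cancel (tau5_diag_ne m)]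
      rw [Finset.sum_eq_zero fun j hj => by
        rw [Finset.mem_range] at hj
        rw [if_neg (by omega), mul_zero], sub_zero]
    · rw [if_neg (by omega), tau5_eq_zero m i h, mul_zero]
      rw [Finset.sum_eq_zero fun j hj => by
        rw [Finset.mem_range] at hj
        rw [if_neg (by omega), mul_zero], sub_zero]


lemma integral_cos_mul5 (a : ℝ) (ha0 : Real.sin (a * Real.pi) = 0) :
    ∫ θ in (0:ℝ)..Real.pi, Real.cos (a * θ) = if a = 0 then Real.pi else 0 := by
  rcases eq_or_ne a 0 with rfl | ha
  · simp
  · rw [if_neg ha, intervalIntegral.integral_comp_mul_left Real.cos ha]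
    rw [integral_cos]
    simp [ha0]

lemma cos_integrable (a : ℝ) : IntervalIntegrable (fun θ => Real.cos (a * θ))
    MeasureTheory.volume 0 Real.pi :=
  (Real.continuous_cos.comp (continuous_const.mul continuous_id)).intervalIntegrable _ _

lemma orth5 (j k : ℕ) : ∫ θ in (0:ℝ)..Real.pi, Real.cos (j * θ) * Real.cos (k * θ)
    = if j = k then (if j = 0 then Real.pi else Real.pi/2) else 0 := by
  have prod : Set.EqOn (fun θ : ℝ => Real.cos (j * θ) * Real.cos (k * θ))
      (fun θ : ℝ => (Real.cos (((j:ℝ) + k) * θ) + Real.cos (((j:ℝ) - k) * θ)) / 2)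
      (Set.uIcc 0 Real.pi) := by
    intro θ _
    simp only
    rw [show ((j:ℝ)+k)*θ = j*θ + k*θ by ring, show ((j:ℝ)-k)*θ = j*θ - k*θ by ring,
      Real.cos_add, Real.cos_sub]
    ring
  rw [intervalIntegral.integral_congr prod]
  have split : (∫ θ in (0:ℝ)..Real.pi,
        (Real.cos (((j:ℝ) + k) * θ) + Real.cos (((j:ℝ) - k) * θ)) / 2)
      = ((∫ θ in (0:ℝ)..Real.pi, Real.cos (((j:ℝ) + k) * θ))
        + ∫ θ in (0:ℝ)..Real.pi, Real.cos (((j:ℝ) - k) * θ)) / 2 := by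
    rw [intervalIntegral.integral_div, intervalIntegral.integral_add
      (cos_integrable _) (cos_integrable _)]
  rw [split, integral_cos_mul5 ((j:ℝ) + k) (by
      rw [show ((j:ℝ) + k) = ((j + k : ℕ) : ℝ) by push_cast; ring]
      exact Real.sin_nat_mul_pi (j + k)),
    integral_cos_mul5 ((j:ℝ) - k) (by
      rw [show ((j:ℝ) - k) = (((j:ℤ) - k : ℤ) : ℝ) by push_cast; ring]
      exact Real.sin_int_mul_pi _)]
  rcases eq_or_ne j k with rfl | hjk
  · rw [if_pos rfl, sub_self, if_pos rfl]
    rcases eq_or_ne j 0 with rfl | hj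
    · norm_num
    · rw [if_neg (by
        simp only [← Nat.cast_add]
        exact_mod_cast (by omega : ¬ (j + j = 0))), if_neg hj]
      norm_num
  · rw [if_neg hjk,
      if_neg (by
        simp only [← Nat.cast_add]
        exact_mod_cast (by omega : ¬ (j + k = 0))),
      if_neg (by
        intro hc
        exact hjk (by exact_mod_cast sub_eq_zero.1 hc))]
    norm_num


lemma scalar_coeff_bound (n : ℕ) (γ : ℕ → ℝ) (M : ℝ)
    (hbound : ∀ x ∈ Set.Icc (-1:ℝ) 1, |∑ m ∈ range (n+1), γ m * x ^ m| ≤ M) :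
    ∀ i ≤ n, |γ i| ≤ ((3^(n+1) - 1) / Real.sqrt 2) * M := by
  have hM : 0 ≤ M := le_trans (abs_nonneg _) (hbound 1 (by norm_num))
  choose Beta hBeta0 hBeta using inv_tau5
  set b : ℕ → ℝ := fun k => ∑ m ∈ range (n+1), γ m * Beta m k with hb
  have inner : ∀ m ∈ range (n+1), ∀ i, ∑ k ∈ range (n+1), Beta m k * tau5 k i
      = (if i = m then (1:ℝ) else 0) := by
    intro m hm i
    rw [Finset.mem_range] at hm
    have htr : ∑ k ∈ range (n+1), Beta m k * tau5 k i
        = ∑ k ∈ range (m+1), Beta m k * tau5 k i :=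
      (Finset.sum_subset (Finset.range_subset_range.2 (by omega)) fun k _ hk => by
        rw [Finset.mem_range] at hk
        rw [hBeta0 m k (by omega), zero_mul]).symm
    rw [htr, ← hBeta m i]
  have coeff_id : ∀ i ≤ n, γ i = ∑ k ∈ range (n+1), b k * tau5 k i := by
    intro i hi
    have swap : ∑ k ∈ range (n+1), b k * tau5 k i
        = ∑ m ∈ range (n+1), γ m * ∑ k ∈ range (n+1), Beta m k * tau5 k i := by
      simp_rw [hb, Finset.sum_mul, mul_assoc]
      rw [Finset.sum_comm]
      exact Finset.sum_congr rfl fun m _ => by rw [Finset.mul_sum]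
    rw [swap, Finset.sum_congr rfl fun m hm => by rw [inner m hm i]]
    simp only [mul_ite, mul_one, mul_zero]
    rw [Finset.sum_ite_eq (range (n+1)) i γ, if_pos (Finset.mem_range.2 (by omega))]
  have func_id : ∀ θ : ℝ, ∑ m ∈ range (n+1), γ m * Real.cos θ ^ m
      = ∑ k ∈ range (n+1), b k * Real.cos ((k:ℝ) * θ) := by
    intro θ
    have L : ∑ m ∈ range (n+1), γ m * Real.cos θ ^ m
        = ∑ k ∈ range (n+1), b k * ∑ m ∈ range (n+1), tau5 k m * Real.cos θ ^ m := by
      have : ∀ m ∈ range (n+1), γ m * Real.cos θ ^ m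
          = ∑ k ∈ range (n+1), b k * (tau5 k m * Real.cos θ ^ m) := by
        intro m hm
        rw [Finset.mem_range] at hm
        rw [coeff_id m (by omega), Finset.sum_mul]
        exact Finset.sum_congr rfl fun k _ => by ring
      rw [Finset.sum_congr rfl this, Finset.sum_comm]
      exact Finset.sum_congr rfl fun k _ => by rw [Finset.mul_sum]
    rw [L]
    refine Finset.sum_congr rfl fun k hk => ?_
    rw [Finset.mem_range] at hk
    congr 1
    rw [cos_eq_sum_tau5 k θ]
    refine (Finset.sum_subset (Finset.range_subset_range.2 (by omega)) fun m _ hm => ?_).symm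
    rw [Finset.mem_range] at hm
    rw [tau5_eq_zero k m (by omega), zero_mul]
  -- bound on the Chebyshev coefficients b
  have hbj : ∀ j ≤ n, |b j| ≤ (if j = 0 then (1:ℝ) else 2) * M := by
    intro j hj
    have h1 : ‖∫ θ in (0:ℝ)..Real.pi,
        (∑ m ∈ range (n+1), γ m * Real.cos θ ^ m) * Real.cos ((j:ℝ) * θ)‖
        ≤ M * |Real.pi - 0| := by
      refine intervalIntegral.norm_integral_le_of_norm_le_const fun θ hθ => ?_
      rw [Real.norm_eq_abs, abs_mul]
      have hc1 : |Real.cos ((j:ℝ) * θ)| ≤ 1 := Real.abs_cos_le_one _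
      have hc2 : |∑ m ∈ range (n+1), γ m * Real.cos θ ^ m| ≤ M :=
        hbound _ ⟨Real.neg_one_le_cos θ, Real.cos_le_one θ⟩
      calc |∑ m ∈ range (n+1), γ m * Real.cos θ ^ m| * |Real.cos ((j:ℝ) * θ)|
          ≤ M * 1 := mul_le_mul hc2 hc1 (abs_nonneg _) hM
        _ = M := mul_one M
    have h2 : (∫ θ in (0:ℝ)..Real.pi,
        (∑ m ∈ range (n+1), γ m * Real.cos θ ^ m) * Real.cos ((j:ℝ) * θ))
        = b j * (if j = 0 then Real.pi else Real.pi/2) := by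
      have e1 : Set.EqOn
          (fun θ : ℝ => (∑ m ∈ range (n+1), γ m * Real.cos θ ^ m) * Real.cos ((j:ℝ) * θ))
          (fun θ : ℝ => ∑ k ∈ range (n+1), b k * (Real.cos ((k:ℝ) * θ) * Real.cos ((j:ℝ) * θ)))
          (Set.uIcc 0 Real.pi) := by
        intro θ _
        simp only
        rw [func_id θ, Finset.sum_mul]
        exact Finset.sum_congr rfl fun k _ => by ring
      rw [intervalIntegral.integral_congr e1]
      rw [intervalIntegral.integral_finset_sum (fun k _ => by
        apply Continuous.intervalIntegrable
        exact continuous_const.mul (((Real.continuous_cos.comp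
          (continuous_const.mul continuous_id)).mul (Real.continuous_cos.comp
          (continuous_const.mul continuous_id)))))]
      have e2 : ∀ k ∈ range (n+1), (∫ θ in (0:ℝ)..Real.pi,
          b k * (Real.cos ((k:ℝ) * θ) * Real.cos ((j:ℝ) * θ)))
          = b k * (if k = j then (if k = 0 then Real.pi else Real.pi/2) else 0) := by
        intro k _
        rw [intervalIntegral.integral_const_mul, orth5 k j]
      rw [Finset.sum_congr rfl e2, Finset.sum_eq_single j]
      · rw [if_pos rfl]
      · intro k _ hkj
        rw [if_neg hkj, mul_zero]
      · intro hmem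
        exact absurd (Finset.mem_range.2 (by omega)) hmem
    rw [h2] at h1
    rw [Real.norm_eq_abs, abs_mul, sub_zero, abs_of_pos Real.pi_pos] at h1
    split at h1 <;> split
    · rw [abs_of_pos Real.pi_pos] at h1
      rw [one_mul]
      exact le_of_mul_le_mul_right (by linarith [h1]) Real.pi_pos
    · omega
    · omega
    · rw [abs_of_pos (by positivity : (0:ℝ) < Real.pi/2)] at h1
      have := Real.pi_pos
      nlinarith [abs_nonneg (b j)]
  -- final assembly
  intro i hi
  rw [coeff_id i hi]
  have hsq : Real.sqrt 2 * Real.sqrt 2 = 2 := Real.mul_self_sqrt (by norm_num)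
  have hs1 : (1:ℝ) ≤ Real.sqrt 2 := by nlinarith [sqrt2_pos, sqrt2_le_two]
  have term : ∀ k ∈ range (n+1), |b k * tau5 k i| ≤ Real.sqrt 2 * 3^k * M := by
    intro k hk
    rw [Finset.mem_range] at hk
    rw [abs_mul]
    have hS := abs_tau5_le_S5 k i
    have hSle := S5_le k
    rcases eq_or_ne k 0 with rfl | hk0
    · rw [if_pos rfl] at hSle
      have hb0 : |b 0| ≤ M := by have := hbj 0 (by omega); rwa [if_pos rfl, one_mul] at this
      calc |b 0| * |tau5 0 i| ≤ M * 1 :=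
          mul_le_mul hb0 (hS.trans hSle) (abs_nonneg _) hM
        _ ≤ Real.sqrt 2 * 3^0 * M := by rw [mul_one]; nlinarith [hs1, hM]
    · rw [if_neg hk0] at hSle
      have hbk : |b k| ≤ 2 * M := by
        have := hbj k (by omega); rwa [if_neg hk0] at this
      calc |b k| * |tau5 k i| ≤ (2 * M) * (3^k / Real.sqrt 2) :=
          mul_le_mul hbk (hS.trans hSle) (abs_nonneg _) (by positivity)
        _ = Real.sqrt 2 * 3^k * M := by
          rw [div_eq_mul_inv]
          field_simp
          have hsq2 : Real.sqrt 2 ^ 2 = 2 := Real.sq_sqrt (by norm_num)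
          linear_combination (-M) * hsq2
  calc |∑ k ∈ range (n+1), b k * tau5 k i|
      ≤ ∑ k ∈ range (n+1), |b k * tau5 k i| := Finset.abs_sum_le_sum_abs _ _
    _ ≤ ∑ k ∈ range (n+1), Real.sqrt 2 * 3^k * M := Finset.sum_le_sum term
    _ = ((3^(n+1) - 1) / Real.sqrt 2) * M := by
        have hgeo : ∑ k ∈ range (n+1), ((3:ℝ))^k = (3^(n+1) - 1)/2 := by
          rw [geom_sum_eq (by norm_num : (3:ℝ) ≠ 1)]
          norm_num
        calc ∑ k ∈ range (n+1), Real.sqrt 2 * 3^k * M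
            = Real.sqrt 2 * M * ∑ k ∈ range (n+1), ((3:ℝ))^k := by
              rw [Finset.mul_sum]
              exact Finset.sum_congr rfl fun k _ => by ring
          _ = Real.sqrt 2 * M * ((3^(n+1) - 1)/2) := by rw [hgeo]
          _ = ((3^(n+1) - 1) / Real.sqrt 2) * M := by
              have h2inv : (Real.sqrt 2)⁻¹ = Real.sqrt 2 * (2:ℝ)⁻¹ := by
                field_simp
                rw [Real.sq_sqrt (by norm_num)]
              rw [div_eq_mul_inv, div_eq_mul_inv, h2inv]
              ring

end Stmt5Aux

/-- for `f(t) = ∑_{i=0}^n c i • t^i` with `c i ∈ ℝ^d` (sup norm),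
every coefficient satisfies `‖c i‖ ≤ ((3^{n+1} - 1)/√2) * max_{-1 ≤ t ≤ 1} ‖f(t)‖`. -/
theorem stmt_5 (d : ℕ) (hd : 1 ≤ d) (n : ℕ) (c : ℕ → Fin d → ℝ) :
    ∀ i ≤ n, ‖c i‖ ≤ ((3 ^ (n + 1) - 1) / Real.sqrt 2 : ℝ) *
      ⨆ t : Set.Icc (-1 : ℝ) 1,
        ‖∑ i' ∈ Finset.range (n + 1), ((t : ℝ) ^ i') • c i'‖ := by
  intro i hi
  set M : ℝ := ⨆ t : Set.Icc (-1 : ℝ) 1,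
    ‖∑ i' ∈ Finset.range (n + 1), ((t : ℝ) ^ i') • c i'‖ with hMdef
  have hbdd : BddAbove (Set.range fun t : Set.Icc (-1 : ℝ) 1 =>
      ‖∑ i' ∈ Finset.range (n + 1), ((t : ℝ) ^ i') • c i'‖) := by
    refine ⟨∑ i' ∈ Finset.range (n+1), ‖c i'‖, ?_⟩
    rintro x ⟨t, rfl⟩
    refine (norm_sum_le _ _).trans (Finset.sum_le_sum fun i' _ => ?_)
    rw [norm_smul]
    have ht : |(t:ℝ)| ≤ 1 := abs_le.2 ⟨t.2.1, t.2.2⟩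
    have h1 : ‖((t:ℝ)^i')‖ ≤ 1 := by
      rw [Real.norm_eq_abs, abs_pow]
      exact pow_le_one₀ (abs_nonneg _) ht
    exact mul_le_of_le_one_left (norm_nonneg _) h1
  have key : ∀ x ∈ Set.Icc (-1:ℝ) 1,
      ‖∑ i' ∈ Finset.range (n + 1), (x ^ i') • c i'‖ ≤ M := by
    intro x hx
    exact le_ciSup hbdd (⟨x, hx⟩ : Set.Icc (-1:ℝ) 1)
  have hM : 0 ≤ M := le_trans (norm_nonneg _) (key 1 (by norm_num))
  have comp : ∀ j : Fin d, |c i j| ≤ ((3 ^ (n + 1) - 1) / Real.sqrt 2 : ℝ) * M := by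
    intro j
    refine scalar_coeff_bound n (fun m => c m j) M ?_ i hi
    intro x hx
    have h1 : ∑ m ∈ range (n+1), c m j * x ^ m
        = (∑ i' ∈ Finset.range (n + 1), (x ^ i') • c i') j := by
      rw [Finset.sum_apply]
      exact Finset.sum_congr rfl fun m _ => by simp [mul_comm]
    rw [h1, ← Real.norm_eq_abs]
    exact le_trans (norm_le_pi_norm _ j) (key x hx)
  have hnn : 0 ≤ ((3 ^ (n + 1) - 1) / Real.sqrt 2 : ℝ) * M := by
    apply mul_nonneg _ hM
    apply div_nonneg _ (Real.sqrt_nonneg 2)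
    have h3 : (1:ℝ) ≤ 3^(n+1) := one_le_pow₀ (by norm_num)
    linarith
  rw [pi_norm_le_iff_of_nonneg hnn]
  intro j
  rw [Real.norm_eq_abs]
  exact comp j
end

section
/- Let f(u,v) = Σ_{i=0}^{m} Σ_{j=0}^{n} c_{ij} Z_{i,m}(u) Z_{j,n}(v) with coefficients c_{ij} ∈ ℝ², and let P₁ be the convex hull of the set {c_{ij} : 0 ≤ i ≤ m, 0 ≤ j ≤ n}. Then for every y ∈ P₁, ‖y‖ ≤ ξ_B(m) · ξ_B(n) · max_{0 ≤ u,v ≤ 1} ‖f(u,v)‖. -/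
open Finset

open Polynomial in
lemma bern_indep : ∀ (n : ℕ) (a : ℕ → ℝ),
    (∑ i ∈ range (n+1), C (a i) * X ^ i * (1 - X) ^ (n - i)) = 0 → ∀ i ≤ n, a i = 0 := by
  intro n
  induction n with
  | zero =>
    intro a h i hi
    interval_cases i
    have := congrArg (fun p => Polynomial.coeff p 0) h
    simpa using this
  | succ n ih =>
    intro a h i hi
    have h0 : a 0 = 0 := by
      have := congrArg (Polynomial.eval 0) h
      simp only [eval_finset_sum, eval_mul, eval_pow, eval_C, eval_X, eval_sub, eval_one,
        eval_zero] at this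
      rw [Finset.sum_eq_single_of_mem 0 (by simp)] at this
      · simpa using this
      · intro k _ hk
        simp [zero_pow hk]
    have hfac : (∑ i ∈ range (n+2), C (a i) * X ^ i * (1 - X) ^ (n+1-i))
        = C (a 0) * (1 - X) ^ (n+1)
          + X * ∑ i ∈ range (n+1), C (a (i+1)) * X ^ i * (1 - X) ^ (n - i) := by
      rw [Finset.sum_range_succ', Finset.mul_sum]
      rw [add_comm]
      congr 1
      · simp
      · apply Finset.sum_congr rfl
        intro k _
        have : n + 1 - (k+1) = n - k := by omega
        rw [this]; ring
    rw [show n + 1 + 1 = n + 2 from rfl] at h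
    rw [hfac, h0, map_zero, zero_mul, zero_add] at h
    rcases mul_eq_zero.mp h with hX | hs
    · exact absurd hX X_ne_zero
    · rcases Nat.eq_zero_or_pos i with rfl | hip
      · exact h0
      · obtain ⟨i', rfl⟩ : ∃ i', i = i' + 1 := ⟨i - 1, by omega⟩
        exact ih _ hs i' (by omega)

open Polynomial in
lemma bern_coeff_bound (n : ℕ) (b : ℕ → ℝ) (M : ℝ)
    (hM : ∀ t ∈ Set.Icc (0:ℝ) 1, |∑ k ∈ range (n+1), b k * Z n k t| ≤ M) :
    ∀ i ≤ n, |b i| ≤ xiB n * M := by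
  intro i hi
  set F : ℕ → Finset ℕ := fun j => (range (n+1)).erase j with hF
  set node : ℕ → ℝ := fun j => (j:ℝ)/(n:ℝ) with hnode
  set v : ℕ → ℝ := fun j => ∑ k ∈ range (n+1), b k * Z n k (node j) with hv
  set d : ℕ → ℝ := fun j => ∏ l ∈ F j, ((j:ℝ) - (l:ℝ)) with hd
  set fac : ℕ → ℝ[X] :=
    fun l => Polynomial.C ((n:ℝ) - (l:ℝ)) * X - Polynomial.C (l:ℝ) * (1 - X) with hfacdef
  set W : ℕ → ℝ[X] := fun k => X ^ k * (1 - X) ^ (n - k) with hW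
  set P : ℝ[X] := ∑ k ∈ range (n+1), Polynomial.C (b k * (n.choose k : ℝ)) * W k with hP
  set Q : ℝ[X] := ∑ j ∈ range (n+1), Polynomial.C (v j / d j) * ∏ l ∈ F j, fac l with hQ
  have hmem : ∀ {j l : ℕ}, l ∈ F j → l ≤ n ∧ l ≠ j := by
    intro j l hl
    rw [hF] at hl
    simp only [Finset.mem_erase, Finset.mem_range, Nat.lt_succ_iff] at hl
    exact ⟨hl.2, hl.1⟩
  have heval_fac : ∀ {j l : ℕ}, j ≤ n → l ≤ n → (n:ℝ) ≠ 0 →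
      (fac l).eval (node j) = (j:ℝ) - l := by
    intro j l hj hl hn
    simp only [hfacdef, hnode, eval_sub, eval_mul, eval_C, eval_X, eval_one]
    field_simp
    ring
  have hd0 : ∀ j, d j ≠ 0 := by
    intro j
    rw [hd]
    refine Finset.prod_ne_zero_iff.mpr ?_
    intro l hl hzero
    have h2 := (hmem hl).2
    apply h2
    have : (l:ℝ) = j := by linarith [sub_eq_zero.mp hzero]
    exact_mod_cast this
  have hPeval : ∀ t : ℝ, P.eval t = ∑ k ∈ range (n+1), b k * Z n k t := by
    intro t
    rw [hP, eval_finset_sum]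
    refine Finset.sum_congr rfl fun k _ => ?_
    simp only [hW, eval_mul, eval_C, eval_pow, eval_sub, eval_one, eval_X, Z]
    ring
  have hQeval : ∀ j ∈ range (n+1), Q.eval (node j) = v j := by
    intro j hj
    rw [Finset.mem_range, Nat.lt_succ_iff] at hj
    rw [hQ, eval_finset_sum]
    rw [Finset.sum_eq_single_of_mem j (by simp [Nat.lt_succ_iff, hj])]
    · rw [eval_mul, eval_C, eval_prod]
      have hpd : ∏ l ∈ F j, (fac l).eval (node j) = d j := by
        rw [hd]
        refine Finset.prod_congr rfl fun l hl => ?_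
        obtain ⟨hl1, hl2⟩ := hmem hl
        have hn : (n:ℝ) ≠ 0 := by
          have : n ≠ 0 := by omega
          exact_mod_cast this
        exact heval_fac hj hl1 hn
      rw [hpd, div_mul_cancel₀ _ (hd0 j)]
    · intro j' hj' hne
      rw [Finset.mem_range, Nat.lt_succ_iff] at hj'
      rw [eval_mul, eval_prod]
      have hjF : j ∈ F j' := by
        rw [hF]
        simp only [Finset.mem_erase, Finset.mem_range, Nat.lt_succ_iff]
        exact ⟨fun h => hne h.symm, hj⟩
      have hn : (n:ℝ) ≠ 0 := by
        have : n ≠ 0 := by omega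
        exact_mod_cast this
      rw [Finset.prod_eq_zero hjF (by rw [heval_fac hj hj hn]; ring)]
      ring
  have hdeg1 : (1 - X : ℝ[X]).degree ≤ 1 := by
    refine (degree_sub_le _ _).trans ?_
    simp [degree_one, degree_X]
  have hCmul : ∀ (a : ℝ) (p : ℝ[X]) (e : WithBot ℕ), p.degree ≤ e →
      (Polynomial.C a * p).degree ≤ e := by
    intro a p e hp
    rcases eq_or_ne a 0 with rfl | ha
    · simp
    · rw [Polynomial.degree_C_mul ha]; exact hp
  have hcard : ∀ j ∈ range (n+1), (F j).card = n := by
    intro j hj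
    rw [hF, Finset.card_erase_of_mem hj, Finset.card_range]
    omega
  have hWdeg : ∀ k ≤ n, (W k).degree ≤ (n : WithBot ℕ) := by
    intro k hk
    rw [hW]
    refine (degree_mul_le _ _).trans ?_
    have h1 : (X ^ k : ℝ[X]).degree = (k : WithBot ℕ) := degree_X_pow k
    have h2 : ((1 - X : ℝ[X]) ^ (n - k)).degree ≤ ((n - k : ℕ) : WithBot ℕ) := by
      have := Polynomial.degree_pow_le_of_le (n - k) hdeg1
      simpa using this
    rw [h1]
    refine le_trans (add_le_add_right h2 _) ?_
    rw [← Nat.cast_add]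
    exact_mod_cast Nat.le_of_eq (by omega)
  have hPdeg : P.degree < ((range (n+1)).card : WithBot ℕ) := by
    rw [Finset.card_range]
    refine lt_of_le_of_lt ?_ (by exact_mod_cast Nat.lt_succ_self n : (n : WithBot ℕ) < (n+1 : ℕ))
    rw [hP]
    refine (Polynomial.degree_sum_le _ _).trans (Finset.sup_le fun k hk => ?_)
    rw [Finset.mem_range, Nat.lt_succ_iff] at hk
    exact hCmul _ _ _ (hWdeg k hk)
  have hfacdeg : ∀ l, (fac l).degree ≤ 1 := by
    intro l
    rw [hfacdef]
    refine (degree_sub_le _ _).trans (max_le ?_ ?_)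
    · exact hCmul _ _ _ (by simpa using degree_X_le)
    · exact hCmul _ _ _ hdeg1
  have hQdeg : Q.degree < ((range (n+1)).card : WithBot ℕ) := by
    rw [Finset.card_range]
    refine lt_of_le_of_lt ?_ (by exact_mod_cast Nat.lt_succ_self n : (n : WithBot ℕ) < (n+1 : ℕ))
    rw [hQ]
    refine (Polynomial.degree_sum_le _ _).trans (Finset.sup_le fun j hj => ?_)
    refine hCmul _ _ _ ?_
    refine (Polynomial.degree_prod_le _ _).trans ?_
    refine le_trans (Finset.sum_le_sum fun l _ => hfacdeg l) ?_
    rw [Finset.sum_const, hcard j hj]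
    simp [nsmul_eq_mul]
  have hinj : Set.InjOn node (range (n+1) : Finset ℕ) := by
    intro a ha b' hb hab
    simp only [Finset.coe_range, Set.mem_Iio] at ha hb
    rcases Nat.eq_zero_or_pos n with rfl | hn
    · omega
    · have hnR : (n:ℝ) ≠ 0 := by positivity
      rw [hnode] at hab
      have : (a:ℝ) = b' := by
        field_simp at hab
        exact_mod_cast hab
      exact_mod_cast this
  have hPQ : P = Q := by
    refine Polynomial.eq_of_degrees_lt_of_eval_index_eq (v := node) (range (n+1)) hinj
      hPdeg hQdeg fun j hj => ?_
    rw [hPeval, hQeval j hj]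
  -- expansion of the product into Bernstein form
  have hsplit : ∀ l : ℕ, fac l
      = (Polynomial.C ((n:ℝ) - l) * X) + (Polynomial.C (-(l:ℝ)) * (1 - X)) := by
    intro l
    rw [hfacdef]
    simp only [map_neg]
    ring
  have hprodexp : ∀ j ∈ range (n+1), ∏ l ∈ F j, fac l
      = ∑ i' ∈ range (n+1), ∑ S ∈ powersetCard i' (F j),
          Polynomial.C ((∏ l ∈ S, ((n:ℝ) - l)) * ∏ l ∈ F j \ S, (-(l:ℝ))) * W i' := by
    intro j hj
    calc ∏ l ∈ F j, fac l
        = ∑ S ∈ (F j).powerset, (∏ l ∈ S, Polynomial.C ((n:ℝ) - l) * X)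
            * ∏ l ∈ F j \ S, (Polynomial.C (-(l:ℝ)) * (1 - X)) := by
          simp_rw [hsplit]
          exact Finset.prod_add _ _ _
      _ = ∑ i' ∈ range (n+1), ∑ S ∈ powersetCard i' (F j),
            (∏ l ∈ S, Polynomial.C ((n:ℝ) - l) * X)
              * ∏ l ∈ F j \ S, (Polynomial.C (-(l:ℝ)) * (1 - X)) := by
          rw [Finset.sum_powerset, hcard j hj]
      _ = _ := by
          refine Finset.sum_congr rfl fun i' hi' => Finset.sum_congr rfl fun S hS => ?_
          obtain ⟨hSsub, hScard⟩ := Finset.mem_powersetCard.mp hS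
          have hcards : (F j \ S).card = n - i' := by
            rw [Finset.card_sdiff_of_subset hSsub, hcard j hj, hScard]
          rw [Finset.prod_mul_distrib, Finset.prod_mul_distrib, Finset.prod_const,
            Finset.prod_const, hScard, hcards, ← map_prod, ← map_prod, hW, map_mul]
          ring
  set q : ℕ → ℝ := fun i' => ∑ j ∈ range (n+1), (v j / d j)
      * ∑ S ∈ powersetCard i' (F j), (∏ l ∈ S, ((n:ℝ) - l)) * ∏ l ∈ F j \ S, (-(l:ℝ)) with hq
  have hQform : Q = ∑ i' ∈ range (n+1), Polynomial.C (q i') * W i' := by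
    rw [hQ]
    calc ∑ j ∈ range (n+1), Polynomial.C (v j / d j) * ∏ l ∈ F j, fac l
        = ∑ j ∈ range (n+1), ∑ i' ∈ range (n+1),
            Polynomial.C ((v j / d j) * ∑ S ∈ powersetCard i' (F j),
              (∏ l ∈ S, ((n:ℝ) - l)) * ∏ l ∈ F j \ S, (-(l:ℝ))) * W i' := by
          refine Finset.sum_congr rfl fun j hj => ?_
          rw [hprodexp j hj, Finset.mul_sum]
          refine Finset.sum_congr rfl fun i' _ => ?_
          rw [← Finset.sum_mul, ← map_sum, ← mul_assoc, ← map_mul]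
      _ = ∑ i' ∈ range (n+1), ∑ j ∈ range (n+1),
            Polynomial.C ((v j / d j) * ∑ S ∈ powersetCard i' (F j),
              (∏ l ∈ S, ((n:ℝ) - l)) * ∏ l ∈ F j \ S, (-(l:ℝ))) * W i' :=
          Finset.sum_comm
      _ = _ := by
          refine Finset.sum_congr rfl fun i' _ => ?_
          rw [← Finset.sum_mul, ← map_sum, hq]
  have hcoef : b i * (n.choose i : ℝ) = q i := by
    have hzero : ∑ k ∈ range (n+1),
        Polynomial.C (b k * (n.choose k : ℝ) - q k) * X ^ k * (1 - X) ^ (n - k) = 0 := by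
      have : ∑ k ∈ range (n+1), Polynomial.C (b k * (n.choose k : ℝ) - q k) * X ^ k
          * (1 - X) ^ (n - k)
          = P - (∑ i' ∈ range (n+1), Polynomial.C (q i') * W i') := by
        rw [hP, ← Finset.sum_sub_distrib]
        refine Finset.sum_congr rfl fun k _ => ?_
        rw [map_sub, hW]
        ring
      rw [this, ← hQform, ← hPQ, sub_self]
    have := bern_indep n _ hzero i hi
    linarith
  -- now the bound
  have hM0 : 0 ≤ M := le_trans (abs_nonneg _) (hM 0 (by norm_num))
  have hchoose_pos : (0:ℝ) < (n.choose i : ℝ) := by exact_mod_cast Nat.choose_pos hi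
  have hnode_mem : ∀ j, j ≤ n → node j ∈ Set.Icc (0:ℝ) 1 := by
    intro j hj
    rw [hnode]
    constructor
    · positivity
    · rcases Nat.eq_zero_or_pos n with rfl | hn
      · have : j = 0 := by omega
        simp [this]
      · rw [div_le_one (by exact_mod_cast hn)]
        exact_mod_cast hj
  have hvM : ∀ j, j ≤ n → |v j| ≤ M := fun j hj => hM _ (hnode_mem j hj)
  have hMax : ∀ j, ∀ S ∈ powersetCard i (F j),
      |(∏ l ∈ S, ((n:ℝ) - l)) * ∏ l ∈ F j \ S, (-(l:ℝ))|
        ≤ ∏ l ∈ F j, max |(n:ℝ) - (l:ℝ)| |(l:ℝ)| := by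
    intro j S hS
    obtain ⟨hSsub, hScard⟩ := Finset.mem_powersetCard.mp hS
    rw [abs_mul, Finset.abs_prod, Finset.abs_prod, ← Finset.prod_sdiff hSsub]
    rw [mul_comm (∏ l ∈ S, |(n:ℝ) - l|)]
    refine mul_le_mul ?_ ?_ (Finset.prod_nonneg fun l _ => abs_nonneg _)
      (Finset.prod_nonneg fun l _ => le_trans (abs_nonneg _) (le_max_left _ _))
    · refine Finset.prod_le_prod (fun l _ => abs_nonneg _) fun l _ => ?_
      rw [abs_neg]
      exact le_max_right _ _
    · exact Finset.prod_le_prod (fun l _ => abs_nonneg _) fun l _ => le_max_left _ _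
  have hq_bound : |q i| ≤ xiB n * M * (n.choose i : ℝ) := by
    rw [hq]
    refine le_trans (Finset.abs_sum_le_sum_abs _ _) ?_
    have hterm : ∀ j ∈ range (n+1),
        |(v j / d j) * ∑ S ∈ powersetCard i (F j),
            (∏ l ∈ S, ((n:ℝ) - l)) * ∏ l ∈ F j \ S, (-(l:ℝ))|
          ≤ (∏ l ∈ F j, max |(n:ℝ) - (l:ℝ)| |(l:ℝ)| / |(j:ℝ) - (l:ℝ)|)
              * M * (n.choose i : ℝ) := by
      intro j hj
      rw [Finset.mem_range, Nat.lt_succ_iff] at hj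
      have hdabs : 0 < |d j| := abs_pos.mpr (hd0 j)
      have h1 : |∑ S ∈ powersetCard i (F j),
          (∏ l ∈ S, ((n:ℝ) - l)) * ∏ l ∈ F j \ S, (-(l:ℝ))|
            ≤ (n.choose i : ℝ) * ∏ l ∈ F j, max |(n:ℝ) - (l:ℝ)| |(l:ℝ)| := by
        refine le_trans (Finset.abs_sum_le_sum_abs _ _) ?_
        refine le_trans (Finset.sum_le_card_nsmul _ _ _ fun S hS => hMax j S hS) ?_
        rw [Finset.card_powersetCard, hcard j (Finset.mem_range.mpr (by omega))]
        rw [nsmul_eq_mul]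
      have hprodmax : (0:ℝ) ≤ ∏ l ∈ F j, max |(n:ℝ) - (l:ℝ)| |(l:ℝ)| :=
        Finset.prod_nonneg fun l _ => le_trans (abs_nonneg _) (le_max_left _ _)
      have h2 : |v j / d j| ≤ M / |d j| := by
        rw [abs_div]
        exact (div_le_div_iff_of_pos_right hdabs).mpr (hvM j hj)
      calc |(v j / d j) * ∑ S ∈ powersetCard i (F j),
            (∏ l ∈ S, ((n:ℝ) - l)) * ∏ l ∈ F j \ S, (-(l:ℝ))|
          = |v j / d j| * |∑ S ∈ powersetCard i (F j),
              (∏ l ∈ S, ((n:ℝ) - l)) * ∏ l ∈ F j \ S, (-(l:ℝ))| := abs_mul _ _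
        _ ≤ (M / |d j|) * ((n.choose i : ℝ) * ∏ l ∈ F j, max |(n:ℝ) - (l:ℝ)| |(l:ℝ)|) := by
            refine mul_le_mul h2 h1 (abs_nonneg _) (by positivity)
        _ = (∏ l ∈ F j, max |(n:ℝ) - (l:ℝ)| |(l:ℝ)| / |(j:ℝ) - (l:ℝ)|)
              * M * (n.choose i : ℝ) := by
            rw [Finset.prod_div_distrib]
            have hdd : ∏ l ∈ F j, |(j:ℝ) - (l:ℝ)| = |d j| := by
              rw [hd, Finset.abs_prod]
            rw [hdd]
            field_simp
    refine le_trans (Finset.sum_le_sum hterm) (le_of_eq ?_)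
    simp only [hF]
    rw [xiB, ← Finset.sum_mul, ← Finset.sum_mul]
  have hfin : |b i| * (n.choose i : ℝ) ≤ xiB n * M * (n.choose i : ℝ) := by
    calc |b i| * (n.choose i : ℝ) = |b i * (n.choose i : ℝ)| := by
          rw [abs_mul, abs_of_pos hchoose_pos]
      _ = |q i| := by rw [hcoef]
      _ ≤ xiB n * M * (n.choose i : ℝ) := hq_bound
  exact le_of_mul_le_mul_right hfin hchoose_pos


/-- for `f(u,v) = ∑_{i=0}^m ∑_{j=0}^n c i j • Z_{i,m}(u) Z_{j,n}(v)` with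
`c i j ∈ ℝ²` (sup norm), every point `y` of the convex hull `P₁` of the coefficients
satisfies `‖y‖ ≤ ξ_B(m) ξ_B(n) * max_{0 ≤ u,v ≤ 1} ‖f(u,v)‖`. -/
theorem stmt_6 (m n : ℕ) (c : ℕ → ℕ → Fin 2 → ℝ) :
    ∀ y ∈ convexHull ℝ {x : Fin 2 → ℝ | ∃ i ≤ m, ∃ j ≤ n, x = c i j},
      ‖y‖ ≤ xiB m * xiB n *
        ⨆ uv : Set.Icc (0 : ℝ) 1 × Set.Icc (0 : ℝ) 1,
          ‖∑ i ∈ Finset.range (m + 1), ∑ j ∈ Finset.range (n + 1),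
            (Z m i (uv.1 : ℝ) * Z n j (uv.2 : ℝ)) • c i j‖ := by
  intro y hy
  set M : ℝ := ⨆ uv : Set.Icc (0 : ℝ) 1 × Set.Icc (0 : ℝ) 1,
      ‖∑ i ∈ Finset.range (m + 1), ∑ j ∈ Finset.range (n + 1),
        (Z m i (uv.1 : ℝ) * Z n j (uv.2 : ℝ)) • c i j‖ with hMdef
  have hZcont : ∀ (N k : ℕ), Continuous (Z N k) := by
    intro N k
    unfold Z
    fun_prop
  have hcont : Continuous (fun uv : Set.Icc (0:ℝ) 1 × Set.Icc (0:ℝ) 1 =>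
      ‖∑ i ∈ Finset.range (m + 1), ∑ j ∈ Finset.range (n + 1),
        (Z m i (uv.1 : ℝ) * Z n j (uv.2 : ℝ)) • c i j‖) := by
    refine Continuous.norm ?_
    refine continuous_finset_sum _ fun i _ => continuous_finset_sum _ fun j _ => ?_
    refine Continuous.smul (f := fun uv : Set.Icc (0:ℝ) 1 × Set.Icc (0:ℝ) 1 => Z m i (uv.1 : ℝ) * Z n j (uv.2 : ℝ))
      (g := fun _ => c i j) ?_ continuous_const
    exact ((hZcont m i).comp (continuous_subtype_val.comp continuous_fst)).mul
      ((hZcont n j).comp (continuous_subtype_val.comp continuous_snd))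
  have hbdd : BddAbove (Set.range fun uv : Set.Icc (0:ℝ) 1 × Set.Icc (0:ℝ) 1 =>
      ‖∑ i ∈ Finset.range (m + 1), ∑ j ∈ Finset.range (n + 1),
        (Z m i (uv.1 : ℝ) * Z n j (uv.2 : ℝ)) • c i j‖) :=
    (isCompact_range hcont).bddAbove
  have hle : ∀ (u v : ℝ) (hu : u ∈ Set.Icc (0:ℝ) 1) (hv : v ∈ Set.Icc (0:ℝ) 1),
      ‖∑ i ∈ Finset.range (m + 1), ∑ j ∈ Finset.range (n + 1),
        (Z m i u * Z n j v) • c i j‖ ≤ M := by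
    intro u v hu hv
    exact le_ciSup hbdd (⟨⟨u, hu⟩, ⟨v, hv⟩⟩ : Set.Icc (0:ℝ) 1 × Set.Icc (0:ℝ) 1)
  have hM0 : 0 ≤ M :=
    le_trans (norm_nonneg _) (hle 0 0 (by norm_num) (by norm_num))
  have hxi : ∀ N : ℕ, 0 ≤ xiB N := by
    intro N
    unfold xiB
    refine Finset.sum_nonneg fun i _ => Finset.prod_nonneg fun j _ => div_nonneg ?_ (abs_nonneg _)
    exact le_trans (abs_nonneg _) (le_max_left _ _)
  have habs : ∀ (u v : ℝ) (d : Fin 2),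
      |∑ i ∈ Finset.range (m + 1), (∑ j ∈ Finset.range (n + 1), c i j d * Z n j v) * Z m i u|
        ≤ ‖∑ i ∈ Finset.range (m + 1), ∑ j ∈ Finset.range (n + 1),
            (Z m i u * Z n j v) • c i j‖ := by
    intro u v d
    have heq : ∑ i ∈ Finset.range (m + 1),
        (∑ j ∈ Finset.range (n + 1), c i j d * Z n j v) * Z m i u
        = (∑ i ∈ Finset.range (m + 1), ∑ j ∈ Finset.range (n + 1),
            (Z m i u * Z n j v) • c i j) d := by
      rw [Finset.sum_apply]
      refine Finset.sum_congr rfl fun i _ => ?_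
      rw [Finset.sum_apply, Finset.sum_mul]
      refine Finset.sum_congr rfl fun j _ => ?_
      simp [Pi.smul_apply, smul_eq_mul]
      ring
    rw [heq, ← Real.norm_eq_abs]
    exact norm_le_pi_norm _ d
  have hcoefbd : ∀ i ≤ m, ∀ j ≤ n, ∀ d : Fin 2, |c i j d| ≤ xiB m * xiB n * M := by
    intro i hi j hj d
    have h1 : ∀ v ∈ Set.Icc (0:ℝ) 1, ∀ i' ≤ m,
        |∑ j' ∈ Finset.range (n + 1), c i' j' d * Z n j' v| ≤ xiB m * M := by
      intro v hv i' hi'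
      refine bern_coeff_bound m
        (fun i'' => ∑ j' ∈ Finset.range (n + 1), c i'' j' d * Z n j' v) M ?_ i' hi'
      intro u hu
      exact le_trans (habs u v d) (hle u v hu hv)
    have h2 : |c i j d| ≤ xiB n * (xiB m * M) := by
      refine bern_coeff_bound n (fun j' => c i j' d) (xiB m * M) ?_ j hj
      intro v hv
      exact h1 v hv i hi
    calc |c i j d| ≤ xiB n * (xiB m * M) := h2
      _ = xiB m * xiB n * M := by ring
  have hsub : {x : Fin 2 → ℝ | ∃ i ≤ m, ∃ j ≤ n, x = c i j}
      ⊆ Metric.closedBall 0 (xiB m * xiB n * M) := by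
    rintro x ⟨i, hi, j, hj, rfl⟩
    rw [Metric.mem_closedBall, dist_zero_right]
    refine (pi_norm_le_iff_of_nonneg (mul_nonneg (mul_nonneg (hxi m) (hxi n)) hM0)).mpr fun d => ?_
    rw [Real.norm_eq_abs]
    exact hcoefbd i hi j hj d
  have := convexHull_min hsub (convex_closedBall _ _) hy
  rw [Metric.mem_closedBall, dist_zero_right] at this
  exact this
end

section
/- Let f(u,v) = Σ_{i=0}^{m} Σ_{j=0}^{n} c_{ij} u^i v^j with coefficients c_{ij} ∈ ℝ², and let P₂ = { c_{00} + Σ_{(i,j): i+j > 0} s_{ij} c_{ij} : −1 ≤ s_{ij} ≤ 1 }. Then for every y ∈ P₂, ‖y‖ ≤ ((m+1)(n+1)(3^{m+1} − 1)(3^{n+1} − 1)/2) · max_{−1 ≤ u,v ≤ 1} ‖f(u,v)‖. -/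
open Finset Real MeasureTheory intervalIntegral

namespace Stmt7

/-- Coefficients of Chebyshev-like polynomials: `cos (j θ) = ∑ i, cheb j i * (cos θ)^i`. -/
def cheb : ℕ → ℕ → ℝ
  | 0 => fun i => if i = 0 then 1 else 0
  | 1 => fun i => if i = 1 then 1 else 0
  | (j+2) => fun i => 2 * (if i = 0 then 0 else cheb (j+1) (i-1)) - cheb j i

lemma cheb_support : ∀ j i, j < i → cheb j i = 0 := by
  intro j
  induction j using Nat.twoStepInduction with
  | zero => intro i hi; simp [cheb]; omega
  | one => intro i hi; simp [cheb]; omega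
  | more j ih1 ih2 =>
    intro i hi
    have h1 : cheb j i = 0 := ih1 i (by omega)
    rcases Nat.eq_zero_or_pos i with h | h
    · omega
    · have h2 : cheb (j+1) (i-1) = 0 := ih2 (i-1) (by omega)
      simp [cheb, h1, h2, show ¬ i = 0 by omega]

lemma cheb_cos : ∀ j (θ : ℝ), ∑ i ∈ range (j+1), cheb j i * cos θ ^ i = cos (j * θ) := by
  intro j
  induction j using Nat.twoStepInduction with
  | zero => intro θ; simp [cheb]
  | one => intro θ; simp [cheb]
  | more j ih1 ih2 =>
    intro θ
    have key : ∀ x : ℝ, ∑ i ∈ range (j+3), (2 * (if i = 0 then 0 else cheb (j+1) (i-1)) - cheb j i) * x ^ i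
        = 2 * x * (∑ i ∈ range (j+2), cheb (j+1) i * x ^ i) - ∑ i ∈ range (j+1), cheb j i * x ^ i := by
      intro x
      simp only [sub_mul]
      rw [Finset.sum_sub_distrib]
      congr 1
      · rw [Finset.sum_range_succ' (fun i => 2 * (if i = 0 then 0 else cheb (j+1) (i-1)) * x ^ i)]
        simp only [if_neg (Nat.succ_ne_zero _), Nat.add_sub_cancel, if_pos rfl]
        rw [Finset.mul_sum]
        simp [pow_succ]
        ring_nf
        apply Finset.sum_congr rfl
        intro i _
        ring
      · rw [Finset.sum_range_succ, Finset.sum_range_succ,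
          cheb_support j (j+1) (by omega), cheb_support j (j+2) (by omega)]
        ring
    have : ∀ i ∈ range (j+3), cheb (j+2) i * cos θ ^ i
        = (2 * (if i = 0 then 0 else cheb (j+1) (i-1)) - cheb j i) * cos θ ^ i := by
      intro i _; rfl
    rw [Finset.sum_congr rfl this, key, ih2, ih1]
    have c1 : cos ((j+2 : ℕ) * θ) = cos ((j+1 : ℕ) * θ) * cos θ - sin ((j+1 : ℕ) * θ) * sin θ := by
      push_cast
      rw [show ((j:ℝ)+2) * θ = ((j:ℝ)+1) * θ + θ by ring, cos_add]
    have c2 : cos ((j : ℕ) * θ) = cos ((j+1 : ℕ) * θ) * cos θ + sin ((j+1 : ℕ) * θ) * sin θ := by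
      push_cast
      rw [show (j:ℝ) * θ = ((j:ℝ)+1) * θ - θ by ring, cos_sub]
    rw [c1, c2]; ring

lemma cheb_bound : ∀ j, ∑ i ∈ range (j+1), |cheb j i| ≤ 3 ^ j := by
  intro j
  induction j using Nat.twoStepInduction with
  | zero => simp [cheb]
  | one => norm_num [cheb, Finset.sum_range_succ]
  | more j ih1 ih2 =>
    have key : ∑ i ∈ range (j+3), |cheb (j+2) i|
        ≤ 2 * ∑ i ∈ range (j+2), |cheb (j+1) i| + ∑ i ∈ range (j+1), |cheb j i| := by
      have h1 : ∀ i ∈ range (j+3), |cheb (j+2) i|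
          ≤ 2 * |if i = 0 then 0 else cheb (j+1) (i-1)| + |cheb j i| := by
        intro i _
        show |2 * (if i = 0 then 0 else cheb (j+1) (i-1)) - cheb j i| ≤ _
        calc |2 * (if i = 0 then 0 else cheb (j+1) (i-1)) - cheb j i|
            ≤ |2 * (if i = 0 then 0 else cheb (j+1) (i-1))| + |cheb j i| := abs_sub _ _
          _ = 2 * |if i = 0 then 0 else cheb (j+1) (i-1)| + |cheb j i| := by
              rw [abs_mul]; norm_num
      calc ∑ i ∈ range (j+3), |cheb (j+2) i|
          ≤ ∑ i ∈ range (j+3), (2 * |if i = 0 then 0 else cheb (j+1) (i-1)| + |cheb j i|) :=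
            Finset.sum_le_sum h1
        _ = 2 * ∑ i ∈ range (j+3), |if i = 0 then 0 else cheb (j+1) (i-1)|
            + ∑ i ∈ range (j+3), |cheb j i| := by rw [sum_add_distrib, Finset.mul_sum]
        _ = 2 * ∑ i ∈ range (j+2), |cheb (j+1) i| + ∑ i ∈ range (j+1), |cheb j i| := by
            congr 1
            · congr 1
              rw [Finset.sum_range_succ' (fun i => |if i = 0 then 0 else cheb (j+1) (i-1)|)]
              simp
            · rw [Finset.sum_range_succ, Finset.sum_range_succ,
                cheb_support j (j+1) (by omega), cheb_support j (j+2) (by omega)]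
              simp
    calc ∑ i ∈ range (j+3), |cheb (j+2) i| ≤ _ := key
      _ ≤ 2 * 3 ^ (j+1) + 3 ^ j := by linarith
      _ ≤ 3 ^ (j+2) := by
          have e1 : (3:ℝ) ^ (j+1) = 3 ^ j * 3 := pow_succ 3 j
          have e2 : (3:ℝ) ^ (j+2) = 3 ^ (j+1) * 3 := pow_succ 3 (j+1)
          nlinarith [pow_nonneg (by norm_num : (0:ℝ) ≤ 3) j]

lemma cospow_expand : ∀ l : ℕ, ∃ e : ℕ → ℝ, (∀ j, l < j → e j = 0) ∧
    ∀ θ : ℝ, cos θ ^ l = ∑ j ∈ range (l+1), e j * cos (j * θ) := by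
  intro l
  induction l with
  | zero => exact ⟨fun j => if j = 0 then 1 else 0, by intro j hj; simp; omega, by simp⟩
  | succ l ih =>
    obtain ⟨e, hsupp, hrep⟩ := ih
    refine ⟨fun j => (if j = 0 then 0 else e (j-1))/2 + e (j+1)/2 + (if j = 1 then e 0/2 else 0),
      ?_, ?_⟩
    · intro j hj
      have h1 : e (j-1) = 0 := hsupp _ (by omega)
      have h2 : e (j+1) = 0 := hsupp _ (by omega)
      simp [h1, h2, show ¬ j = 1 by omega, show ¬ j = 0 by omega]
    · intro θ
      have hmul : ∀ j : ℕ, cos (j*θ) * cos θ = (cos ((j+1 : ℕ)*θ) + cos (((j:ℝ)-1)*θ))/2 := by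
        intro j
        push_cast
        rw [show ((j:ℝ)+1)*θ = j*θ + θ by ring, show ((j:ℝ)-1)*θ = j*θ - θ by ring,
          cos_add, cos_sub]
        ring
      have step1 : cos θ ^ (l+1)
          = ∑ j ∈ range (l+1), e j * ((cos ((j+1 : ℕ)*θ) + cos (((j:ℝ)-1)*θ))/2) := by
        rw [pow_succ, hrep θ, Finset.sum_mul]
        exact Finset.sum_congr rfl fun j _ => by rw [mul_assoc, hmul j]
      have step2 : cos θ ^ (l+1)
          = (∑ j ∈ range (l+1), e j * cos ((j+1 : ℕ)*θ))/2
            + (∑ j ∈ range (l+1), e j * cos (((j:ℝ)-1)*θ))/2 := by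
        rw [step1, Finset.sum_div, Finset.sum_div, ← Finset.sum_add_distrib]
        exact Finset.sum_congr rfl fun j _ => by ring
      -- first sum: reindex
      have S1 : ∑ j ∈ range (l+1), e j * cos ((j+1 : ℕ)*θ)
          = ∑ j ∈ range (l+2), (if j = 0 then 0 else e (j-1)) * cos (j*θ) := by
        rw [Finset.sum_range_succ' (fun j => (if j = 0 then 0 else e (j-1)) * cos ((j : ℕ)*θ))]
        simp
      -- second sum: peel j = 0
      have S2 : ∑ j ∈ range (l+1), e j * cos (((j:ℝ)-1)*θ)
          = e 0 * cos θ + ∑ j ∈ range (l+2), e (j+1) * cos ((j : ℕ)*θ) := by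
        rw [Finset.sum_range_succ' (fun j => e j * cos (((j:ℝ)-1)*θ))]
        have ha : ∀ j ∈ range l, e (j+1) * cos ((((j+1:ℕ):ℝ)-1)*θ)
            = e (j+1) * cos ((j : ℕ)*θ) := by
          intro j _
          have : (((j+1:ℕ):ℝ)-1) = ((j:ℕ):ℝ) := by push_cast; ring
          rw [this]
        rw [Finset.sum_congr rfl ha]
        have hb : ∑ j ∈ range l, e (j+1) * cos ((j : ℕ)*θ)
            = ∑ j ∈ range (l+2), e (j+1) * cos ((j : ℕ)*θ) := by
          apply Finset.sum_subset (by intro x hx; simp at hx ⊢; omega)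
          intro j _ hj
          simp only [Finset.mem_range, not_lt] at hj
          rw [hsupp (j+1) (by omega)]
          ring
        rw [hb]
        rw [show ((((0:ℕ):ℝ))-1)*θ = -θ by push_cast; ring, cos_neg]
        ring
      rw [step2, S1, S2]
      have peel : ∑ j ∈ range (l+2), (if j = 1 then e 0/2 else 0) * cos ((j:ℕ)*θ)
          = e 0 * cos θ / 2 := by
        rw [Finset.sum_eq_single 1]
        · simp; ring
        · intro j _ hj; simp [hj]
        · intro h; exact absurd (Finset.mem_range.mpr (by omega)) h
      have T1 : ∑ j ∈ range (l+2), (if j = 0 then 0 else e (j-1))/2 * cos ((j:ℕ)*θ)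
          = (∑ j ∈ range (l+2), (if j = 0 then 0 else e (j-1)) * cos ((j:ℕ)*θ))/2 := by
        rw [Finset.sum_div]; exact Finset.sum_congr rfl fun j _ => by ring
      have T2 : ∑ j ∈ range (l+2), e (j+1)/2 * cos ((j:ℕ)*θ)
          = (∑ j ∈ range (l+2), e (j+1) * cos ((j:ℕ)*θ))/2 := by
        rw [Finset.sum_div]; exact Finset.sum_congr rfl fun j _ => by ring
      simp only [add_mul]
      rw [Finset.sum_add_distrib, Finset.sum_add_distrib, peel, T1, T2]
      ring

lemma integral_cos_smul (r : ℝ) : ∫ θ in (0:ℝ)..π, cos (r*θ) = if r = 0 then π else sin (r*π)/r := by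
  by_cases h : r = 0
  · simp [h]
  · rw [if_neg h]
    rw [intervalIntegral.integral_comp_mul_left (fun x => cos x) h]
    rw [integral_cos]
    simp [h, div_eq_inv_mul]

lemma orth (j k : ℕ) : (∫ θ in (0:ℝ)..π, cos ((j:ℝ)*θ) * cos ((k:ℝ)*θ))
    = if j = k then (if k = 0 then π else π/2) else 0 := by
  have key : ∀ θ:ℝ, cos ((j:ℝ)*θ) * cos ((k:ℝ)*θ)
      = (cos (((j:ℝ)+k)*θ))/2 + (cos (((j:ℝ)-k)*θ))/2 := by
    intro θ
    rw [show ((j:ℝ)+k)*θ = (j:ℝ)*θ + (k:ℝ)*θ by ring,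
      show ((j:ℝ)-k)*θ = (j:ℝ)*θ - (k:ℝ)*θ by ring, cos_add, cos_sub]
    ring
  have i1 : IntervalIntegrable (fun θ => (cos (((j:ℝ)+k)*θ))/2) volume 0 π := by
    apply Continuous.intervalIntegrable; fun_prop
  have i2 : IntervalIntegrable (fun θ => (cos (((j:ℝ)-k)*θ))/2) volume 0 π := by
    apply Continuous.intervalIntegrable; fun_prop
  rw [intervalIntegral.integral_congr (g := fun θ => (cos (((j:ℝ)+k)*θ))/2 + (cos (((j:ℝ)-k)*θ))/2)
    (fun θ _ => key θ)]
  rw [intervalIntegral.integral_add i1 i2, intervalIntegral.integral_div,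
    intervalIntegral.integral_div, integral_cos_smul, integral_cos_smul]
  by_cases hjk : j = k
  · subst hjk
    by_cases h0 : j = 0
    · subst h0; norm_num
    · have hne : ((j:ℝ)+j) ≠ 0 := by
        have : (0:ℝ) < j := by exact_mod_cast Nat.pos_of_ne_zero h0
        linarith
      rw [if_neg hne, if_pos (by ring)]
      rw [if_pos rfl, if_neg h0]
      have : sin (((j:ℝ)+j)*π) = 0 := by
        rw [show ((j:ℝ)+j)*π = ((2*j : ℕ):ℝ)*π by push_cast; ring]
        exact sin_nat_mul_pi (2*j)
      rw [this]
      norm_num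
  · have hne1 : ((j:ℝ)+k) ≠ 0 := by
      have : j + k ≠ 0 := by omega
      have : (0:ℝ) < ((j+k : ℕ):ℝ) := by exact_mod_cast Nat.pos_of_ne_zero this
      push_cast at this
      linarith
    have hne2 : ((j:ℝ)-k) ≠ 0 := by
      rw [sub_ne_zero]
      exact_mod_cast fun h => hjk (Nat.cast_injective h)
    rw [if_neg hne1, if_neg hne2, if_neg hjk]
    have e1 : sin (((j:ℝ)+k)*π) = 0 := by
      rw [show ((j:ℝ)+k)*π = ((j+k : ℕ):ℝ)*π by push_cast; ring]
      exact sin_nat_mul_pi (j+k)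
    have e2 : sin (((j:ℝ)-k)*π) = 0 := by
      rw [show ((j:ℝ)-k)*π = (((j:ℤ)-k : ℤ):ℝ)*π by push_cast; ring]
      exact sin_int_mul_pi ((j:ℤ)-(k:ℤ))
    rw [e1, e2]
    norm_num

lemma poly_coeff_zero (N : ℕ) (g : ℕ → ℝ)
    (h : ∀ x ∈ Set.Icc (-1:ℝ) 1, ∑ i ∈ range N, g i * x ^ i = 0) : ∀ i < N, g i = 0 := by
  set P : Polynomial ℝ := ∑ i ∈ range N, Polynomial.C (g i) * Polynomial.X ^ i with hP
  have heval : ∀ x ∈ Set.Icc (-1:ℝ) 1, P.eval x = 0 := by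
    intro x hx
    rw [hP]
    simp only [Polynomial.eval_finset_sum, Polynomial.eval_mul, Polynomial.eval_C,
      Polynomial.eval_pow, Polynomial.eval_X]
    exact h x hx
  have hP0 : P = 0 := by
    apply Polynomial.eq_zero_of_infinite_isRoot
    exact (Set.Icc_infinite (by norm_num : (-1:ℝ) < 1)).mono (fun x hx => heval x hx)
  intro i hi
  have hc : P.coeff i = g i := by
    rw [hP, Polynomial.finset_sum_coeff]
    simp only [Polynomial.coeff_C_mul, Polynomial.coeff_X_pow]
    rw [Finset.sum_eq_single i]
    · simp
    · intro j _ hj; simp [Ne.symm hj]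
    · intro hmem; exact absurd (Finset.mem_range.mpr hi) hmem
  rw [← hc, hP0]
  simp

lemma oneD (m : ℕ) (M : ℝ) (a : ℕ → ℝ)
    (h : ∀ x ∈ Set.Icc (-1:ℝ) 1, |∑ i ∈ range (m+1), a i * x ^ i| ≤ M) :
    ∀ i ∈ range (m+1), |a i| ≤ 2 * (∑ j ∈ range (m+1), |cheb j i|) * M := by
  have hM0 : 0 ≤ M := le_trans (abs_nonneg _) (h 0 (by norm_num))
  choose E hEsupp hErep using cospow_expand
  set b : ℕ → ℝ := fun j => ∑ l ∈ range (m+1), a l * E l j with hb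
  have hb_rep : ∀ θ : ℝ, ∑ i ∈ range (m+1), a i * cos θ ^ i
      = ∑ j ∈ range (m+1), b j * cos ((j:ℝ)*θ) := by
    intro θ
    calc ∑ i ∈ range (m+1), a i * cos θ ^ i
        = ∑ l ∈ range (m+1), ∑ j ∈ range (m+1), a l * (E l j * cos ((j:ℝ)*θ)) := by
          apply Finset.sum_congr rfl
          intro l hl
          rw [hErep l θ, Finset.mul_sum]
          apply Finset.sum_subset (Finset.range_subset_range.mpr (by simp at hl; omega))
          intro j _ hj
          simp only [Finset.mem_range, not_lt] at hj
          rw [hEsupp l j (by omega)]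
          ring
      _ = ∑ j ∈ range (m+1), ∑ l ∈ range (m+1), a l * (E l j * cos ((j:ℝ)*θ)) :=
          Finset.sum_comm
      _ = ∑ j ∈ range (m+1), b j * cos ((j:ℝ)*θ) := by
          apply Finset.sum_congr rfl
          intro j _
          rw [hb, Finset.sum_mul]
          exact Finset.sum_congr rfl fun l _ => by ring
  have hb_bound : ∀ k ∈ range (m+1), |b k| ≤ 2*M := by
    intro k hk
    have hval : (∫ θ in (0:ℝ)..π, (∑ i ∈ range (m+1), a i * cos θ ^ i) * cos ((k:ℝ)*θ))
        = b k * (if k = 0 then π else π/2) := by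
      rw [intervalIntegral.integral_congr
        (g := fun θ => ∑ j ∈ range (m+1), b j * (cos ((j:ℝ)*θ) * cos ((k:ℝ)*θ)))
        (fun θ _ => by simp only; rw [hb_rep θ, Finset.sum_mul];
                       exact Finset.sum_congr rfl fun j _ => by ring)]
      rw [intervalIntegral.integral_finset_sum
        (fun j _ => by apply Continuous.intervalIntegrable; fun_prop)]
      have step : ∀ j ∈ range (m+1),
          (∫ θ in (0:ℝ)..π, b j * (cos ((j:ℝ)*θ) * cos ((k:ℝ)*θ)))
          = b j * (if j = k then (if k = 0 then π else π/2) else 0) := by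
        intro j _
        rw [intervalIntegral.integral_const_mul, orth j k]
      rw [Finset.sum_congr rfl step, Finset.sum_eq_single k]
      · simp
      · intro j _ hj; simp [hj]
      · intro hmem; exact absurd hk hmem
    have hbnd : |∫ θ in (0:ℝ)..π, (∑ i ∈ range (m+1), a i * cos θ ^ i) * cos ((k:ℝ)*θ)|
        ≤ M * π := by
      have hb1 : ∀ θ ∈ Set.uIoc (0:ℝ) π,
          ‖(∑ i ∈ range (m+1), a i * cos θ ^ i) * cos ((k:ℝ)*θ)‖ ≤ M := by
        intro θ _
        rw [Real.norm_eq_abs, abs_mul]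
        calc |∑ i ∈ range (m+1), a i * cos θ ^ i| * |cos ((k:ℝ)*θ)|
            ≤ M * 1 := mul_le_mul (h (cos θ) ⟨neg_one_le_cos θ, cos_le_one θ⟩)
              (abs_cos_le_one _) (abs_nonneg _) hM0
          _ = M := mul_one M
      have := intervalIntegral.norm_integral_le_of_norm_le_const hb1
      rw [Real.norm_eq_abs] at this
      calc |∫ θ in (0:ℝ)..π, (∑ i ∈ range (m+1), a i * cos θ ^ i) * cos ((k:ℝ)*θ)|
          ≤ M * |π - 0| := this
        _ = M * π := by rw [sub_zero, abs_of_pos pi_pos]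
    rw [hval, abs_mul] at hbnd
    by_cases k0 : k = 0
    · rw [if_pos k0, abs_of_pos pi_pos] at hbnd
      have : |b k| ≤ M := le_of_mul_le_mul_right hbnd pi_pos
      linarith
    · rw [if_neg k0, abs_of_pos (by positivity : (0:ℝ) < π/2)] at hbnd
      nlinarith [pi_pos, abs_nonneg (b k)]
  have hcoeff : ∀ i ∈ range (m+1), a i = ∑ j ∈ range (m+1), b j * cheb j i := by
    have key : ∀ x ∈ Set.Icc (-1:ℝ) 1,
        ∑ i ∈ range (m+1), (a i - ∑ j ∈ range (m+1), b j * cheb j i) * x ^ i = 0 := by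
      intro x hx
      have hθ : cos (arccos x) = x := Real.cos_arccos hx.1 hx.2
      have e1 : ∑ i ∈ range (m+1), a i * x ^ i
          = ∑ j ∈ range (m+1), b j * cos ((j:ℝ) * arccos x) := by
        conv_lhs => rw [← hθ]
        exact hb_rep (arccos x)
      have e2 : ∀ j ∈ range (m+1), cos ((j:ℝ) * arccos x)
          = ∑ i ∈ range (m+1), cheb j i * x ^ i := by
        intro j hj
        rw [← cheb_cos j (arccos x)]
        simp only [hθ]
        apply Finset.sum_subset (Finset.range_subset_range.mpr (by simp at hj; omega))
        intro i _ hi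
        simp only [Finset.mem_range, not_lt] at hi
        rw [cheb_support j i (by omega)]
        ring
      have e3 : ∑ i ∈ range (m+1), (∑ j ∈ range (m+1), b j * cheb j i) * x ^ i
          = ∑ j ∈ range (m+1), b j * cos ((j:ℝ) * arccos x) := by
        calc ∑ i ∈ range (m+1), (∑ j ∈ range (m+1), b j * cheb j i) * x ^ i
            = ∑ i ∈ range (m+1), ∑ j ∈ range (m+1), b j * (cheb j i * x ^ i) := by
              apply Finset.sum_congr rfl
              intro i _
              rw [Finset.sum_mul]
              exact Finset.sum_congr rfl fun j _ => by ring
          _ = ∑ j ∈ range (m+1), ∑ i ∈ range (m+1), b j * (cheb j i * x ^ i) :=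
              Finset.sum_comm
          _ = ∑ j ∈ range (m+1), b j * cos ((j:ℝ) * arccos x) := by
              apply Finset.sum_congr rfl
              intro j hj
              rw [← Finset.mul_sum, e2 j hj]
      simp only [sub_mul]
      rw [Finset.sum_sub_distrib, e1, e3, sub_self]
    intro i hi
    have := poly_coeff_zero (m+1) _ key i (Finset.mem_range.mp hi)
    linarith [this]
  intro i hi
  calc |a i| ≤ ∑ j ∈ range (m+1), |b j| * |cheb j i| := by
        rw [hcoeff i hi]
        refine le_trans (Finset.abs_sum_le_sum_abs _ _) ?_
        exact le_of_eq (Finset.sum_congr rfl fun j _ => abs_mul _ _)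
    _ ≤ ∑ j ∈ range (m+1), 2*M * |cheb j i| :=
        Finset.sum_le_sum fun j hj => mul_le_mul_of_nonneg_right (hb_bound j hj) (abs_nonneg _)
    _ = 2 * (∑ j ∈ range (m+1), |cheb j i|) * M := by
        rw [← Finset.mul_sum]; ring

lemma sumA (m : ℕ) :
    ∑ i ∈ range (m+1), 2 * (∑ j ∈ range (m+1), |cheb j i|) ≤ 3^(m+1) - 1 := by
  have h1 : ∑ i ∈ range (m+1), 2 * (∑ j ∈ range (m+1), |cheb j i|)
      = 2 * ∑ j ∈ range (m+1), ∑ i ∈ range (m+1), |cheb j i| := by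
    rw [← Finset.mul_sum, Finset.sum_comm]
  rw [h1]
  have h2 : ∀ j ∈ range (m+1), ∑ i ∈ range (m+1), |cheb j i| ≤ 3^j := by
    intro j hj
    have : ∑ i ∈ range (m+1), |cheb j i| = ∑ i ∈ range (j+1), |cheb j i| := by
      symm
      apply Finset.sum_subset (Finset.range_subset_range.mpr (by simp at hj; omega))
      intro i _ hi
      simp only [Finset.mem_range, not_lt] at hi
      rw [cheb_support j i (by omega), abs_zero]
    rw [this]
    exact cheb_bound j
  have h3 : ∑ j ∈ range (m+1), ∑ i ∈ range (m+1), |cheb j i|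
      ≤ ∑ j ∈ range (m+1), (3:ℝ)^j := Finset.sum_le_sum h2
  have h4 : ∑ j ∈ range (m+1), (3:ℝ)^j = (3^(m+1) - 1)/2 := by
    rw [geom_sum_eq (by norm_num)]
    norm_num
  linarith

lemma twoD (m n : ℕ) (M : ℝ) (c : ℕ → ℕ → ℝ)
    (h : ∀ u ∈ Set.Icc (-1:ℝ) 1, ∀ v ∈ Set.Icc (-1:ℝ) 1,
      |∑ i ∈ range (m+1), ∑ j ∈ range (n+1), c i j * u^i * v^j| ≤ M) :
    ∑ i ∈ range (m+1), ∑ j ∈ range (n+1), |c i j|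
      ≤ (3^(m+1) - 1) * (3^(n+1) - 1) * M := by
  have hM0 : 0 ≤ M := le_trans (abs_nonneg _) (h 0 (by norm_num) 0 (by norm_num))
  set Am : ℕ → ℝ := fun i => 2 * (∑ j ∈ range (m+1), |cheb j i|) with hAm
  set An : ℕ → ℝ := fun j => 2 * (∑ i ∈ range (n+1), |cheb i j|) with hAn
  have hAm0 : ∀ i, 0 ≤ Am i := fun i => by
    rw [hAm]; positivity
  have hAn0 : ∀ j, 0 ≤ An j := fun j => by
    rw [hAn]; positivity
  have stepA : ∀ v ∈ Set.Icc (-1:ℝ) 1, ∀ i ∈ range (m+1),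
      |∑ j ∈ range (n+1), c i j * v^j| ≤ Am i * M := by
    intro v hv i hi
    have := oneD m M (fun i => ∑ j ∈ range (n+1), c i j * v^j) ?_ i hi
    · calc |∑ j ∈ range (n+1), c i j * v^j| ≤ 2 * (∑ j ∈ range (m+1), |cheb j i|) * M := this
        _ = Am i * M := by rw [hAm]
    · intro u hu
      have e : ∑ i ∈ range (m+1), (∑ j ∈ range (n+1), c i j * v^j) * u^i
          = ∑ i ∈ range (m+1), ∑ j ∈ range (n+1), c i j * u^i * v^j := by
        apply Finset.sum_congr rfl
        intro i _
        rw [Finset.sum_mul]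
        exact Finset.sum_congr rfl fun j _ => by ring
      rw [e]
      exact h u hu v hv
  have stepB : ∀ i ∈ range (m+1), ∀ j ∈ range (n+1), |c i j| ≤ An j * (Am i * M) := by
    intro i hi j hj
    have := oneD n (Am i * M) (fun j => c i j) (fun v hv => stepA v hv i hi) j hj
    calc |c i j| ≤ 2 * (∑ j' ∈ range (n+1), |cheb j' j|) * (Am i * M) := this
      _ = An j * (Am i * M) := by rw [hAn]
  have hSA : ∑ i ∈ range (m+1), Am i ≤ 3^(m+1) - 1 := sumA m
  have hSB : ∑ j ∈ range (n+1), An j ≤ 3^(n+1) - 1 := sumA n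
  have hSA0 : 0 ≤ ∑ i ∈ range (m+1), Am i := Finset.sum_nonneg (fun i _ => hAm0 i)
  have hSB0 : 0 ≤ ∑ j ∈ range (n+1), An j := Finset.sum_nonneg (fun j _ => hAn0 j)
  calc ∑ i ∈ range (m+1), ∑ j ∈ range (n+1), |c i j|
      ≤ ∑ i ∈ range (m+1), ∑ j ∈ range (n+1), An j * (Am i * M) :=
        Finset.sum_le_sum (fun i hi => Finset.sum_le_sum (fun j hj => stepB i hi j hj))
    _ = (∑ i ∈ range (m+1), Am i) * (∑ j ∈ range (n+1), An j) * M := by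
        rw [Finset.sum_mul, Finset.sum_mul]
        apply Finset.sum_congr rfl
        intro i _
        rw [← Finset.sum_mul]
        ring
    _ ≤ (3^(m+1) - 1) * (3^(n+1) - 1) * M := by
        have h1 : (0:ℝ) ≤ 3^(m+1) - 1 := by
          have : (1:ℝ) = 1^(m+1) := (one_pow _).symm
          have h2 : (1:ℝ)^(m+1) ≤ 3^(m+1) := pow_le_pow_left₀ (by norm_num) (by norm_num) _
          linarith
        have h1' : (0:ℝ) ≤ 3^(n+1) - 1 := by
          have : (1:ℝ) = 1^(n+1) := (one_pow _).symm
          have h2 : (1:ℝ)^(n+1) ≤ 3^(n+1) := pow_le_pow_left₀ (by norm_num) (by norm_num) _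
          linarith
        gcongr

end Stmt7

open Stmt7 in
/-- for `f(u,v) = ∑_{i=0}^m ∑_{j=0}^n c i j • u^i v^j` with `c i j ∈ ℝ²`
(sup norm), every point of the bounding polygon
`P₂ = { c 0 0 + ∑_{i+j>0} s i j • c i j : -1 ≤ s i j ≤ 1 }` satisfies
`‖y‖ ≤ ((m+1)(n+1)(3^{m+1}-1)(3^{n+1}-1)/2) * max_{-1 ≤ u,v ≤ 1} ‖f(u,v)‖`. -/
theorem stmt_7 (m n : ℕ) (c : ℕ → ℕ → Fin 2 → ℝ) :
    ∀ y ∈ {x : Fin 2 → ℝ | ∃ s : ℕ → ℕ → ℝ, (∀ i j, -1 ≤ s i j ∧ s i j ≤ 1) ∧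
        x = c 0 0 + ∑ p ∈ (Finset.range (m + 1) ×ˢ Finset.range (n + 1)).filter
          (fun p => 0 < p.1 + p.2), s p.1 p.2 • c p.1 p.2},
      ‖y‖ ≤ ((m + 1 : ℝ) * (n + 1) * (3 ^ (m + 1) - 1) * (3 ^ (n + 1) - 1) / 2) *
        ⨆ uv : Set.Icc (-1 : ℝ) 1 × Set.Icc (-1 : ℝ) 1,
          ‖∑ i ∈ Finset.range (m + 1), ∑ j ∈ Finset.range (n + 1),
            ((uv.1 : ℝ) ^ i * (uv.2 : ℝ) ^ j) • c i j‖ := by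
  intro y hy
  obtain ⟨s, hs, rfl⟩ := hy
  set g : Set.Icc (-1:ℝ) 1 × Set.Icc (-1:ℝ) 1 → ℝ := fun uv =>
    ‖∑ i ∈ Finset.range (m + 1), ∑ j ∈ Finset.range (n + 1),
      ((uv.1 : ℝ) ^ i * (uv.2 : ℝ) ^ j) • c i j‖ with hg
  set M : ℝ := ⨆ uv, g uv with hM
  -- boundedness of g
  have hgb : ∀ uv, g uv ≤ ∑ i ∈ range (m+1), ∑ j ∈ range (n+1), ‖c i j‖ := by
    rintro ⟨⟨u, hu⟩, ⟨v, hv⟩⟩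
    rw [hg]
    dsimp only
    refine le_trans (norm_sum_le _ _) ?_
    apply Finset.sum_le_sum
    intro i _
    refine le_trans (norm_sum_le _ _) ?_
    apply Finset.sum_le_sum
    intro j _
    rw [norm_smul, Real.norm_eq_abs]
    have h1 : |u ^ i * v ^ j| ≤ 1 := by
      rw [abs_mul, abs_pow, abs_pow]
      have hu1 : |u| ≤ 1 := abs_le.mpr ⟨hu.1, hu.2⟩
      have hv1 : |v| ≤ 1 := abs_le.mpr ⟨hv.1, hv.2⟩
      calc |u|^i * |v|^j
          ≤ 1 * 1 := mul_le_mul (pow_le_one₀ (abs_nonneg u) hu1)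
            (pow_le_one₀ (abs_nonneg v) hv1) (by positivity) (by norm_num)
        _ = 1 := by norm_num
    calc |u ^ i * v ^ j| * ‖c i j‖ ≤ 1 * ‖c i j‖ :=
          mul_le_mul_of_nonneg_right h1 (norm_nonneg _)
      _ = ‖c i j‖ := one_mul _
  have hbdd : BddAbove (Set.range g) := by
    refine ⟨∑ i ∈ range (m+1), ∑ j ∈ range (n+1), ‖c i j‖, ?_⟩
    rintro x ⟨uv, rfl⟩
    exact hgb uv
  have hMle : ∀ (u : ℝ), u ∈ Set.Icc (-1:ℝ) 1 → ∀ (v : ℝ), v ∈ Set.Icc (-1:ℝ) 1 →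
      ‖∑ i ∈ Finset.range (m + 1), ∑ j ∈ Finset.range (n + 1),
        (u ^ i * v ^ j) • c i j‖ ≤ M := by
    intro u hu v hv
    exact le_ciSup hbdd (⟨⟨u, hu⟩, ⟨v, hv⟩⟩ : Set.Icc (-1:ℝ) 1 × Set.Icc (-1:ℝ) 1)
  have hM0 : 0 ≤ M := le_trans (norm_nonneg _) (hMle 0 (by norm_num) 0 (by norm_num))
  -- componentwise coefficient bound
  have hcomp : ∀ κ : Fin 2, ∑ i ∈ range (m+1), ∑ j ∈ range (n+1), |c i j κ|
      ≤ (3^(m+1) - 1) * (3^(n+1) - 1) * M := by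
    intro κ
    apply twoD
    intro u hu v hv
    have e : ∑ i ∈ range (m+1), ∑ j ∈ range (n+1), c i j κ * u^i * v^j
        = (∑ i ∈ Finset.range (m + 1), ∑ j ∈ Finset.range (n + 1),
            (u ^ i * v ^ j) • c i j) κ := by
      rw [Finset.sum_apply]
      apply Finset.sum_congr rfl
      intro i _
      rw [Finset.sum_apply]
      apply Finset.sum_congr rfl
      intro j _
      simp [mul_comm, mul_assoc, mul_left_comm]
    rw [e, ← Real.norm_eq_abs]
    exact le_trans (norm_le_pi_norm _ κ) (hMle u hu v hv)
  -- bound each component of y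
  have hy : ∀ κ : Fin 2, ‖(c 0 0 + ∑ p ∈ (Finset.range (m + 1) ×ˢ Finset.range (n + 1)).filter
      (fun p => 0 < p.1 + p.2), s p.1 p.2 • c p.1 p.2) κ‖
      ≤ (3^(m+1) - 1) * (3^(n+1) - 1) * M := by
    intro κ
    rw [Real.norm_eq_abs, Pi.add_apply, Finset.sum_apply]
    set P := (Finset.range (m + 1) ×ˢ Finset.range (n + 1)).filter (fun p => 0 < p.1 + p.2)
    have step1 : |c 0 0 κ + ∑ p ∈ P, (s p.1 p.2 • c p.1 p.2) κ|
        ≤ |c 0 0 κ| + ∑ p ∈ P, |c p.1 p.2 κ| := by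
      refine le_trans (abs_add_le _ _) ?_
      gcongr
      refine le_trans (Finset.abs_sum_le_sum_abs _ _) ?_
      apply Finset.sum_le_sum
      intro p _
      rw [Pi.smul_apply, smul_eq_mul, abs_mul]
      have hsp : |s p.1 p.2| ≤ 1 := abs_le.mpr ⟨(hs p.1 p.2).1, (hs p.1 p.2).2⟩
      calc |s p.1 p.2| * |c p.1 p.2 κ| ≤ 1 * |c p.1 p.2 κ| :=
            mul_le_mul_of_nonneg_right hsp (abs_nonneg _)
        _ = |c p.1 p.2 κ| := one_mul _
    have step2 : |c 0 0 κ| + ∑ p ∈ P, |c p.1 p.2 κ|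
        ≤ ∑ p ∈ Finset.range (m + 1) ×ˢ Finset.range (n + 1), |c p.1 p.2 κ| := by
      rw [← Finset.sum_filter_add_sum_filter_not (Finset.range (m + 1) ×ˢ Finset.range (n + 1))
        (fun p => 0 < p.1 + p.2) (fun p => |c p.1 p.2 κ|)]
      have h00 : ((0,0) : ℕ × ℕ) ∈ (Finset.range (m + 1) ×ˢ Finset.range (n + 1)).filter
          (fun p => ¬ 0 < p.1 + p.2) := by
        simp
      have := Finset.single_le_sum (f := fun p : ℕ × ℕ => |c p.1 p.2 κ|)
        (fun p _ => abs_nonneg _) h00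
      simp only [P]
      linarith
    have step3 : ∑ p ∈ Finset.range (m + 1) ×ˢ Finset.range (n + 1), |c p.1 p.2 κ|
        = ∑ i ∈ range (m+1), ∑ j ∈ range (n+1), |c i j κ| := Finset.sum_product _ _ _
    calc |c 0 0 κ + ∑ p ∈ P, (s p.1 p.2 • c p.1 p.2) κ|
        ≤ |c 0 0 κ| + ∑ p ∈ P, |c p.1 p.2 κ| := step1
      _ ≤ ∑ p ∈ Finset.range (m + 1) ×ˢ Finset.range (n + 1), |c p.1 p.2 κ| := step2
      _ = ∑ i ∈ range (m+1), ∑ j ∈ range (n+1), |c i j κ| := step3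
      _ ≤ (3^(m+1) - 1) * (3^(n+1) - 1) * M := hcomp κ
  -- final constant comparison
  by_cases hmn : m = 0 ∧ n = 0
  · obtain ⟨rfl, rfl⟩ := hmn
    have hPempty : (Finset.range 1 ×ˢ Finset.range 1).filter (fun p : ℕ × ℕ => 0 < p.1 + p.2)
        = ∅ := by decide
    have hc00 : ‖c 0 0‖ ≤ M := by
      have := hMle 0 (by norm_num) 0 (by norm_num)
      simpa using this
    rw [hPempty]
    simp only [Finset.sum_empty, add_zero]
    norm_num
    linarith
  · have hC : (3^(m+1) - 1) * ((3:ℝ)^(n+1) - 1)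
        ≤ (m + 1 : ℝ) * (n + 1) * (3 ^ (m + 1) - 1) * (3 ^ (n + 1) - 1) / 2 := by
      have h1 : (0:ℝ) ≤ 3^(m+1) - 1 := by
        have h2 : (1:ℝ)^(m+1) ≤ 3^(m+1) := pow_le_pow_left₀ (by norm_num) (by norm_num) _
        rw [one_pow] at h2; linarith
      have h1' : (0:ℝ) ≤ 3^(n+1) - 1 := by
        have h2 : (1:ℝ)^(n+1) ≤ 3^(n+1) := pow_le_pow_left₀ (by norm_num) (by norm_num) _
        rw [one_pow] at h2; linarith
      have h3 : (2:ℝ) ≤ (m + 1 : ℝ) * (n + 1) := by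
        have : 2 ≤ (m+1) * (n+1) := by
          rcases Decidable.not_and_iff_or_not.mp hmn with h | h <;> · have := Nat.pos_of_ne_zero h; nlinarith
        exact_mod_cast this
      nlinarith [mul_nonneg h1 h1']
    have hfin : (3^(m+1) - 1) * ((3:ℝ)^(n+1) - 1) * M
        ≤ ((m + 1 : ℝ) * (n + 1) * (3 ^ (m + 1) - 1) * (3 ^ (n + 1) - 1) / 2) * M :=
      mul_le_mul_of_nonneg_right hC hM0
    have hKM0 : 0 ≤ ((m + 1 : ℝ) * (n + 1) * (3 ^ (m + 1) - 1) * (3 ^ (n + 1) - 1) / 2) * M := by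
      have h1 : (0:ℝ) ≤ 3^(m+1) - 1 := by
        have h2 : (1:ℝ)^(m+1) ≤ 3^(m+1) := pow_le_pow_left₀ (by norm_num) (by norm_num) _
        rw [one_pow] at h2; linarith
      have h1' : (0:ℝ) ≤ 3^(n+1) - 1 := by
        have h2 : (1:ℝ)^(n+1) ≤ 3^(n+1) := pow_le_pow_left₀ (by norm_num) (by norm_num) _
        rw [one_pow] at h2; linarith
      positivity
    rw [pi_norm_le_iff_of_nonneg hKM0]
    intro κ
    exact le_trans (hy κ) hfin
end

section
/- Let f(u,v) = Σ_{i=0}^{m} Σ_{j=0}^{n} c_{ij} T_i(u) T_j(v) with coefficients c_{ij} ∈ ℝ², where T_i is the i-th Chebyshev polynomial of the first kind, and let P₂ = { c_{00} + Σ_{(i,j): i+j > 0} s_{ij} c_{ij} : −1 ≤ s_{ij} ≤ 1 }. Then for every y ∈ P₂, ‖y‖ ≤ 2(m+1)(n+1) · max_{−1 ≤ u,v ≤ 1} ‖f(u,v)‖. -/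
open Finset Polynomial

noncomputable def Jc (k : ℕ) : ℝ := if k = 0 then Real.pi else Real.pi / 2

noncomputable def Ic (k : ℕ) : ℝ := ∫ θ in (0:ℝ)..Real.pi, |Real.cos (k * θ)|

lemma Jc_pos (k : ℕ) : 0 < Jc k := by
  unfold Jc; split <;> [exact Real.pi_pos; exact half_pos Real.pi_pos]

lemma intCos (k : ℤ) : ∫ θ in (0:ℝ)..Real.pi, Real.cos (k * θ) = if k = 0 then Real.pi else 0 := by
  rcases eq_or_ne k 0 with h | h
  · simp [h]
  · rw [if_neg h]
    have hk : (k:ℝ) ≠ 0 := Int.cast_ne_zero.mpr h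
    rw [show (fun θ : ℝ => Real.cos (k * θ)) = fun θ : ℝ => Real.cos ((k:ℝ) * θ) from rfl]
    rw [intervalIntegral.integral_comp_mul_left Real.cos hk]
    simp [integral_cos, Real.sin_int_mul_pi]

lemma cos_orthog (a b : ℕ) : ∫ θ in (0:ℝ)..Real.pi, Real.cos (a * θ) * Real.cos (b * θ)
    = if a = b then Jc a else 0 := by
  have hpt : ∀ θ : ℝ, Real.cos (a * θ) * Real.cos (b * θ)
      = (Real.cos ((((a:ℤ)+(b:ℤ)):ℤ) * θ) + Real.cos ((((a:ℤ)-(b:ℤ)):ℤ) * θ)) / 2 := by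
    intro θ
    push_cast
    rw [add_mul, sub_mul, Real.cos_add, Real.cos_sub]
    ring
  rw [intervalIntegral.integral_congr (g := fun θ =>
      (Real.cos ((((a:ℤ)+(b:ℤ)):ℤ) * θ) + Real.cos ((((a:ℤ)-(b:ℤ)):ℤ) * θ)) / 2)
      (fun θ _ => hpt θ)]
  have hint : ∀ k : ℤ, IntervalIntegrable (fun θ : ℝ => Real.cos (k * θ))
      MeasureTheory.volume 0 Real.pi := by
    intro k
    exact (Real.continuous_cos.comp (continuous_const.mul continuous_id)).intervalIntegrable _ _
  rw [intervalIntegral.integral_div, intervalIntegral.integral_add (hint _) (hint _),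
    intCos, intCos]
  unfold Jc
  rcases eq_or_ne a b with h | h
  · subst h
    rcases eq_or_ne a 0 with h0 | h0
    · simp [h0, Real.pi_ne_zero]
    · have : ((a:ℤ) + a) ≠ 0 := by positivity
      simp [this, h0]
  · have h2 : ((a:ℤ) - b ≠ 0) := by omega
    by_cases h3 : (a:ℤ) + b = 0
    · exfalso; omega
    · simp [h3, h2, h]

lemma contCos (a : ℕ) : Continuous fun θ : ℝ => Real.cos (a * θ) := by fun_prop

lemma cos_sq_int (a : ℕ) (ha : a ≠ 0) :
    ∫ θ in (0:ℝ)..Real.pi, Real.cos (a * θ) * Real.cos (a * θ) = Real.pi / 2 := by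
  rw [cos_orthog a a]; simp [Jc, ha]

lemma absCos_nonneg (a : ℕ) : 0 ≤ Ic a :=
  intervalIntegral.integral_nonneg Real.pi_nonneg (fun _ _ => abs_nonneg _)

lemma absCos_le_pi (a : ℕ) : Ic a ≤ Real.pi := by
  have h := intervalIntegral.integral_mono_on (μ := MeasureTheory.volume)
    (f := fun θ : ℝ => |Real.cos (a * θ)|) (g := fun _ : ℝ => (1:ℝ))
    Real.pi_nonneg ((contCos a).abs.intervalIntegrable _ _)
    (_root_.intervalIntegrable_const)
    (fun θ _ => Real.abs_cos_le_one _)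
  unfold Ic
  simpa using h

lemma absCos_le (a : ℕ) (ha : a ≠ 0) : Ic a ≤ Real.pi / Real.sqrt 2 := by
  have key : ∀ x : ℝ, |x| ≤ (x * x + 1/2) / Real.sqrt 2 := by
    intro x
    have h2 : (0:ℝ) < Real.sqrt 2 := by positivity
    rw [le_div_iff₀ h2]
    nlinarith [sq_nonneg (|x| - Real.sqrt 2 / 2), Real.sq_sqrt (by norm_num : (0:ℝ) ≤ 2),
      abs_nonneg x, sq_abs x]
  have hmono := intervalIntegral.integral_mono_on (μ := MeasureTheory.volume)
    (f := fun θ : ℝ => |Real.cos (a * θ)|)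
    (g := fun θ : ℝ => (Real.cos (a*θ) * Real.cos (a*θ) + 1/2) / Real.sqrt 2)
    Real.pi_nonneg ((contCos a).abs.intervalIntegrable _ _)
    ((((contCos a).mul (contCos a)).add continuous_const).div_const _ |>.intervalIntegrable _ _)
    (fun θ _ => key _)
  calc Ic a
      ≤ ∫ θ in (0:ℝ)..Real.pi, (Real.cos (a*θ) * Real.cos (a*θ) + 1/2) / Real.sqrt 2 := hmono
    _ = Real.pi / Real.sqrt 2 := by
        rw [intervalIntegral.integral_div, intervalIntegral.integral_add
          (by exact ((contCos a).mul (contCos a)).intervalIntegrable _ _ :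
            IntervalIntegrable (fun x : ℝ => Real.cos (a*x) * Real.cos (a*x)) MeasureTheory.volume 0 Real.pi)
          (_root_.intervalIntegrable_const), cos_sq_int a ha]
        simp
        ring

lemma int_double_sum (mm nn : ℕ) (g : ℕ → ℕ → ℝ → ℝ) (hc : ∀ p1 p2, Continuous (g p1 p2)) :
    (∫ φ in (0:ℝ)..Real.pi, ∑ p1 ∈ Finset.range (mm+1), ∑ p2 ∈ Finset.range (nn+1), g p1 p2 φ)
    = ∑ p1 ∈ Finset.range (mm+1), ∑ p2 ∈ Finset.range (nn+1),
        ∫ φ in (0:ℝ)..Real.pi, g p1 p2 φ := by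
  rw [intervalIntegral.integral_finset_sum
    (fun p1 _ => ((continuous_finset_sum _ fun p2 _ => hc p1 p2).intervalIntegrable _ _))]
  exact Finset.sum_congr rfl fun p1 _ =>
    intervalIntegral.integral_finset_sum (fun p2 _ => (hc p1 p2).intervalIntegrable _ _)

lemma int_single_sum (mm : ℕ) (g : ℕ → ℝ → ℝ) (hc : ∀ p1, Continuous (g p1)) :
    (∫ θ in (0:ℝ)..Real.pi, ∑ p1 ∈ Finset.range (mm+1), g p1 θ)
    = ∑ p1 ∈ Finset.range (mm+1), ∫ θ in (0:ℝ)..Real.pi, g p1 θ :=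
  intervalIntegral.integral_finset_sum (fun p1 _ => (hc p1).intervalIntegrable _ _)

set_option maxHeartbeats 1600000 in
lemma key_bound (m n i j : ℕ) (hi : i < m + 1) (hj : j < n + 1) (M : ℝ) (d : ℕ → ℕ → ℝ)
    (hd : ∀ θ φ : ℝ, |∑ p1 ∈ Finset.range (m+1), ∑ p2 ∈ Finset.range (n+1),
        Real.cos (p1 * θ) * Real.cos (p2 * φ) * d p1 p2| ≤ M) :
    |d i j| * (Jc i * Jc j) ≤ M * (Ic i * Ic j) := by
  set S : ℝ → ℝ → ℝ := fun θ φ => ∑ p1 ∈ Finset.range (m+1), ∑ p2 ∈ Finset.range (n+1),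
      Real.cos (p1 * θ) * Real.cos (p2 * φ) * d p1 p2 with hS
  have inner_eq : ∀ θ : ℝ,
      (∫ φ in (0:ℝ)..Real.pi, S θ φ * (Real.cos (i*θ) * Real.cos (j*φ)))
      = (∑ p1 ∈ Finset.range (m+1), Real.cos (p1*θ) * Real.cos (i*θ) * d p1 j) * Jc j := by
    intro θ
    have e1 : (fun φ => S θ φ * (Real.cos (i*θ) * Real.cos (j*φ)))
        = fun φ => ∑ p1 ∈ Finset.range (m+1), ∑ p2 ∈ Finset.range (n+1),
            (Real.cos (p1*θ) * Real.cos (i*θ) * d p1 p2) * (Real.cos (p2*φ) * Real.cos (j*φ)) := by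
      funext φ
      rw [hS, Finset.sum_mul]
      refine Finset.sum_congr rfl fun p1 _ => ?_
      rw [Finset.sum_mul]
      exact Finset.sum_congr rfl fun p2 _ => by ring
    have hint2 : ∀ p1 p2 : ℕ, IntervalIntegrable
        (fun φ : ℝ => (Real.cos (p1*θ) * Real.cos (i*θ) * d p1 p2) * (Real.cos (p2*φ) * Real.cos (j*φ)))
        MeasureTheory.volume 0 Real.pi := by
      intro p1 p2
      exact (continuous_const.mul ((contCos p2).mul (contCos j))).intervalIntegrable _ _
    have step1 := int_double_sum m n
      (fun p1 p2 φ => (Real.cos (p1*θ) * Real.cos (i*θ) * d p1 p2)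
        * (Real.cos (p2*φ) * Real.cos (j*φ)))
      (fun p1 p2 => continuous_const.mul ((contCos p2).mul (contCos j)))
    have e2 : ∀ p1 p2 : ℕ, (∫ φ in (0:ℝ)..Real.pi,
        (Real.cos (p1*θ) * Real.cos (i*θ) * d p1 p2) * (Real.cos (p2*φ) * Real.cos (j*φ)))
        = (Real.cos (p1*θ) * Real.cos (i*θ) * d p1 p2) * (if p2 = j then Jc p2 else 0) := by
      intro p1 p2
      rw [intervalIntegral.integral_const_mul, cos_orthog]
    rw [e1, step1]
    rw [Finset.sum_mul]
    refine Finset.sum_congr rfl fun p1 _ => ?_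
    rw [Finset.sum_congr rfl (fun p2 _ => e2 p1 p2)]
    rw [Finset.sum_eq_single_of_mem j (Finset.mem_range.mpr hj)
      (fun b _ hb => by simp [hb])]
    simp
  have outer_eq : (∫ θ in (0:ℝ)..Real.pi,
      (∑ p1 ∈ Finset.range (m+1), Real.cos (p1*θ) * Real.cos (i*θ) * d p1 j) * Jc j)
      = d i j * (Jc i * Jc j) := by
    have e1 : (fun θ : ℝ => (∑ p1 ∈ Finset.range (m+1),
          Real.cos (p1*θ) * Real.cos (i*θ) * d p1 j) * Jc j)
        = fun θ : ℝ => ∑ p1 ∈ Finset.range (m+1),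
            (d p1 j * Jc j) * (Real.cos (p1*θ) * Real.cos (i*θ)) := by
      funext θ
      rw [Finset.sum_mul]
      exact Finset.sum_congr rfl fun p1 _ => by ring
    have step1 := int_single_sum m
      (fun p1 θ => (d p1 j * Jc j) * (Real.cos (p1*θ) * Real.cos (i*θ)))
      (fun p1 => continuous_const.mul ((contCos p1).mul (contCos i)))
    rw [e1, step1]
    have e2 : ∀ p1 : ℕ, (∫ θ in (0:ℝ)..Real.pi,
        (d p1 j * Jc j) * (Real.cos (p1*θ) * Real.cos (i*θ)))
        = (d p1 j * Jc j) * (if p1 = i then Jc p1 else 0) := fun p1 => by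
      rw [intervalIntegral.integral_const_mul, cos_orthog]
    rw [Finset.sum_congr rfl (fun p1 _ => e2 p1)]
    rw [Finset.sum_eq_single_of_mem i (Finset.mem_range.mpr hi)
      (fun b _ hb => by simp [hb])]
    simp
    ring
  -- now the bound
  have hIc0 : ∀ k : ℕ, (0:ℝ) ≤ Ic k := absCos_nonneg
  have hM0 : 0 ≤ M := le_trans (abs_nonneg _) (hd 0 0)
  have inner_bd : ∀ θ : ℝ,
      |∫ φ in (0:ℝ)..Real.pi, S θ φ * (Real.cos (i*θ) * Real.cos (j*φ))|
      ≤ (M * Ic j) * |Real.cos (i*θ)| := by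
    intro θ
    have h1 := intervalIntegral.abs_integral_le_integral_abs (μ := MeasureTheory.volume)
      (f := fun φ => S θ φ * (Real.cos (i*θ) * Real.cos (j*φ))) Real.pi_nonneg
    have hScont : Continuous (S θ) := by
      apply continuous_finset_sum; intro p1 _; apply continuous_finset_sum; intro p2 _
      exact (continuous_const.mul (contCos p2)).mul continuous_const
    have h2 := intervalIntegral.integral_mono_on (μ := MeasureTheory.volume)
      (f := fun φ => |S θ φ * (Real.cos (i*θ) * Real.cos (j*φ))|)
      (g := fun φ => (M * |Real.cos (i*θ)|) * |Real.cos (j*φ)|)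
      Real.pi_nonneg
      ((hScont.mul (continuous_const.mul (contCos j))).abs.intervalIntegrable _ _)
      ((continuous_const.mul (contCos j).abs).intervalIntegrable _ _)
      (fun φ _ => by
        rw [abs_mul, abs_mul]
        have := hd θ φ
        calc |S θ φ| * (|Real.cos (i*θ)| * |Real.cos (j*φ)|)
            ≤ M * (|Real.cos (i*θ)| * |Real.cos (j*φ)|) := by
              apply mul_le_mul_of_nonneg_right this (by positivity)
          _ = M * |Real.cos (i*θ)| * |Real.cos (j*φ)| := by ring)
    have h3 : (∫ φ in (0:ℝ)..Real.pi, (M * |Real.cos (i*θ)|) * |Real.cos (j*φ)|)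
        = (M * |Real.cos (i*θ)|) * Ic j := intervalIntegral.integral_const_mul _ _
    calc |∫ φ in (0:ℝ)..Real.pi, S θ φ * (Real.cos (i*θ) * Real.cos (j*φ))|
        ≤ ∫ φ in (0:ℝ)..Real.pi, |S θ φ * (Real.cos (i*θ) * Real.cos (j*φ))| := h1
      _ ≤ (M * |Real.cos (i*θ)|) * Ic j := h3 ▸ h2
      _ = (M * Ic j) * |Real.cos (i*θ)| := by ring
  have final : |d i j| * (Jc i * Jc j) ≤ M * (Ic i * Ic j) := by
    have hJ : 0 < Jc i * Jc j := mul_pos (Jc_pos i) (Jc_pos j)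
    have e0 : |d i j| * (Jc i * Jc j) = |d i j * (Jc i * Jc j)| := by
      rw [abs_mul, abs_of_pos hJ]
    have ecg : (∫ θ in (0:ℝ)..Real.pi, ∫ φ in (0:ℝ)..Real.pi,
        S θ φ * (Real.cos (i*θ) * Real.cos (j*φ)))
        = ∫ θ in (0:ℝ)..Real.pi, (∑ p1 ∈ Finset.range (m+1),
            Real.cos (p1*θ) * Real.cos (i*θ) * d p1 j) * Jc j :=
      intervalIntegral.integral_congr (fun θ _ => inner_eq θ)
    rw [e0, ← outer_eq, ← ecg]
    have h1 := intervalIntegral.abs_integral_le_integral_abs (μ := MeasureTheory.volume)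
      (f := fun θ => ∫ φ in (0:ℝ)..Real.pi, S θ φ * (Real.cos (i*θ) * Real.cos (j*φ)))
      Real.pi_nonneg
    have habs_cont : Continuous (fun θ : ℝ =>
        |(∑ p1 ∈ Finset.range (m+1), Real.cos (p1*θ) * Real.cos (i*θ) * d p1 j) * Jc j|) := by
      apply Continuous.abs
      apply Continuous.mul _ continuous_const
      apply continuous_finset_sum; intro p1 _
      exact ((contCos p1).mul (contCos i)).mul continuous_const
    have h2 := intervalIntegral.integral_mono_on (μ := MeasureTheory.volume)
      (f := fun θ => |∫ φ in (0:ℝ)..Real.pi, S θ φ * (Real.cos (i*θ) * Real.cos (j*φ))|)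
      (g := fun θ => (M * Ic j) * |Real.cos (i*θ)|)
      Real.pi_nonneg
      (by
        rw [show (fun θ => |∫ φ in (0:ℝ)..Real.pi, S θ φ * (Real.cos (i*θ) * Real.cos (j*φ))|)
          = fun θ : ℝ => |(∑ p1 ∈ Finset.range (m+1),
              Real.cos (p1*θ) * Real.cos (i*θ) * d p1 j) * Jc j| from
          funext fun θ => by rw [inner_eq θ]]
        exact habs_cont.intervalIntegrable _ _)
      ((continuous_const.mul (contCos i).abs).intervalIntegrable _ _)
      (fun θ _ => inner_bd θ)
    have h3 : (∫ θ in (0:ℝ)..Real.pi, (M * Ic j) * |Real.cos (i*θ)|)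
        = (M * Ic j) * Ic i := intervalIntegral.integral_const_mul _ _
    calc |∫ θ in (0:ℝ)..Real.pi, ∫ φ in (0:ℝ)..Real.pi, S θ φ * (Real.cos (i*θ) * Real.cos (j*φ))|
        ≤ ∫ θ in (0:ℝ)..Real.pi, |∫ φ in (0:ℝ)..Real.pi, S θ φ * (Real.cos (i*θ) * Real.cos (j*φ))| := h1
      _ ≤ (M * Ic j) * Ic i := h3 ▸ h2
      _ = M * (Ic i * Ic j) := by ring
  exact final

/-- for `f(u,v) = ∑_{i=0}^m ∑_{j=0}^n c i j • T_i(u) T_j(v)` with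
`c i j ∈ ℝ²` (sup norm), where `T_i` is the `i`-th Chebyshev polynomial of the first
kind, every point of the bounding polygon
`P₂ = { c 0 0 + ∑_{i+j>0} s i j • c i j : -1 ≤ s i j ≤ 1 }` satisfies
`‖y‖ ≤ 2(m+1)(n+1) * max_{-1 ≤ u,v ≤ 1} ‖f(u,v)‖`. -/
theorem stmt_8 (m n : ℕ) (c : ℕ → ℕ → Fin 2 → ℝ) :
    ∀ y ∈ {x : Fin 2 → ℝ | ∃ s : ℕ → ℕ → ℝ, (∀ i j, -1 ≤ s i j ∧ s i j ≤ 1) ∧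
        x = c 0 0 + ∑ p ∈ (Finset.range (m + 1) ×ˢ Finset.range (n + 1)).filter
          (fun p => 0 < p.1 + p.2), s p.1 p.2 • c p.1 p.2},
      ‖y‖ ≤ (2 * (m + 1 : ℝ) * (n + 1)) *
        ⨆ uv : Set.Icc (-1 : ℝ) 1 × Set.Icc (-1 : ℝ) 1,
          ‖∑ i ∈ Finset.range (m + 1), ∑ j ∈ Finset.range (n + 1),
            ((Polynomial.Chebyshev.T ℝ i).eval (uv.1 : ℝ) *
              (Polynomial.Chebyshev.T ℝ j).eval (uv.2 : ℝ)) • c i j‖ := by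
  intro y hy
  obtain ⟨s, hs, rfl⟩ := hy
  set M := ⨆ uv : Set.Icc (-1 : ℝ) 1 × Set.Icc (-1 : ℝ) 1,
      ‖∑ i ∈ Finset.range (m + 1), ∑ j ∈ Finset.range (n + 1),
        ((Polynomial.Chebyshev.T ℝ i).eval (uv.1 : ℝ) *
          (Polynomial.Chebyshev.T ℝ j).eval (uv.2 : ℝ)) • c i j‖ with hMdef
  have hcont : Continuous fun uv : Set.Icc (-1 : ℝ) 1 × Set.Icc (-1 : ℝ) 1 =>
      ‖∑ i ∈ Finset.range (m + 1), ∑ j ∈ Finset.range (n + 1),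
        ((Polynomial.Chebyshev.T ℝ i).eval (uv.1 : ℝ) *
          (Polynomial.Chebyshev.T ℝ j).eval (uv.2 : ℝ)) • c i j‖ := by
    apply Continuous.norm
    apply continuous_finset_sum; intro i _
    apply continuous_finset_sum; intro j _
    exact (((Polynomial.Chebyshev.T ℝ i).continuous.comp
        (continuous_subtype_val.comp continuous_fst)).mul
      ((Polynomial.Chebyshev.T ℝ j).continuous.comp
        (continuous_subtype_val.comp continuous_snd))).smul continuous_const
  have hbdd := (isCompact_range hcont).bddAbove
  have hle : ∀ u v : ℝ, u ∈ Set.Icc (-1:ℝ) 1 → v ∈ Set.Icc (-1:ℝ) 1 →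
      ‖∑ i ∈ Finset.range (m + 1), ∑ j ∈ Finset.range (n + 1),
        ((Polynomial.Chebyshev.T ℝ i).eval u *
          (Polynomial.Chebyshev.T ℝ j).eval v) • c i j‖ ≤ M := by
    intro u v hu hv
    exact le_ciSup hbdd (⟨⟨u, hu⟩, ⟨v, hv⟩⟩ :
      Set.Icc (-1 : ℝ) 1 × Set.Icc (-1 : ℝ) 1)
  have hM0 : 0 ≤ M :=
    le_trans (norm_nonneg _) (hle 0 0 (by norm_num) (by norm_num))
  have hd : ∀ x : Fin 2, ∀ θ φ : ℝ,
      |∑ p1 ∈ Finset.range (m+1), ∑ p2 ∈ Finset.range (n+1),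
        Real.cos (p1*θ) * Real.cos (p2*φ) * c p1 p2 x| ≤ M := by
    intro x θ φ
    have h1 := hle (Real.cos θ) (Real.cos φ)
      ⟨Real.neg_one_le_cos θ, Real.cos_le_one θ⟩
      ⟨Real.neg_one_le_cos φ, Real.cos_le_one φ⟩
    have h2 : (∑ i ∈ Finset.range (m + 1), ∑ j ∈ Finset.range (n + 1),
          ((Polynomial.Chebyshev.T ℝ i).eval (Real.cos θ) *
            (Polynomial.Chebyshev.T ℝ j).eval (Real.cos φ)) • c i j) x
        = ∑ p1 ∈ Finset.range (m+1), ∑ p2 ∈ Finset.range (n+1),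
            Real.cos (p1*θ) * Real.cos (p2*φ) * c p1 p2 x := by
      simp only [Finset.sum_apply, Pi.smul_apply, smul_eq_mul,
        Polynomial.Chebyshev.T_real_cos]
      push_cast
      ring_nf
      simp only [mul_comm θ, mul_comm φ]
    calc |∑ p1 ∈ Finset.range (m+1), ∑ p2 ∈ Finset.range (n+1),
          Real.cos (p1*θ) * Real.cos (p2*φ) * c p1 p2 x|
        = ‖(∑ i ∈ Finset.range (m + 1), ∑ j ∈ Finset.range (n + 1),
            ((Polynomial.Chebyshev.T ℝ i).eval (Real.cos θ) *
              (Polynomial.Chebyshev.T ℝ j).eval (Real.cos φ)) • c i j) x‖ := by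
          rw [h2, Real.norm_eq_abs]
      _ ≤ ‖∑ i ∈ Finset.range (m + 1), ∑ j ∈ Finset.range (n + 1),
            ((Polynomial.Chebyshev.T ℝ i).eval (Real.cos θ) *
              (Polynomial.Chebyshev.T ℝ j).eval (Real.cos φ)) • c i j‖ :=
          norm_le_pi_norm _ x
      _ ≤ M := h1
  have hpi := Real.pi_pos
  have hcoefx : ∀ (i j : ℕ), i < m+1 → j < n+1 → ∀ x : Fin 2, |c i j x| ≤ 2*M := by
    intro i j hi hj x
    have hk : |c i j x| * (Jc i * Jc j) ≤ M * (Ic i * Ic j) :=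
      key_bound m n i j hi hj M (fun p1 p2 => c p1 p2 x) (hd x)
    have hA0 := absCos_nonneg i
    have hB0 := absCos_nonneg j
    have hAπ := absCos_le_pi i
    have hBπ := absCos_le_pi j
    have hprod : Ic i * Ic j ≤ Real.pi * Real.pi := mul_le_mul hAπ hBπ hB0 hpi.le
    have hMprod : M * (Ic i * Ic j) ≤ M * (Real.pi * Real.pi) :=
      mul_le_mul_of_nonneg_left hprod hM0
    rcases eq_or_ne i 0 with hi0 | hi0 <;> rcases eq_or_ne j 0 with hj0 | hj0
    · have hJi : Jc i = Real.pi := by simp [Jc, hi0]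
      have hJj : Jc j = Real.pi := by simp [Jc, hj0]
      rw [hJi, hJj] at hk
      nlinarith [mul_pos hpi hpi, mul_nonneg hM0 (mul_nonneg hpi.le hpi.le)]
    · have hJi : Jc i = Real.pi := by simp [Jc, hi0]
      have hJj : Jc j = Real.pi / 2 := by simp [Jc, hj0]
      rw [hJi, hJj] at hk
      nlinarith [mul_pos hpi hpi, mul_nonneg hM0 (mul_nonneg hpi.le hpi.le)]
    · have hJi : Jc i = Real.pi / 2 := by simp [Jc, hi0]
      have hJj : Jc j = Real.pi := by simp [Jc, hj0]
      rw [hJi, hJj] at hk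
      nlinarith [mul_pos hpi hpi, mul_nonneg hM0 (mul_nonneg hpi.le hpi.le)]
    · have hJi : Jc i = Real.pi / 2 := by simp [Jc, hi0]
      have hJj : Jc j = Real.pi / 2 := by simp [Jc, hj0]
      rw [hJi, hJj] at hk
      have h2 : Real.sqrt 2 * Real.sqrt 2 = 2 := Real.mul_self_sqrt (by norm_num)
      have hAs := absCos_le i hi0
      have hBs := absCos_le j hj0
      have h1 : Ic i * Ic j ≤ (Real.pi/Real.sqrt 2) * (Real.pi/Real.sqrt 2) :=
        mul_le_mul hAs hBs hB0 (by positivity)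
      have h3 : (Real.pi/Real.sqrt 2) * (Real.pi/Real.sqrt 2) = Real.pi*Real.pi/2 := by
        rw [div_mul_div_comm, h2]
      rw [h3] at h1
      have hMprod2 : M * (Ic i * Ic j) ≤ M * (Real.pi*Real.pi/2) :=
        mul_le_mul_of_nonneg_left h1 hM0
      nlinarith [mul_pos hpi hpi, mul_nonneg hM0 (mul_nonneg hpi.le hpi.le)]
  have h00x : ∀ x : Fin 2, |c 0 0 x| ≤ M := by
    intro x
    have hk : |c 0 0 x| * (Jc 0 * Jc 0) ≤ M * (Ic 0 * Ic 0) :=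
      key_bound m n 0 0 (Nat.succ_pos m) (Nat.succ_pos n) M
      (fun p1 p2 => c p1 p2 x) (hd x)
    have hA0 := absCos_nonneg 0
    have hAπ := absCos_le_pi 0
    have hprod : Ic 0 * Ic 0 ≤ Real.pi * Real.pi := mul_le_mul hAπ hAπ hA0 hpi.le
    have hMprod : M * (Ic 0 * Ic 0) ≤ M * (Real.pi * Real.pi) :=
      mul_le_mul_of_nonneg_left hprod hM0
    have hJ : Jc 0 = Real.pi := by simp [Jc]
    rw [hJ] at hk
    nlinarith [mul_pos hpi hpi, mul_nonneg hM0 (mul_nonneg hpi.le hpi.le)]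
  have h00 : ‖c 0 0‖ ≤ M := by
    rw [pi_norm_le_iff_of_nonneg hM0]
    intro x
    rw [Real.norm_eq_abs]
    exact h00x x
  have hcoef : ∀ p : ℕ × ℕ, p.1 < m+1 → p.2 < n+1 → ‖c p.1 p.2‖ ≤ 2*M := by
    intro p h1 h2
    rw [pi_norm_le_iff_of_nonneg (by linarith)]
    intro x
    rw [Real.norm_eq_abs]
    exact hcoefx p.1 p.2 h1 h2 x
  set T := (Finset.range (m + 1) ×ˢ Finset.range (n + 1)).filter
      (fun p => 0 < p.1 + p.2) with hTdef
  have hTcard : T.card = (m+1)*(n+1) - 1 := by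
    have hTe : T = ((Finset.range (m + 1)) ×ˢ (Finset.range (n + 1))).erase (0,0) := by
      ext p
      simp only [hTdef, Finset.mem_filter, Finset.mem_erase, Finset.mem_product,
        Finset.mem_range, Ne, Prod.ext_iff]
      omega
    rw [hTe, Finset.card_erase_of_mem (by simp), Finset.card_product,
      Finset.card_range, Finset.card_range]
  have hsum : ‖∑ p ∈ T, s p.1 p.2 • c p.1 p.2‖ ≤ (T.card : ℝ) * (2*M) := by
    calc ‖∑ p ∈ T, s p.1 p.2 • c p.1 p.2‖
        ≤ ∑ p ∈ T, ‖s p.1 p.2 • c p.1 p.2‖ := norm_sum_le _ _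
      _ ≤ ∑ p ∈ T, 2*M := by
          apply Finset.sum_le_sum
          intro p hp
          have hmem : p.1 < m+1 ∧ p.2 < n+1 := by
            rw [hTdef] at hp
            simp only [Finset.mem_filter, Finset.mem_product, Finset.mem_range] at hp
            exact ⟨hp.1.1, hp.1.2⟩
          rw [norm_smul, Real.norm_eq_abs]
          calc |s p.1 p.2| * ‖c p.1 p.2‖ ≤ 1 * (2*M) := by
                apply mul_le_mul (abs_le.mpr ⟨(hs p.1 p.2).1, (hs p.1 p.2).2⟩)
                  (hcoef p hmem.1 hmem.2) (norm_nonneg _) (by norm_num)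
            _ = 2*M := one_mul _
      _ = (T.card : ℝ) * (2*M) := by rw [Finset.sum_const, nsmul_eq_mul]
  have hcard1 : 1 ≤ (m+1)*(n+1) := Nat.one_le_iff_ne_zero.mpr (by positivity)
  calc ‖c 0 0 + ∑ p ∈ T, s p.1 p.2 • c p.1 p.2‖
      ≤ ‖c 0 0‖ + ‖∑ p ∈ T, s p.1 p.2 • c p.1 p.2‖ := norm_add_le _ _
    _ ≤ M + (T.card : ℝ) * (2*M) := add_le_add h00 hsum
    _ ≤ 2 * (m + 1 : ℝ) * (n + 1) * M := by
        rw [hTcard]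
        push_cast [Nat.cast_sub hcard1]
        nlinarith
end

section
/- Let f : ℝ² → ℝ² be a bivariate polynomial map with f(u,v) = Σ_{k=0}^{m} Σ_{l=0}^{n} a_{kl} u^k v^l = Σ_{i=0}^{m} Σ_{j=0}^{n} c_{ij} T_i(u) T_j(v), where a_{kl} ∈ ℝ² are the coefficients of f in the power basis and c_{ij} ∈ ℝ² are the coefficients of f in the Chebyshev basis (T_i being the i-th Chebyshev polynomial of the first kind). Define P₂ᵖ = { a_{00} + Σ_{(k,l): k+l > 0} s_{kl} a_{kl} : −1 ≤ s_{kl} ≤ 1 } and P₂ᶜ = { c_{00} + Σ_{(i,j): i+j > 0} s_{ij} c_{ij} : −1 ≤ s_{ij} ≤ 1 }. Then P₂ᶜ ⊆ P₂ᵖ. -/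
open Finset Polynomial


lemma two_X_mul_T (i : ℤ) : 2 * ((X : ℝ[X]) * Polynomial.Chebyshev.T ℝ i) =
    Polynomial.Chebyshev.T ℝ (i+1) + Polynomial.Chebyshev.T ℝ (i-1) := by
  have h := Polynomial.Chebyshev.T_add_two ℝ (i - 1)
  have h2 : (i - 1 + 2) = i + 1 := by ring
  have h1 : (i - 1 + 1) = i := by ring
  rw [h2, h1] at h
  linear_combination -h

lemma exists_b (k : ℕ) : ∃ b : ℕ → ℝ, (∀ i, 0 ≤ b i) ∧ (∀ i, k < i → b i = 0) ∧
    (∑ i ∈ Finset.range (k+1), b i) = 1 ∧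
    ((X : ℝ[X])^k = ∑ i ∈ Finset.range (k+1), Polynomial.C (b i) * Polynomial.Chebyshev.T ℝ i) := by
  induction k with
  | zero =>
    refine ⟨fun i => if i = 0 then 1 else 0, ?_, ?_, ?_, ?_⟩
    · intro i; dsimp only; split <;> norm_num
    · intro i hi; simp [Nat.pos_iff_ne_zero.mp hi]
    · simp
    · simp [Polynomial.Chebyshev.T_zero]
  | succ k ih =>
    obtain ⟨b, hb0, hbz, hbs, hbX⟩ := ih
    set b' : ℕ → ℝ := fun i => if i = 0 then b 1 / 2 else if i = 1 then b 0 + b 2 / 2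
        else (b (i-1) + b (i+1))/2 with hb'
    have key : ∀ i, 2 * b' i = (if i = 0 then 0 else b (i-1)) + (b (i+1)) +
        (if i = 1 then b 0 else 0) := by
      intro i
      rcases eq_or_ne i 0 with h | h
      · simp [hb', h]; ring
      rcases eq_or_ne i 1 with h1 | h1
      · simp [hb', h1]; ring
      · simp [hb', h, h1]; ring
    refine ⟨b', ?_, ?_, ?_, ?_⟩
    · intro i
      simp only [hb']; split
      · have := hb0 1; positivity
      split
      · have := hb0 0; have := hb0 2; positivity
      · have := hb0 (i-1); have := hb0 (i+1); positivity
    · intro i hi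
      have h0 : i ≠ 0 := by omega
      have h1 : i ≠ 1 := by omega
      simp only [hb', h0, h1, if_false]
      rw [hbz (i-1) (by omega), hbz (i+1) (by omega)]
      ring
    · -- sum = 1
      have : 2 * ∑ i ∈ Finset.range (k+2), b' i = 2 := by
        rw [Finset.mul_sum]
        simp_rw [key]
        rw [Finset.sum_add_distrib, Finset.sum_add_distrib]
        have e1 : ∑ i ∈ Finset.range (k+2), (if i = 0 then 0 else b (i-1)) =
            ∑ i ∈ Finset.range (k+1), b i := by
          rw [Finset.sum_range_succ']
          simp
        have e2 : ∑ i ∈ Finset.range (k+2), b (i+1) =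
            (∑ i ∈ Finset.range (k+1), b i) - b 0 := by
          have h' : ∑ i ∈ Finset.range (k+2), b (i+1) = ∑ i ∈ Finset.range k, b (i+1) := by
            rw [Finset.sum_range_succ, Finset.sum_range_succ, hbz (k+1) (by omega),
              hbz (k+2) (by omega)]
            ring
          rw [h', Finset.sum_range_succ' b k]; ring
        have e3 : ∑ i ∈ Finset.range (k+2), (if i = 1 then b 0 else 0) = b 0 := by
          rw [Finset.sum_ite_eq' (Finset.range (k+2)) 1 (fun _ => b 0)]
          simp
        rw [e1, e2, e3, hbs]; ring
      linarith
    · -- polynomial identity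
      have hcancel : (2 : ℝ[X]) ≠ 0 := by norm_num
      apply mul_left_cancel₀ hcancel
      calc 2 * (X : ℝ[X])^(k+1) = (2 * X) * (X:ℝ[X])^k := by ring
        _ = (2 * X) * ∑ i ∈ Finset.range (k+1), Polynomial.C (b i) *
              Polynomial.Chebyshev.T ℝ i := by rw [hbX]
        _ = ∑ i ∈ Finset.range (k+1),
            Polynomial.C (b i) * (2 * (X * Polynomial.Chebyshev.T ℝ i)) := by
            rw [Finset.mul_sum]; exact Finset.sum_congr rfl fun i _ => by ring
        _ = ∑ i ∈ Finset.range (k+1), Polynomial.C (b i) *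
              (Polynomial.Chebyshev.T ℝ (i+1) + Polynomial.Chebyshev.T ℝ ((i:ℤ)-1)) := by
            refine Finset.sum_congr rfl fun i _ => ?_
            rw [two_X_mul_T]
        _ = (∑ i ∈ Finset.range (k+1), Polynomial.C (b i) * Polynomial.Chebyshev.T ℝ ((i:ℤ)+1))
            + ∑ i ∈ Finset.range (k+1), Polynomial.C (b i)
              * Polynomial.Chebyshev.T ℝ ((i:ℤ)-1) := by
            rw [← Finset.sum_add_distrib]
            exact Finset.sum_congr rfl fun i _ => by ring
        _ = 2 * ∑ i ∈ Finset.range (k+2), Polynomial.C (b' i) * Polynomial.Chebyshev.T ℝ i := by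
            rw [Finset.mul_sum]
            have hC2 : ∀ i : ℕ, (2:ℝ[X]) * (Polynomial.C (b' i) * Polynomial.Chebyshev.T ℝ i)
                = Polynomial.C (2 * b' i) * Polynomial.Chebyshev.T ℝ i := by
              intro i
              rw [Polynomial.C_mul, map_ofNat Polynomial.C 2]
              ring
            simp_rw [hC2, key, Polynomial.C_add, add_mul, Finset.sum_add_distrib]
            have hA : ∑ i ∈ Finset.range (k+2),
                Polynomial.C (if i = 0 then (0:ℝ) else b (i-1)) * Polynomial.Chebyshev.T ℝ i =
                ∑ i ∈ Finset.range (k+1), Polynomial.C (b i)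
                  * Polynomial.Chebyshev.T ℝ ((i:ℤ)+1) := by
              rw [Finset.sum_range_succ']
              norm_num
            have hB : ∑ i ∈ Finset.range (k+2), Polynomial.C (b (i+1))
                  * Polynomial.Chebyshev.T ℝ i
                + Polynomial.C (b 0) * Polynomial.Chebyshev.T ℝ 1 =
                ∑ i ∈ Finset.range (k+1), Polynomial.C (b i)
                  * Polynomial.Chebyshev.T ℝ ((i:ℤ)-1) := by
              rw [Finset.sum_range_succ' (fun i => Polynomial.C (b i) *
                Polynomial.Chebyshev.T ℝ ((i:ℤ)-1)) k]
              rw [Finset.sum_range_succ (fun i => Polynomial.C (b (i+1)) *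
                Polynomial.Chebyshev.T ℝ (i:ℤ)) (k+1)]
              rw [Finset.sum_range_succ (fun i => Polynomial.C (b (i+1)) *
                Polynomial.Chebyshev.T ℝ (i:ℤ)) k]
              rw [hbz (k+1) (by omega), hbz (k+2) (by omega)]
              simp only [Polynomial.C_0, zero_mul, add_zero]
              congr 1
              · refine Finset.sum_congr rfl fun i _ => ?_
                push_cast
                simp
              · norm_num
            have hC : ∑ i ∈ Finset.range (k+2),
                Polynomial.C (if i = 1 then b 0 else (0:ℝ)) * Polynomial.Chebyshev.T ℝ i =
                Polynomial.C (b 0) * Polynomial.Chebyshev.T ℝ 1 := by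
              have : ∀ i : ℕ, Polynomial.C (if i = 1 then b 0 else (0:ℝ))
                  * Polynomial.Chebyshev.T ℝ i =
                  if i = 1 then Polynomial.C (b 0) * Polynomial.Chebyshev.T ℝ 1 else 0 := by
                intro i
                split
                · subst ‹i = 1›; push_cast; ring
                · simp
              simp_rw [this]
              rw [Finset.sum_ite_eq' (Finset.range (k+2)) 1]
              simp
            rw [hA, hC, ← hB]
            ring


lemma extract_coeff {N : ℕ} {A B : ℕ → ℝ}
    (h : ∀ u : ℝ, ∑ k ∈ Finset.range (N+1), A k * u^k
       = ∑ i ∈ Finset.range (N+1), B i * (Polynomial.Chebyshev.T ℝ i).eval u)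
    {k : ℕ} (hk : k ∈ Finset.range (N+1)) :
    A k = ∑ i ∈ Finset.range (N+1), B i * (Polynomial.Chebyshev.T ℝ i).coeff k := by
  have hpq : (∑ k ∈ Finset.range (N+1), Polynomial.C (A k) * X^k : ℝ[X])
      = ∑ i ∈ Finset.range (N+1), Polynomial.C (B i) * Polynomial.Chebyshev.T ℝ i := by
    apply Polynomial.funext
    intro u
    simpa [Polynomial.eval_finset_sum] using h u
  have h2 := congrArg (fun p => Polynomial.coeff p k) hpq
  simp only [Polynomial.finset_sum_coeff, Polynomial.coeff_C_mul,
    Polynomial.coeff_X_pow, mul_ite, mul_one, mul_zero] at h2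
  rwa [Finset.sum_ite_eq (Finset.range (N+1)) k A, if_pos hk] at h2

noncomputable def bb : ℕ → ℕ → ℝ := fun k => Classical.choose (exists_b k)

lemma bb_nonneg (k i : ℕ) : 0 ≤ bb k i := (Classical.choose_spec (exists_b k)).1 i
lemma bb_zero {k i : ℕ} (h : k < i) : bb k i = 0 := (Classical.choose_spec (exists_b k)).2.1 i h
lemma bb_sum (k : ℕ) : ∑ i ∈ Finset.range (k+1), bb k i = 1 :=
  (Classical.choose_spec (exists_b k)).2.2.1
lemma bb_poly (k : ℕ) : (X : ℝ[X])^k =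
    ∑ i ∈ Finset.range (k+1), Polynomial.C (bb k i) * Polynomial.Chebyshev.T ℝ i :=
  (Classical.choose_spec (exists_b k)).2.2.2

lemma bb_sum_le (k N : ℕ) : ∑ i ∈ Finset.range N, bb k i ≤ 1 := by
  have hsub : ∑ i ∈ Finset.range N, bb k i ≤ ∑ i ∈ Finset.range (max N (k+1)), bb k i :=
    Finset.sum_le_sum_of_subset_of_nonneg
      (Finset.range_subset_range.mpr (le_max_left _ _)) (fun i _ _ => bb_nonneg k i)
  have hext : ∑ i ∈ Finset.range (max N (k+1)), bb k i = 1 := by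
    rw [← bb_sum k]
    exact (Finset.sum_subset (Finset.range_subset_range.mpr (le_max_right _ _))
      (fun i _ hi => bb_zero (by simp at hi; omega))).symm
  linarith

lemma bb_zero_eq (i : ℕ) : bb 0 i = if i = 0 then 1 else 0 := by
  rcases eq_or_ne i 0 with h | h
  · have := bb_sum 0; simp at this; simp [h, this]
  · simp [h, bb_zero (Nat.pos_of_ne_zero h)]

lemma bb_poly_ext (k N : ℕ) (hk : k ≤ N) : (X : ℝ[X])^k =
    ∑ i ∈ Finset.range (N+1), Polynomial.C (bb k i) * Polynomial.Chebyshev.T ℝ i := by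
  rw [bb_poly k]
  exact Finset.sum_subset (Finset.range_subset_range.mpr (by omega))
    (fun i _ hi => by rw [bb_zero (by simp at hi; omega), Polynomial.C_0, zero_mul])

lemma TB_delta (N : ℕ) {i i' : ℕ} (hi : i ≤ N) (hi' : i' ≤ N) :
    ∑ k ∈ Finset.range (N+1), (Polynomial.Chebyshev.T ℝ i').coeff k * bb k i
      = if i' = i then 1 else 0 := by
  classical
  set M : Matrix (Fin (N+1)) (Fin (N+1)) ℝ :=
    fun i k => (Polynomial.Chebyshev.T ℝ (i:ℕ)).coeff k with hM
  set B : Matrix (Fin (N+1)) (Fin (N+1)) ℝ := fun k i => bb k i with hB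
  have hBM : B * M = 1 := by
    ext k k'
    rw [Matrix.mul_apply]
    have hpoly := bb_poly_ext k N (by omega)
    have h2 := congrArg (fun p => Polynomial.coeff p k') hpoly
    simp only [Polynomial.finset_sum_coeff, Polynomial.coeff_C_mul] at h2
    rw [Polynomial.coeff_X_pow] at h2
    rw [← Fin.sum_univ_eq_sum_range (fun i => bb k i *
      (Polynomial.Chebyshev.T ℝ (i:ℕ)).coeff k') (N+1)] at h2
    rw [Matrix.one_apply]
    simp only [hM, hB]
    rw [← h2]
    congr 1
    simp [Fin.ext_iff, eq_comm]
  have hMB : M * B = 1 := mul_eq_one_comm.mp hBM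
  have := congrFun (congrFun hMB ⟨i', by omega⟩) ⟨i, by omega⟩
  rw [Matrix.mul_apply, Matrix.one_apply] at this
  rw [← Fin.sum_univ_eq_sum_range (fun k => (Polynomial.Chebyshev.T ℝ i').coeff k * bb k i) (N+1)]
  simp only [hM, hB] at this
  rw [this]
  simp [Fin.ext_iff]

lemma sum4_swap (M N : Finset ℕ) (f : ℕ → ℕ → ℕ → ℕ → ℝ) :
    ∑ i ∈ M, ∑ j ∈ N, ∑ k ∈ M, ∑ l ∈ N, f i j k l
      = ∑ k ∈ M, ∑ l ∈ N, ∑ i ∈ M, ∑ j ∈ N, f i j k l := by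
  calc ∑ i ∈ M, ∑ j ∈ N, ∑ k ∈ M, ∑ l ∈ N, f i j k l
      = ∑ i ∈ M, ∑ k ∈ M, ∑ j ∈ N, ∑ l ∈ N, f i j k l :=
      Finset.sum_congr rfl fun i _ => Finset.sum_comm
    _ = ∑ k ∈ M, ∑ i ∈ M, ∑ j ∈ N, ∑ l ∈ N, f i j k l := Finset.sum_comm
    _ = ∑ k ∈ M, ∑ i ∈ M, ∑ l ∈ N, ∑ j ∈ N, f i j k l :=
      Finset.sum_congr rfl fun k _ => Finset.sum_congr rfl fun i _ => Finset.sum_comm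
    _ = ∑ k ∈ M, ∑ l ∈ N, ∑ i ∈ M, ∑ j ∈ N, f i j k l :=
      Finset.sum_congr rfl fun k _ => Finset.sum_comm

/-- let `f : ℝ² → ℝ²` have power-basis coefficients `a k l ∈ ℝ²` and
Chebyshev-basis coefficients `c i j ∈ ℝ²`, i.e.
`f(u,v) = ∑_{k,l} a k l • u^k v^l = ∑_{i,j} c i j • T_i(u) T_j(v)`.  Then the
Chebyshev bounding polygon `P₂ᶜ` is contained in the power bounding polygon `P₂ᵖ`. -/
theorem stmt_11 (m n : ℕ) (a c : ℕ → ℕ → Fin 2 → ℝ)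
    (heq : ∀ u v : ℝ,
      ∑ k ∈ Finset.range (m + 1), ∑ l ∈ Finset.range (n + 1),
          (u ^ k * v ^ l) • a k l =
        ∑ i ∈ Finset.range (m + 1), ∑ j ∈ Finset.range (n + 1),
          ((Polynomial.Chebyshev.T ℝ i).eval u * (Polynomial.Chebyshev.T ℝ j).eval v)
            • c i j) :
    {x : Fin 2 → ℝ | ∃ s : ℕ → ℕ → ℝ, (∀ i j, -1 ≤ s i j ∧ s i j ≤ 1) ∧
        x = c 0 0 + ∑ p ∈ (Finset.range (m + 1) ×ˢ Finset.range (n + 1)).filter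
          (fun p => 0 < p.1 + p.2), s p.1 p.2 • c p.1 p.2} ⊆
      {x : Fin 2 → ℝ | ∃ s : ℕ → ℕ → ℝ, (∀ k l, -1 ≤ s k l ∧ s k l ≤ 1) ∧
        x = a 0 0 + ∑ p ∈ (Finset.range (m + 1) ×ˢ Finset.range (n + 1)).filter
          (fun p => 0 < p.1 + p.2), s p.1 p.2 • a p.1 p.2} := by
  classical
  -- notation
  set grid := (Finset.range (m + 1)) ×ˢ (Finset.range (n + 1)) with hgrid
  set F := grid.filter (fun p => 0 < p.1 + p.2) with hF
  -- scalarized hypothesis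
  have hscal : ∀ (r : Fin 2) (u v : ℝ),
      ∑ k ∈ Finset.range (m+1), ∑ l ∈ Finset.range (n+1), (u^k * v^l) * a k l r =
      ∑ i ∈ Finset.range (m+1), ∑ j ∈ Finset.range (n+1),
        ((Polynomial.Chebyshev.T ℝ i).eval u * (Polynomial.Chebyshev.T ℝ j).eval v)
          * c i j r := by
    intro r u v
    have := congrFun (heq u v) r
    simpa [Finset.sum_apply] using this
  -- power coefficients in terms of Chebyshev coefficients
  have hac : ∀ (r : Fin 2) (k l : ℕ), k ∈ Finset.range (m+1) → l ∈ Finset.range (n+1) →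
      a k l r = ∑ i ∈ Finset.range (m+1), ∑ j ∈ Finset.range (n+1),
        (Polynomial.Chebyshev.T ℝ i).coeff k * (Polynomial.Chebyshev.T ℝ j).coeff l
          * c i j r := by
    intro r k l hk hl
    have h1 : ∀ v : ℝ, ∀ k' ∈ Finset.range (m+1),
        (∑ l' ∈ Finset.range (n+1), v^l' * a k' l' r) =
        ∑ i ∈ Finset.range (m+1),
          (∑ j ∈ Finset.range (n+1), (Polynomial.Chebyshev.T ℝ j).eval v * c i j r)
            * (Polynomial.Chebyshev.T ℝ i).coeff k' := by
      intro v k' hk'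
      exact extract_coeff (A := fun k'' => ∑ l' ∈ Finset.range (n+1), v^l' * a k'' l' r)
        (B := fun i => ∑ j ∈ Finset.range (n+1),
          (Polynomial.Chebyshev.T ℝ j).eval v * c i j r)
        (fun u => by
          calc ∑ k'' ∈ Finset.range (m+1),
                (∑ l' ∈ Finset.range (n+1), v^l' * a k'' l' r) * u^k''
              = ∑ k'' ∈ Finset.range (m+1), ∑ l' ∈ Finset.range (n+1),
                  u^k'' * v^l' * a k'' l' r := by
                refine Finset.sum_congr rfl fun k'' _ => ?_
                rw [Finset.sum_mul]
                exact Finset.sum_congr rfl fun l' _ => by ring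
            _ = ∑ i ∈ Finset.range (m+1), ∑ j ∈ Finset.range (n+1),
                  (Polynomial.Chebyshev.T ℝ i).eval u * (Polynomial.Chebyshev.T ℝ j).eval v
                    * c i j r := hscal r u v
            _ = ∑ i ∈ Finset.range (m+1),
                  (∑ j ∈ Finset.range (n+1), (Polynomial.Chebyshev.T ℝ j).eval v * c i j r)
                    * (Polynomial.Chebyshev.T ℝ i).eval u := by
                refine Finset.sum_congr rfl fun i _ => ?_
                rw [Finset.sum_mul]
                exact Finset.sum_congr rfl fun j _ => by ring
          ) hk'
    have h2 : ∀ v : ℝ, ∑ l' ∈ Finset.range (n+1), (a k l' r) * v^l' =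
        ∑ j ∈ Finset.range (n+1),
          (∑ i ∈ Finset.range (m+1),
            (Polynomial.Chebyshev.T ℝ i).coeff k * c i j r)
          * (Polynomial.Chebyshev.T ℝ j).eval v := by
      intro v
      have := h1 v k hk
      calc ∑ l' ∈ Finset.range (n+1), (a k l' r) * v^l'
          = ∑ l' ∈ Finset.range (n+1), v^l' * a k l' r :=
            Finset.sum_congr rfl fun _ _ => by ring
        _ = ∑ i ∈ Finset.range (m+1),
            (∑ j ∈ Finset.range (n+1), (Polynomial.Chebyshev.T ℝ j).eval v * c i j r)
              * (Polynomial.Chebyshev.T ℝ i).coeff k := this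
        _ = ∑ i ∈ Finset.range (m+1), ∑ j ∈ Finset.range (n+1),
            ((Polynomial.Chebyshev.T ℝ i).coeff k * c i j r)
              * (Polynomial.Chebyshev.T ℝ j).eval v := by
            refine Finset.sum_congr rfl fun i _ => ?_
            rw [Finset.sum_mul]
            exact Finset.sum_congr rfl fun j _ => by ring
        _ = ∑ j ∈ Finset.range (n+1),
            (∑ i ∈ Finset.range (m+1), (Polynomial.Chebyshev.T ℝ i).coeff k * c i j r)
              * (Polynomial.Chebyshev.T ℝ j).eval v := by
            rw [Finset.sum_comm]
            exact Finset.sum_congr rfl fun j _ => (Finset.sum_mul _ _ _).symm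
    have h3 := extract_coeff (A := fun l' => a k l' r)
      (B := fun j => ∑ i ∈ Finset.range (m+1),
        (Polynomial.Chebyshev.T ℝ i).coeff k * c i j r) h2 hl
    rw [h3, Finset.sum_comm]
    refine Finset.sum_congr rfl fun i _ => ?_
    rw [Finset.sum_mul]
    exact Finset.sum_congr rfl fun j _ => by ring
  -- Chebyshev coefficients in terms of power coefficients
  have hca : ∀ (r : Fin 2) (i j : ℕ), i ∈ Finset.range (m+1) → j ∈ Finset.range (n+1) →
      c i j r = ∑ k ∈ Finset.range (m+1), ∑ l ∈ Finset.range (n+1),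
        bb k i * bb l j * a k l r := by
    intro r i j hi hj
    simp only [Finset.mem_range] at hi hj
    calc c i j r
        = ∑ i' ∈ Finset.range (m+1), ∑ j' ∈ Finset.range (n+1),
            (if i' = i then (1:ℝ) else 0) * ((if j' = j then (1:ℝ) else 0) * c i' j' r) := by
          symm
          simp only [ite_mul, one_mul, zero_mul, Finset.sum_ite_eq', Finset.mem_range]
          simp [hi, hj]
      _ = ∑ i' ∈ Finset.range (m+1), ∑ j' ∈ Finset.range (n+1),
            (∑ k ∈ Finset.range (m+1), (Polynomial.Chebyshev.T ℝ i').coeff k * bb k i)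
            * ((∑ l ∈ Finset.range (n+1), (Polynomial.Chebyshev.T ℝ j').coeff l * bb l j)
              * c i' j' r) := by
          refine Finset.sum_congr rfl fun i' hi' => Finset.sum_congr rfl fun j' hj' => ?_
          simp only [Finset.mem_range] at hi' hj'
          rw [TB_delta m (by omega) (by omega), TB_delta n (by omega) (by omega)]
      _ = ∑ i' ∈ Finset.range (m+1), ∑ j' ∈ Finset.range (n+1),
            ∑ k ∈ Finset.range (m+1), ∑ l ∈ Finset.range (n+1),
              ((Polynomial.Chebyshev.T ℝ i').coeff k * bb k i)
              * (((Polynomial.Chebyshev.T ℝ j').coeff l * bb l j) * c i' j' r) := by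
          refine Finset.sum_congr rfl fun i' _ => Finset.sum_congr rfl fun j' _ => ?_
          rw [Finset.sum_mul]
          refine Finset.sum_congr rfl fun k _ => ?_
          rw [mul_assoc, Finset.sum_mul, Finset.mul_sum, Finset.mul_sum]
          exact Finset.sum_congr rfl fun l _ => by ring
      _ = ∑ k ∈ Finset.range (m+1), ∑ l ∈ Finset.range (n+1),
            ∑ i' ∈ Finset.range (m+1), ∑ j' ∈ Finset.range (n+1),
              ((Polynomial.Chebyshev.T ℝ i').coeff k * bb k i)
              * (((Polynomial.Chebyshev.T ℝ j').coeff l * bb l j) * c i' j' r) := by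
          calc ∑ i' ∈ Finset.range (m+1), ∑ j' ∈ Finset.range (n+1),
                ∑ k ∈ Finset.range (m+1), ∑ l ∈ Finset.range (n+1),
                  ((Polynomial.Chebyshev.T ℝ i').coeff k * bb k i)
                  * (((Polynomial.Chebyshev.T ℝ j').coeff l * bb l j) * c i' j' r)
              = ∑ i' ∈ Finset.range (m+1), ∑ k ∈ Finset.range (m+1),
                ∑ j' ∈ Finset.range (n+1), ∑ l ∈ Finset.range (n+1),
                  ((Polynomial.Chebyshev.T ℝ i').coeff k * bb k i)
                  * (((Polynomial.Chebyshev.T ℝ j').coeff l * bb l j) * c i' j' r) :=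
              Finset.sum_congr rfl fun i' _ => Finset.sum_comm
            _ = ∑ k ∈ Finset.range (m+1), ∑ i' ∈ Finset.range (m+1),
                ∑ j' ∈ Finset.range (n+1), ∑ l ∈ Finset.range (n+1),
                  ((Polynomial.Chebyshev.T ℝ i').coeff k * bb k i)
                  * (((Polynomial.Chebyshev.T ℝ j').coeff l * bb l j) * c i' j' r) :=
              Finset.sum_comm
            _ = ∑ k ∈ Finset.range (m+1), ∑ i' ∈ Finset.range (m+1),
                ∑ l ∈ Finset.range (n+1), ∑ j' ∈ Finset.range (n+1),
                  ((Polynomial.Chebyshev.T ℝ i').coeff k * bb k i)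
                  * (((Polynomial.Chebyshev.T ℝ j').coeff l * bb l j) * c i' j' r) :=
              Finset.sum_congr rfl fun k _ => Finset.sum_congr rfl fun i' _ =>
                Finset.sum_comm
            _ = ∑ k ∈ Finset.range (m+1), ∑ l ∈ Finset.range (n+1),
                ∑ i' ∈ Finset.range (m+1), ∑ j' ∈ Finset.range (n+1),
                  ((Polynomial.Chebyshev.T ℝ i').coeff k * bb k i)
                  * (((Polynomial.Chebyshev.T ℝ j').coeff l * bb l j) * c i' j' r) :=
              Finset.sum_congr rfl fun k _ => Finset.sum_comm
      _ = ∑ k ∈ Finset.range (m+1), ∑ l ∈ Finset.range (n+1),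
            bb k i * bb l j * a k l r := by
          refine Finset.sum_congr rfl fun k hk => Finset.sum_congr rfl fun l hl => ?_
          rw [hac r k l hk hl, Finset.mul_sum]
          refine Finset.sum_congr rfl fun i' _ => ?_
          rw [Finset.mul_sum]
          exact Finset.sum_congr rfl fun j' _ => by ring
  -- now the main argument
  intro x hx
  obtain ⟨s, hs, hxeq⟩ := hx
  set st : ℕ → ℕ → ℝ := fun i j => if i = 0 ∧ j = 0 then 1 else s i j with hst
  have hstb : ∀ i j, |st i j| ≤ 1 := by
    intro i j
    by_cases h : i = 0 ∧ j = 0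
    · simp [hst, h]
    · simp only [hst, if_neg h]
      exact abs_le.mpr (hs i j)
  have hst00 : st 0 0 = 1 := by simp [hst]
  have hnot : grid.filter (fun p => ¬ 0 < p.1 + p.2) = {((0:ℕ),(0:ℕ))} := by
    ext p
    simp only [hgrid, Finset.mem_filter, Finset.mem_product, Finset.mem_range,
      Finset.mem_singleton, Prod.ext_iff]
    omega
  have hsplit : ∀ (y : ℕ → ℕ → Fin 2 → ℝ) (w : ℕ → ℕ → ℝ), w 0 0 = 1 →
      ∑ p ∈ grid, w p.1 p.2 • y p.1 p.2 = y 0 0 + ∑ p ∈ F, w p.1 p.2 • y p.1 p.2 := by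
    intro y w hw
    rw [← Finset.sum_filter_add_sum_filter_not grid (fun p => 0 < p.1 + p.2), hnot,
      Finset.sum_singleton]
    simp only [hw, one_smul]
    rw [add_comm]
  have hxg : x = ∑ p ∈ grid, st p.1 p.2 • c p.1 p.2 := by
    rw [hsplit c st hst00, hxeq]
    congr 1
    refine Finset.sum_congr rfl fun p hp => ?_
    have hne : ¬(p.1 = 0 ∧ p.2 = 0) := by
      rw [hF, Finset.mem_filter] at hp
      omega
    simp [hst, hne]
  set s' : ℕ → ℕ → ℝ := fun k l => ∑ i ∈ Finset.range (m+1), ∑ j ∈ Finset.range (n+1),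
      st i j * bb k i * bb l j with hs'
  have hs'00 : s' 0 0 = 1 := by
    simp only [hs', bb_zero_eq]
    rw [Finset.sum_eq_single 0 (fun i _ hi => by simp [hi])
      (fun h => absurd (Finset.mem_range.mpr (by omega)) h)]
    rw [Finset.sum_eq_single 0 (fun j _ hj => by simp [hj])
      (fun h => absurd (Finset.mem_range.mpr (by omega)) h)]
    simp [hst00]
  have hs'b : ∀ k l, -1 ≤ s' k l ∧ s' k l ≤ 1 := by
    intro k l
    refine abs_le.mp ?_
    have h1 : |s' k l| ≤ ∑ i ∈ Finset.range (m+1), ∑ j ∈ Finset.range (n+1),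
        bb k i * bb l j := by
      refine (Finset.abs_sum_le_sum_abs _ _).trans (Finset.sum_le_sum fun i _ => ?_)
      refine (Finset.abs_sum_le_sum_abs _ _).trans (Finset.sum_le_sum fun j _ => ?_)
      rw [abs_mul, abs_mul, abs_of_nonneg (bb_nonneg k i), abs_of_nonneg (bb_nonneg l j)]
      have h2 := hstb i j
      have h3 := abs_nonneg (st i j)
      nlinarith [mul_le_mul_of_nonneg_right h2
        (mul_nonneg (bb_nonneg k i) (bb_nonneg l j)), bb_nonneg k i, bb_nonneg l j]
    have h4 : ∑ i ∈ Finset.range (m+1), ∑ j ∈ Finset.range (n+1), bb k i * bb l j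
        = (∑ i ∈ Finset.range (m+1), bb k i) * (∑ j ∈ Finset.range (n+1), bb l j) := by
      rw [Finset.sum_mul]
      exact Finset.sum_congr rfl fun i _ => (Finset.mul_sum _ _ _).symm
    have h5 := bb_sum_le k (m+1)
    have h6 := bb_sum_le l (n+1)
    have h7 : (0:ℝ) ≤ ∑ i ∈ Finset.range (m+1), bb k i :=
      Finset.sum_nonneg fun i _ => bb_nonneg k i
    have h8 : (0:ℝ) ≤ ∑ j ∈ Finset.range (n+1), bb l j :=
      Finset.sum_nonneg fun j _ => bb_nonneg l j
    rw [h4] at h1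
    nlinarith
  have hxa : x = ∑ p ∈ grid, s' p.1 p.2 • a p.1 p.2 := by
    funext r
    have hxr : x r = ∑ i ∈ Finset.range (m+1), ∑ j ∈ Finset.range (n+1),
        st i j * c i j r := by
      rw [hxg]
      rw [Finset.sum_apply]
      rw [hgrid, Finset.sum_product]
      exact Finset.sum_congr rfl fun i _ => Finset.sum_congr rfl fun j _ => rfl
    rw [hxr]
    have hgr : (∑ p ∈ grid, s' p.1 p.2 • a p.1 p.2) r
        = ∑ k ∈ Finset.range (m+1), ∑ l ∈ Finset.range (n+1), s' k l * a k l r := by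
      rw [Finset.sum_apply, hgrid, Finset.sum_product]
      exact Finset.sum_congr rfl fun k _ => Finset.sum_congr rfl fun l _ => rfl
    rw [hgr]
    calc ∑ i ∈ Finset.range (m+1), ∑ j ∈ Finset.range (n+1), st i j * c i j r
        = ∑ i ∈ Finset.range (m+1), ∑ j ∈ Finset.range (n+1),
            ∑ k ∈ Finset.range (m+1), ∑ l ∈ Finset.range (n+1),
              st i j * (bb k i * bb l j * a k l r) := by
          refine Finset.sum_congr rfl fun i hi => Finset.sum_congr rfl fun j hj => ?_
          rw [hca r i j hi hj, Finset.mul_sum]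
          exact Finset.sum_congr rfl fun k _ => Finset.mul_sum _ _ _
      _ = ∑ k ∈ Finset.range (m+1), ∑ l ∈ Finset.range (n+1),
            ∑ i ∈ Finset.range (m+1), ∑ j ∈ Finset.range (n+1),
              st i j * (bb k i * bb l j * a k l r) :=
          sum4_swap _ _ _
      _ = ∑ k ∈ Finset.range (m+1), ∑ l ∈ Finset.range (n+1), s' k l * a k l r := by
          refine Finset.sum_congr rfl fun k _ => Finset.sum_congr rfl fun l _ => ?_
          simp only [hs']
          rw [Finset.sum_mul]
          refine Finset.sum_congr rfl fun i _ => ?_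
          rw [Finset.sum_mul]
          exact Finset.sum_congr rfl fun j _ => by ring
  exact ⟨s', hs'b, by rw [hxa, hsplit a s' hs'00]⟩
end
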